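/- arXiv:1410.8212 — 7 statements merged into one kernel-verified Lean document; each statement's English description precedes it below -/
import Mathlib

section
/- Let k = ℂ, let G = ⟨g⟩ be cyclic of order 3, let q be a primitive third root of unity, and let V = ℂ³ with basis v_1,v_2,v_3. Set q_{21} = q, q_{32} = q, q_{13} = q (and q_{12} = q_{23} = q_{31} = q^{-1}, q_{ii} = 1). Let G act diagonally by ᵍv_1 = q v_1, ᵍv_2 = q² v_2, ᵍv_3 = v_3, and define κ by κ(v_2,v_1) = v_3#1, κ(v_3,v_2) = 0, κ(v_1,v_3) = 0 (extended bilinearly subject to κ(v_i,v_j) = −q_{ij}κ(v_j,v_i)). Then H_{q,κ} = (T(V)⋊G)/(v_2v_1 − q v_1v_2 − v_3, v_3v_2 − q v_2v_3, v_1v_3 − q v_3v_1) is a quantum Drinfeld orbifold algebra, i.e., a PBW deformation of S_q(V)⋊G. -/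
open scoped BigOperators

noncomputable section

namespace QDOA2

/-- The cyclic group of order 3, written multiplicatively. -/
abbrev G3 := Multiplicative (ZMod 3)

/-- The generator `vᵢ` of `T(V) ⋊ G`, realized inside the free algebra on `Fin 3 ⊕ G3`. -/
def Xv (i : Fin 3) : FreeAlgebra ℂ (Fin 3 ⊕ G3) := FreeAlgebra.ι ℂ (Sum.inl i)

/-- The generator `g ∈ G3` of `T(V) ⋊ G`. -/
def Xg (g : G3) : FreeAlgebra ℂ (Fin 3 ⊕ G3) := FreeAlgebra.ι ℂ (Sum.inr g)

/-- The quantum parameters: `q₂₁ = q₃₂ = q₁₃ = q` and `q₁₂ = q₂₃ = q₃₁ = q⁻¹`,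
`qᵢᵢ = 1`.  (With zero-based indices: `Q i j = q` when `j + 1 = i` in `Fin 3`.) -/
def Q (q : ℂ) : Fin 3 → Fin 3 → ℂ :=
  fun i j => if i = j then 1 else if j + 1 = i then q else q⁻¹

/-- The diagonal action of `G3 = ⟨g⟩` on `V`: `ᵍv₁ = q v₁`, `ᵍv₂ = q² v₂`,
`ᵍv₃ = v₃` (matrix entries of powers of the generator). -/
def rho3 (q : ℂ) : G3 → Fin 3 → Fin 3 → ℂ := fun g i j =>
  if i = j then
    (if i = 0 then q ^ (Multiplicative.toAdd g).val
     else if i = 1 then q ^ (2 * (Multiplicative.toAdd g).val)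
     else 1)
  else 0

/-- The constant part of `κ` is zero. -/
def kapC3 : Fin 3 → Fin 3 → G3 → ℂ := fun _ _ _ => 0

/-- The linear part of `κ`: `κ(v₂,v₁) = v₃ # 1`, `κ(v₃,v₂) = 0 = κ(v₁,v₃)`,
extended subject to `κ(vᵢ,vⱼ) = −q_{ij} κ(vⱼ,vᵢ)` (so `κ(v₁,v₂) = −q⁻¹ v₃ # 1`).
With zero-based indices `v₁ = X 0`, `v₂ = X 1`, `v₃ = X 2`. -/
def kapL3 (q : ℂ) : Fin 3 → Fin 3 → G3 → Fin 3 → ℂ := fun i j g l =>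
  if g = 1 ∧ l = 2 then
    (if i = 1 ∧ j = 0 then 1 else if i = 0 ∧ j = 1 then -q⁻¹ else 0)
  else 0

/-- The element `κ(vᵢ,vⱼ) ∈ (ℂ ⊕ V) ⊗ ℂG ⊆ T(V) ⋊ G`. -/
def kappaElt (q : ℂ) (i j : Fin 3) : FreeAlgebra ℂ (Fin 3 ⊕ G3) :=
  ∑ g : G3, (algebraMap ℂ _ (kapC3 i j g) + ∑ l, kapL3 q i j g l • Xv l) * Xg g

/-- The defining relations of `H_{q,κ}`: the relations
`v₂v₁ = q v₁v₂ + v₃`, `v₃v₂ = q v₂v₃`, `v₁v₃ = q v₃v₁` (and their rescalings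
`vᵢvⱼ = q_{ij} vⱼvᵢ + κ(vᵢ,vⱼ)`), together with the semidirect product
relations for the diagonal action of `G3`. -/
def relH (q : ℂ) : FreeAlgebra ℂ (Fin 3 ⊕ G3) → FreeAlgebra ℂ (Fin 3 ⊕ G3) → Prop :=
  fun a b =>
    (∃ i j : Fin 3, a = Xv i * Xv j ∧
        b = Q q i j • (Xv j * Xv i) + kappaElt q i j) ∨
    (∃ g h : G3, a = Xg g * Xg h ∧ b = Xg (g * h)) ∨
    (a = Xg (1 : G3) ∧ b = 1) ∨
    (∃ (g : G3) (i : Fin 3), a = Xg g * Xv i ∧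
        b = (∑ l, rho3 q g l i • Xv l) * Xg g)

/-- The algebra `H_{q,κ} = (T(V) ⋊ G)/(v₂v₁ − qv₁v₂ − v₃, v₃v₂ − qv₂v₃, v₁v₃ − qv₃v₁)`. -/
def Halg (q : ℂ) := RingQuot (relH q)

instance (q : ℂ) : Ring (Halg q) := by unfold Halg; infer_instance
instance (q : ℂ) : Algebra ℂ (Halg q) := by unfold Halg; infer_instance

/-- The PBW monomial `v₁^{m₁} v₂^{m₂} v₃^{m₃} # g` in `H_{q,κ}`. -/
def monoH (q : ℂ) (p : (Fin 3 → ℕ) × G3) : Halg q :=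
  ((List.finRange 3).map
      (fun i => (RingQuot.mkAlgHom ℂ (relH q) (Xv i)) ^ (p.1 i))).prod *
    RingQuot.mkAlgHom ℂ (relH q) (Xg p.2)

abbrev Idx := ℕ × ℕ × ℕ × G3
abbrev M := Idx →₀ ℂ

def δ (p : Idx) : M := Finsupp.single p 1

def opOf (f : Idx → M) : Module.End ℂ M :=
  Finsupp.lsum ℂ fun p => LinearMap.toSpanSingleton ℂ M (f p)

@[simp] lemma opOf_single (f : Idx → M) (p : Idx) (b : ℂ) :
    opOf f (Finsupp.single p b) = b • f p := by
  simp [opOf, LinearMap.toSpanSingleton_apply]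

@[simp] lemma opOf_δ (f : Idx → M) (p : Idx) : opOf f (δ p) = f p := by
  simp [δ]

/-- coefficient sequence for straightening `v₂ v₁^n`. -/
def cseq (q : ℂ) : ℕ → ℂ
  | 0 => 0
  | n + 1 => q * cseq q n + (q⁻¹) ^ n

def gval (g : G3) : ℕ := (Multiplicative.toAdd g).val

def op1 : Module.End ℂ M := opOf fun p => δ (p.1 + 1, p.2.1, p.2.2.1, p.2.2.2)

def op2 (q : ℂ) : Module.End ℂ M := opOf fun p =>
  q ^ p.1 • δ (p.1, p.2.1 + 1, p.2.2.1, p.2.2.2)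
    + (cseq q p.1 * q ^ p.2.1) • δ (p.1 - 1, p.2.1, p.2.2.1 + 1, p.2.2.2)

def op3 (q : ℂ) : Module.End ℂ M := opOf fun p =>
  ((q⁻¹) ^ p.1 * q ^ p.2.1) • δ (p.1, p.2.1, p.2.2.1 + 1, p.2.2.2)

def opG (q : ℂ) (g : G3) : Module.End ℂ M := opOf fun p =>
  q ^ (gval g * (p.1 + 2 * p.2.1)) • δ (p.1, p.2.1, p.2.2.1, g * p.2.2.2)

lemma opG_one (q : ℂ) : opG q 1 = 1 := by
  apply Finsupp.lhom_ext
  intro p b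
  simp [opG, gval, Module.End.one_apply, δ, Finsupp.smul_single]

def kapV (q : ℂ) (i j : Fin 3) : ℂ :=
  if i = 1 ∧ j = 0 then 1 else if i = 0 ∧ j = 1 then -q⁻¹ else 0

lemma kappaElt_eq (q : ℂ) (i j : Fin 3) :
    kappaElt q i j = kapV q i j • (Xv 2 * Xg 1) := by
  unfold kappaElt kapC3 kapL3 kapV
  simp only [map_zero, zero_add, Fin.sum_univ_three]
  have h0 : ((0 : Fin 3) = 2) = False := by simp
  have h1 : ((1 : Fin 3) = 2) = False := by simp
  have h2 : ((2 : Fin 3) = 2) = True := by simp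
  simp only [h0, h1, h2, and_false, and_true, if_false, zero_smul, zero_add, add_zero, ite_smul,
    smul_mul_assoc]
  rw [Finset.sum_congr rfl (fun g _ => ?_), Finset.sum_ite_eq' Finset.univ (1 : G3)
    (fun g => (if i = 1 ∧ j = 0 then (1:ℂ) else if i = 0 ∧ j = 1 then -q⁻¹ else 0) • (Xv 2 * Xg g))]
  · simp
  · rw [ite_mul, zero_mul]
    congr 1
    split_ifs <;> simp [smul_mul_assoc]
def φ₀ (q : ℂ) : FreeAlgebra ℂ (Fin 3 ⊕ G3) →ₐ[ℂ] Module.End ℂ M :=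
  FreeAlgebra.lift ℂ (Sum.elim (![op1, op2 q, op3 q]) (opG q))

@[simp] lemma φ₀_Xv (q : ℂ) (i : Fin 3) : φ₀ q (Xv i) = ![op1, op2 q, op3 q] i := by
  simp [φ₀, Xv]

@[simp] lemma φ₀_Xg (q : ℂ) (g : G3) : φ₀ q (Xg g) = opG q g := by
  simp [φ₀, Xg]

lemma pow_mod3 {q : ℂ} (h3 : q ^ 3 = 1) (m : ℕ) : q ^ m = q ^ (m % 3) := by
  conv_lhs => rw [← Nat.div_add_mod m 3]
  rw [pow_add, pow_mul, h3, one_pow, one_mul]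

lemma pow_congr3 {q : ℂ} (h3 : q ^ 3 = 1) {m n : ℕ} (h : m % 3 = n % 3) : q ^ m = q ^ n := by
  rw [pow_mod3 h3 m, pow_mod3 h3 n, h]

lemma gval_mul (g h : G3) : gval (g * h) = (gval g + gval h) % 3 := by
  simp [gval, ZMod.val_add]

@[simp] lemma φ₀_Xv0 (q : ℂ) : φ₀ q (Xv 0) = op1 := by simp
@[simp] lemma φ₀_Xv1 (q : ℂ) : φ₀ q (Xv 1) = op2 q := by simp
@[simp] lemma φ₀_Xv2 (q : ℂ) : φ₀ q (Xv 2) = op3 q := by simp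

lemma sum_rho (q : ℂ) (g : G3) (i : Fin 3) :
    (∑ l, rho3 q g l i • Xv l) = rho3 q g i i • Xv i := by
  rw [Fin.sum_univ_three]
  fin_cases i <;> simp +decide [rho3]

lemma rho00 (q : ℂ) (g : G3) : rho3 q g 0 0 = q ^ gval g := by simp +decide [rho3, gval]
lemma rho11 (q : ℂ) (g : G3) : rho3 q g 1 1 = q ^ (2 * gval g) := by simp +decide [rho3, gval]
lemma rho22 (q : ℂ) (g : G3) : rho3 q g 2 2 = 1 := by simp +decide [rho3]

lemma rel_gv (q : ℂ) (h3 : q ^ 3 = 1) (g : G3) (i : Fin 3) :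
    φ₀ q (Xg g * Xv i) = φ₀ q ((∑ l, rho3 q g l i • Xv l) * Xg g) := by
  rw [sum_rho]
  simp only [map_mul, map_smul, φ₀_Xg]
  set γ := gval g with hγ
  fin_cases i
  · show opG q g * φ₀ q (Xv 0) = rho3 q g 0 0 • φ₀ q (Xv 0) * opG q g
    rw [rho00, φ₀_Xv0]
    apply Finsupp.lhom_ext; rintro ⟨a, b, c, h⟩ cf
    simp only [Module.End.mul_apply, LinearMap.smul_apply, op1, opG, opOf_single,
      smul_add, smul_smul, map_add, map_smul, opOf_δ]
    match_scalars
    ring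
  · show opG q g * φ₀ q (Xv 1) = rho3 q g 1 1 • φ₀ q (Xv 1) * opG q g
    rw [rho11, φ₀_Xv1]
    apply Finsupp.lhom_ext; rintro ⟨a, b, c, h⟩ cf
    simp only [Module.End.mul_apply, LinearMap.smul_apply, LinearMap.add_apply, op2, opG,
      opOf_single, smul_add, smul_smul, map_add, map_smul, opOf_δ]
    match_scalars
    · ring
    · rcases a with _ | k
      · simp [cseq]
      · simp only [Nat.add_sub_cancel]
        have e : q ^ (γ * (k + 1)) * q ^ (γ * 2) = q ^ (γ * k) := by
          rw [← pow_add, show γ * (k + 1) + γ * 2 = γ * k + 3 * γ by ring, pow_add, pow_mul q 3 γ,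
            h3, one_pow, mul_one]
        linear_combination (-(cf * cseq q (k + 1) * q ^ b * q ^ (b * γ * 2))) * e
  · show opG q g * φ₀ q (Xv 2) = rho3 q g 2 2 • φ₀ q (Xv 2) * opG q g
    rw [rho22, φ₀_Xv2, one_smul]
    apply Finsupp.lhom_ext; rintro ⟨a, b, c, h⟩ cf
    simp only [Module.End.mul_apply, op3, opG, opOf_single, smul_smul, map_smul, opOf_δ]
    match_scalars
    ring
lemma E10 (q : ℂ) : op2 q * op1 = q • (op1 * op2 q) + op3 q := by
  apply Finsupp.lhom_ext; rintro ⟨a, b, c, h⟩ cf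
  simp only [Module.End.mul_apply, LinearMap.smul_apply, LinearMap.add_apply, op1, op2, op3,
    opOf_single, smul_add, smul_smul, map_add, map_smul, opOf_δ]
  rcases a with _ | k
  · match_scalars <;> (try simp [cseq]) <;> (try ring)
  · simp only [Nat.add_sub_cancel, Nat.succ_sub_one]
    match_scalars <;> (try simp [cseq]) <;> (try ring)
lemma E21 (q : ℂ) (h0 : q ≠ 0) : op3 q * op2 q = q • (op2 q * op3 q) := by
  apply Finsupp.lhom_ext; rintro ⟨a, b, c, h⟩ cf
  simp only [Module.End.mul_apply, LinearMap.smul_apply, LinearMap.add_apply, op2, op3,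
    opOf_single, smul_add, smul_smul, map_add, map_smul, opOf_δ]
  rcases a with _ | k
  · match_scalars <;> (try simp [cseq]) <;> (try ring)
  · simp only [Nat.succ_sub_one]
    match_scalars <;> (try field_simp) <;> (try ring) <;> simp [h0]
lemma E02 (q : ℂ) (h0 : q ≠ 0) : op1 * op3 q = q • (op3 q * op1) := by
  apply Finsupp.lhom_ext; rintro ⟨a, b, c, h⟩ cf
  simp only [Module.End.mul_apply, LinearMap.smul_apply, op1, op3,
    opOf_single, smul_smul, map_smul, opOf_δ]
  match_scalars
  field_simp
  ring
  simp [h0]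
lemma E01 (q : ℂ) (h0 : q ≠ 0) : op1 * op2 q = q⁻¹ • (op2 q * op1) + (-q⁻¹) • op3 q := by
  rw [E10]
  match_scalars <;> field_simp <;> simp
lemma E12 (q : ℂ) (h0 : q ≠ 0) : op2 q * op3 q = q⁻¹ • (op3 q * op2 q) := by
  rw [E21 q h0]
  match_scalars
  field_simp
lemma E20 (q : ℂ) (h0 : q ≠ 0) : op3 q * op1 = q⁻¹ • (op1 * op3 q) := by
  rw [E02 q h0]
  match_scalars
  field_simp

lemma fin3cases (i : Fin 3) : i = 0 ∨ i = 1 ∨ i = 2 := by revert i; decide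

lemma rel_vv (q : ℂ) (h0 : q ≠ 0) (i j : Fin 3) :
    φ₀ q (Xv i * Xv j) = φ₀ q (Q q i j • (Xv j * Xv i) + kappaElt q i j) := by
  rw [kappaElt_eq]
  simp only [map_add, map_smul, map_mul, φ₀_Xg, opG_one, mul_one]
  rcases fin3cases i with rfl | rfl | rfl <;> rcases fin3cases j with rfl | rfl | rfl <;>
    simp [Q, kapV]
  · exact E01 q h0
  · exact E02 q h0
  · exact E10 q
  · exact E12 q h0
  · exact E20 q h0
  · exact E21 q h0
set_option linter.unnecessarySeqFocus false

lemma sound (q : ℂ) (h3 : q ^ 3 = 1) (h0 : q ≠ 0) :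
    ∀ ⦃x y⦄, relH q x y → φ₀ q x = φ₀ q y := by
  rintro x y (⟨i, j, rfl, rfl⟩ | ⟨g, h, rfl, rfl⟩ | ⟨rfl, rfl⟩ | ⟨g, i, rfl, rfl⟩)
  · exact rel_vv q h0 i j
  · -- group multiplication
    simp only [map_mul, φ₀_Xg]
    apply Finsupp.lhom_ext
    rintro ⟨a, b, c, h'⟩ cf
    simp only [Module.End.mul_apply, opG, opOf_single, Finsupp.smul_single, opOf_δ, smul_smul, δ]
    have key : q ^ (gval (g * h) * (a + 2 * b))
        = q ^ (gval g * (a + 2 * b)) * q ^ (gval h * (a + 2 * b)) := by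
      rw [← pow_add]
      refine pow_congr3 h3 ?_
      rw [gval_mul]
      have : (gval g + gval h) % 3 * (a + 2 * b) ≡ (gval g + gval h) * (a + 2 * b) [MOD 3] :=
        Nat.ModEq.mul_right _ (Nat.mod_modEq _ 3)
      calc (gval g + gval h) % 3 * (a + 2 * b) % 3
          = (gval g + gval h) * (a + 2 * b) % 3 := this
        _ = (gval g * (a + 2 * b) + gval h * (a + 2 * b)) % 3 := by ring_nf
    congr 1
    · rw [mul_assoc]
    · rw [key]
      simp only [smul_eq_mul, mul_one]
      ring
  · rw [map_one, φ₀_Xg, opG_one]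
  · exact rel_gv q h3 g i
def φA (q : ℂ) (h3 : q ^ 3 = 1) (h0 : q ≠ 0) : Halg q →ₐ[ℂ] Module.End ℂ M :=
  RingQuot.liftAlgHom ℂ ⟨φ₀ q, sound q h3 h0⟩

lemma φA_mk (q : ℂ) (h3 : q ^ 3 = 1) (h0 : q ≠ 0) (x : FreeAlgebra ℂ (Fin 3 ⊕ G3)) :
    φA q h3 h0 (RingQuot.mkAlgHom ℂ (relH q) x) = φ₀ q x :=
  RingQuot.liftAlgHom_mkAlgHom_apply _ _ _ _

/-- normal form abbreviations in `Halg q` -/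
def w (q : ℂ) (i : Fin 3) : Halg q := RingQuot.mkAlgHom ℂ (relH q) (Xv i)
def u (q : ℂ) (g : G3) : Halg q := RingQuot.mkAlgHom ℂ (relH q) (Xg g)

lemma monoH_eq (q : ℂ) (m : Fin 3 → ℕ) (g : G3) :
    monoH q (m, g) = w q 0 ^ m 0 * (w q 1 ^ m 1 * (w q 2 ^ m 2 * u q g)) := by
  have : List.finRange 3 = [0, 1, 2] := rfl
  simp [monoH, this, w, u, mul_assoc]
  rfl

@[simp] lemma op1_δ (a b c : ℕ) (h : G3) : op1 (δ (a, b, c, h)) = δ (a + 1, b, c, h) := by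
  simp [op1]

@[simp] lemma op2_δ0 (q : ℂ) (b c : ℕ) (h : G3) :
    op2 q (δ (0, b, c, h)) = δ (0, b + 1, c, h) := by
  simp [op2, cseq]

@[simp] lemma op3_δ0 (q : ℂ) (c : ℕ) (h : G3) :
    op3 q (δ (0, 0, c, h)) = δ (0, 0, c + 1, h) := by
  simp [op3]

lemma op1_pow (n a b c : ℕ) (h : G3) :
    (op1 ^ n) (δ (a, b, c, h)) = δ (n + a, b, c, h) := by
  induction n with
  | zero => simp
  | succ k ih =>
    rw [pow_succ', Module.End.mul_apply, ih, op1_δ, show k + a + 1 = k + 1 + a by omega]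

lemma op2_pow (q : ℂ) (n b c : ℕ) (h : G3) :
    ((op2 q) ^ n) (δ (0, b, c, h)) = δ (0, n + b, c, h) := by
  induction n with
  | zero => simp
  | succ k ih =>
    rw [pow_succ', Module.End.mul_apply, ih, op2_δ0, show k + b + 1 = k + 1 + b by omega]

lemma op3_pow (q : ℂ) (n c : ℕ) (h : G3) :
    ((op3 q) ^ n) (δ (0, 0, c, h)) = δ (0, 0, n + c, h) := by
  induction n with
  | zero => simp
  | succ k ih =>
    rw [pow_succ', Module.End.mul_apply, ih, op3_δ0, show k + c + 1 = k + 1 + c by omega]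

lemma opG_δ0 (q : ℂ) (g : G3) : (opG q g) (δ (0, 0, 0, 1)) = δ (0, 0, 0, g) := by
  simp [opG]

lemma φA_mono (q : ℂ) (h3 : q ^ 3 = 1) (h0 : q ≠ 0) (m : Fin 3 → ℕ) (g : G3) :
    (φA q h3 h0 (monoH q (m, g))) (δ (0, 0, 0, 1)) = δ (m 0, m 1, m 2, g) := by
  rw [monoH_eq]
  simp only [map_mul, map_pow]
  rw [show φA q h3 h0 (w q 0) = op1 from (φA_mk q h3 h0 (Xv 0)).trans (φ₀_Xv0 q),
    show φA q h3 h0 (w q 1) = op2 q from (φA_mk q h3 h0 (Xv 1)).trans (φ₀_Xv1 q),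
    show φA q h3 h0 (w q 2) = op3 q from (φA_mk q h3 h0 (Xv 2)).trans (φ₀_Xv2 q),
    show φA q h3 h0 (u q g) = opG q g from (φA_mk q h3 h0 (Xg g)).trans (φ₀_Xg q g)]
  simp only [Module.End.mul_apply]
  rw [opG_δ0, op3_pow, op2_pow, op1_pow]
  simp

lemma linIndep (q : ℂ) (h3 : q ^ 3 = 1) (h0 : q ≠ 0) : LinearIndependent ℂ (monoH q) := by
  set e : (Fin 3 → ℕ) × G3 → Idx := fun p => (p.1 0, p.1 1, p.1 2, p.2) with he
  have hinj : Function.Injective e := by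
    rintro ⟨m, g⟩ ⟨m', g'⟩ hmg
    simp only [he, Prod.mk.injEq] at hmg
    obtain ⟨h1, h2, h3', h4⟩ := hmg
    refine Prod.ext ?_ h4
    funext i
    fin_cases i <;> assumption
  have hli : LinearIndependent ℂ (fun p => δ (e p)) := by
    have := (Finsupp.basisSingleOne (ι := Idx) (R := ℂ)).linearIndependent.comp e hinj
    rw [Finsupp.coe_basisSingleOne] at this
    exact this
  set L : Halg q →ₗ[ℂ] M :=
    (LinearMap.applyₗ (δ (0, 0, 0, 1))).comp (φA q h3 h0).toLinearMap with hL
  refine LinearIndependent.of_comp L ?_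
  have : (L ∘ monoH q) = fun p => δ (e p) := by
    funext p
    obtain ⟨m, g⟩ := p
    simp [hL, he, Function.comp, φA_mono q h3 h0 m g]
  rw [this]
  exact hli
lemma u_one (q : ℂ) : u q 1 = 1 := by
  have := RingQuot.mkAlgHom_rel (S := ℂ) (s := relH q)
    (Or.inr (Or.inr (Or.inl ⟨rfl, rfl⟩)))
  rw [map_one] at this
  exact this

lemma u_mul (q : ℂ) (g h : G3) : u q g * u q h = u q (g * h) := by
  have := RingQuot.mkAlgHom_rel (S := ℂ) (s := relH q)
    (Or.inr (Or.inl ⟨g, h, rfl, rfl⟩))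
  rw [map_mul] at this
  exact this

lemma Hvv (q : ℂ) (i j : Fin 3) :
    w q i * w q j = Q q i j • (w q j * w q i) + kapV q i j • w q 2 := by
  have := RingQuot.mkAlgHom_rel (S := ℂ) (s := relH q)
    (Or.inl ⟨i, j, rfl, rfl⟩)
  rw [kappaElt_eq] at this
  simp only [map_mul, map_add, map_smul] at this
  rw [show RingQuot.mkAlgHom ℂ (relH q) (Xg 1) = (1 : RingQuot (relH q)) from u_one q,
    mul_one] at this
  exact this
lemma h10 (q : ℂ) : w q 1 * w q 0 = q • (w q 0 * w q 1) + w q 2 := by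
  simpa [Q, kapV] using Hvv q 1 0
lemma h20 (q : ℂ) : w q 2 * w q 0 = q⁻¹ • (w q 0 * w q 2) := by
  simpa [Q, kapV] using Hvv q 2 0
lemma h21 (q : ℂ) : w q 2 * w q 1 = q • (w q 1 * w q 2) := by
  simpa [Q, kapV] using Hvv q 2 1

lemma Hgv (q : ℂ) (g : G3) (i : Fin 3) :
    u q g * w q i = rho3 q g i i • (w q i * u q g) := by
  have := RingQuot.mkAlgHom_rel (S := ℂ) (s := relH q)
    (Or.inr (Or.inr (Or.inr ⟨g, i, rfl, rfl⟩)))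
  rw [sum_rho] at this
  simp only [map_mul, map_smul, smul_mul_assoc] at this
  exact this

/-- generic commutation-past-powers -/
lemma pcomm {q : ℂ} (x y : Halg q) (s : ℂ) (hxy : x * y = s • (y * x)) (n : ℕ) :
    x * y ^ n = s ^ n • (y ^ n * x) := by
  induction n with
  | zero => simp
  | succ k ih =>
    calc x * y ^ (k + 1) = (x * y) * y ^ k := by rw [pow_succ', ← mul_assoc]
      _ = s • (y * (x * y ^ k)) := by rw [hxy, smul_mul_assoc, mul_assoc]
      _ = s • (y * (s ^ k • (y ^ k * x))) := by rw [ih]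
      _ = s ^ (k + 1) • (y ^ (k + 1) * x) := by
          rw [mul_smul_comm, smul_smul, ← mul_assoc, ← pow_succ', ← pow_succ']

lemma p10 (q : ℂ) (n : ℕ) : w q 1 * w q 0 ^ n
    = q ^ n • (w q 0 ^ n * w q 1) + cseq q n • (w q 0 ^ (n - 1) * w q 2) := by
  induction n with
  | zero => simp [cseq]
  | succ k ih =>
    calc w q 1 * w q 0 ^ (k + 1) = (w q 1 * w q 0) * w q 0 ^ k := by rw [pow_succ', ← mul_assoc]
      _ = q • (w q 0 * (w q 1 * w q 0 ^ k)) + w q 2 * w q 0 ^ k := by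
          rw [h10, add_mul, smul_mul_assoc, mul_assoc]
      _ = q • (w q 0 * (q ^ k • (w q 0 ^ k * w q 1) + cseq q k • (w q 0 ^ (k - 1) * w q 2)))
            + (q⁻¹) ^ k • (w q 0 ^ k * w q 2) := by
          rw [ih, pcomm _ _ _ (h20 q) k]
      _ = q ^ (k + 1) • (w q 0 ^ (k + 1) * w q 1)
            + ((q * cseq q k) • (w q 0 * (w q 0 ^ (k - 1) * w q 2))
              + (q⁻¹) ^ k • (w q 0 ^ k * w q 2)) := by
          rw [mul_add, smul_add, mul_smul_comm, mul_smul_comm, smul_smul, smul_smul,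
            ← mul_assoc (w q 0), ← pow_succ', ← pow_succ', add_assoc]
      _ = q ^ (k + 1) • (w q 0 ^ (k + 1) * w q 1)
            + cseq q (k + 1) • (w q 0 ^ (k + 1 - 1) * w q 2) := by
          congr 1
          rcases k with _ | k'
          · simp [cseq]
          · rw [show k' + 1 - 1 = k' from rfl, ← mul_assoc, ← pow_succ',
              show k' + 1 + 1 - 1 = k' + 1 from rfl, ← add_smul, show cseq q (k' + 1 + 1) = q * cseq q (k' + 1) + q⁻¹ ^ (k' + 1) from rfl]
def N (q : ℂ) (a b c : ℕ) (g : G3) : Halg q :=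
  w q 0 ^ a * (w q 1 ^ b * (w q 2 ^ c * u q g))

lemma monoH_N (q : ℂ) (m : Fin 3 → ℕ) (g : G3) :
    monoH q (m, g) = N q (m 0) (m 1) (m 2) g := monoH_eq q m g

lemma N_mono (q : ℂ) (a b c : ℕ) (g : G3) : N q a b c g = monoH q (![a, b, c], g) := by
  rw [monoH_N]
  simp

lemma w0_N (q : ℂ) (a b c : ℕ) (g : G3) : w q 0 * N q a b c g = N q (a + 1) b c g := by
  simp only [N]
  rw [← mul_assoc, ← pow_succ']

lemma w2_N (q : ℂ) (a b c : ℕ) (g : G3) :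
    w q 2 * N q a b c g = ((q⁻¹) ^ a * q ^ b) • N q a b (c + 1) g := by
  simp only [N]
  calc w q 2 * (w q 0 ^ a * (w q 1 ^ b * (w q 2 ^ c * u q g)))
      = (q⁻¹) ^ a • (w q 0 ^ a * (w q 2 * (w q 1 ^ b * (w q 2 ^ c * u q g)))) := by
        rw [← mul_assoc, pcomm _ _ _ (h20 q) a, smul_mul_assoc, mul_assoc]
    _ = (q⁻¹) ^ a • (w q 0 ^ a * (q ^ b • (w q 1 ^ b * (w q 2 * (w q 2 ^ c * u q g))))) := by
        rw [← mul_assoc (w q 2), pcomm _ _ _ (h21 q) b, smul_mul_assoc, mul_assoc]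
    _ = ((q⁻¹) ^ a * q ^ b) • (w q 0 ^ a * (w q 1 ^ b * (w q 2 ^ (c + 1) * u q g))) := by
        rw [← mul_assoc (w q 2), ← pow_succ', mul_smul_comm, smul_smul]

lemma w1_N (q : ℂ) (a b c : ℕ) (g : G3) :
    w q 1 * N q a b c g
      = q ^ a • N q a (b + 1) c g + (cseq q a * q ^ b) • N q (a - 1) b (c + 1) g := by
  simp only [N]
  calc w q 1 * (w q 0 ^ a * (w q 1 ^ b * (w q 2 ^ c * u q g)))
      = (q ^ a • (w q 0 ^ a * w q 1) + cseq q a • (w q 0 ^ (a - 1) * w q 2))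
          * (w q 1 ^ b * (w q 2 ^ c * u q g)) := by
        rw [← mul_assoc, p10]
    _ = q ^ a • (w q 0 ^ a * (w q 1 * (w q 1 ^ b * (w q 2 ^ c * u q g))))
          + cseq q a • (w q 0 ^ (a - 1) * (w q 2 * (w q 1 ^ b * (w q 2 ^ c * u q g)))) := by
        rw [add_mul, smul_mul_assoc, smul_mul_assoc, mul_assoc, mul_assoc]
    _ = q ^ a • (w q 0 ^ a * (w q 1 ^ (b + 1) * (w q 2 ^ c * u q g)))
          + cseq q a • (w q 0 ^ (a - 1) * (q ^ b • (w q 1 ^ b * (w q 2 ^ (c + 1) * u q g)))) := by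
        rw [← mul_assoc (w q 1), ← pow_succ', ← mul_assoc (w q 2), pcomm _ _ _ (h21 q) b,
          smul_mul_assoc, mul_assoc, ← mul_assoc (w q 2), ← pow_succ']
    _ = q ^ a • (w q 0 ^ a * (w q 1 ^ (b + 1) * (w q 2 ^ c * u q g)))
          + (cseq q a * q ^ b) • (w q 0 ^ (a - 1) * (w q 1 ^ b * (w q 2 ^ (c + 1) * u q g))) := by
        rw [mul_smul_comm, smul_smul]

lemma u_N (q : ℂ) (g : G3) (a b c : ℕ) (h : G3) :
    u q g * N q a b c h
      = (rho3 q g 0 0 ^ a * rho3 q g 1 1 ^ b) • N q a b c (g * h) := by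
  simp only [N]
  calc u q g * (w q 0 ^ a * (w q 1 ^ b * (w q 2 ^ c * u q h)))
      = rho3 q g 0 0 ^ a • (w q 0 ^ a * (u q g * (w q 1 ^ b * (w q 2 ^ c * u q h)))) := by
        rw [← mul_assoc, pcomm _ _ _ (Hgv q g 0) a, smul_mul_assoc, mul_assoc]
    _ = rho3 q g 0 0 ^ a • (w q 0 ^ a
          * (rho3 q g 1 1 ^ b • (w q 1 ^ b * (u q g * (w q 2 ^ c * u q h))))) := by
        rw [← mul_assoc (u q g), pcomm _ _ _ (Hgv q g 1) b, smul_mul_assoc, mul_assoc]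
    _ = rho3 q g 0 0 ^ a • (w q 0 ^ a
          * (rho3 q g 1 1 ^ b • (w q 1 ^ b * (w q 2 ^ c * (u q g * u q h))))) := by
        rw [← mul_assoc (u q g), pcomm _ _ _ (Hgv q g 2) c, rho22, one_pow, one_smul, mul_assoc]
    _ = (rho3 q g 0 0 ^ a * rho3 q g 1 1 ^ b)
          • (w q 0 ^ a * (w q 1 ^ b * (w q 2 ^ c * u q (g * h)))) := by
        rw [u_mul, mul_smul_comm, smul_smul]

def mkH (q : ℂ) (y : FreeAlgebra ℂ (Fin 3 ⊕ G3)) : Halg q := RingQuot.mkAlgHom ℂ (relH q) y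

lemma mkH_mul (q : ℂ) (y z : FreeAlgebra ℂ (Fin 3 ⊕ G3)) :
    mkH q (y * z) = mkH q y * mkH q z := map_mul (RingQuot.mkAlgHom ℂ (relH q)) y z

lemma mkH_add (q : ℂ) (y z : FreeAlgebra ℂ (Fin 3 ⊕ G3)) :
    mkH q (y + z) = mkH q y + mkH q z := map_add (RingQuot.mkAlgHom ℂ (relH q)) y z

lemma mkH_algebraMap (q : ℂ) (r : ℂ) :
    mkH q (algebraMap ℂ _ r) = algebraMap ℂ (Halg q) r :=
  (RingQuot.mkAlgHom ℂ (relH q)).commutes r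

lemma mkH_surj (q : ℂ) : Function.Surjective (mkH q) :=
  RingQuot.mkAlgHom_surjective ℂ (relH q)

lemma span_top (q : ℂ) : Submodule.span ℂ (Set.range (monoH q)) = ⊤ := by
  set S := Submodule.span ℂ (Set.range (monoH q)) with hS
  have hN : ∀ a b c g, N q a b c g ∈ S := fun a b c g => by
    rw [N_mono]; exact Submodule.subset_span ⟨_, rfl⟩
  have stab : ∀ (x : Halg q), (∀ a b c g, x * N q a b c g ∈ S) → ∀ s ∈ S, x * s ∈ S := by
    intro x hx s hs
    refine Submodule.span_induction (p := fun s _ => x * s ∈ S) ?_ ?_ ?_ ?_ hs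
    · rintro _ ⟨⟨m, g⟩, rfl⟩
      rw [monoH_N]
      exact hx _ _ _ _
    · simp only [mul_zero]; exact S.zero_mem
    · intro y z _ _ hy hz; rw [mul_add]; exact S.add_mem hy hz
    · intro t y _ hy; rw [mul_smul_comm]; exact S.smul_mem t hy
  have hw : ∀ (i : Fin 3) (a b c g), w q i * N q a b c g ∈ S := by
    intro i a b c g
    rcases fin3cases i with rfl | rfl | rfl
    · rw [w0_N]; exact hN _ _ _ _
    · rw [w1_N]; exact S.add_mem (S.smul_mem _ (hN _ _ _ _)) (S.smul_mem _ (hN _ _ _ _))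
    · rw [w2_N]; exact S.smul_mem _ (hN _ _ _ _)
  have hu : ∀ (g : G3) (a b c h), u q g * N q a b c h ∈ S := by
    intro g a b c h
    rw [u_N]; exact S.smul_mem _ (hN _ _ _ _)
  have hmul : ∀ (y : FreeAlgebra ℂ (Fin 3 ⊕ G3)), ∀ s ∈ S, mkH q y * s ∈ S := by
    intro y
    induction y using FreeAlgebra.induction with
    | grade0 r =>
        intro s hs
        rw [mkH_algebraMap, ← Algebra.smul_def]
        exact S.smul_mem r hs
    | grade1 x =>
        rcases x with i | g
        · exact stab _ (fun a b c g => hw i a b c g)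
        · exact stab _ (fun a b c h => hu g a b c h)
    | mul y z hy hz =>
        intro s hs
        rw [mkH_mul, mul_assoc]
        exact hy _ (hz s hs)
    | add y z hy hz =>
        intro s hs
        rw [mkH_add, add_mul]
        exact S.add_mem (hy s hs) (hz s hs)
  have h1 : (1 : Halg q) ∈ S := by
    have hN1 : N q 0 0 0 1 = 1 := by simp [N, u_one]
    rw [← hN1]; exact hN _ _ _ _
  rw [eq_top_iff]
  rintro x -
  obtain ⟨y, rfl⟩ := mkH_surj q x
  simpa using hmul y 1 h1

/-- Let `q ∈ ℂ` be a primitive third root of unity, let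
`G = ⟨g⟩` be cyclic of order 3 acting diagonally on `V = ℂ³` by `ᵍv₁ = qv₁`,
`ᵍv₂ = q²v₂`, `ᵍv₃ = v₃`, with `q₂₁ = q₃₂ = q₁₃ = q` and
`κ(v₂,v₁) = v₃ # 1`, `κ(v₃,v₂) = κ(v₁,v₃) = 0`.  Then
`H_{q,κ} = (T(V) ⋊ G)/(v₂v₁ − qv₁v₂ − v₃, v₃v₂ − qv₂v₃, v₁v₃ − qv₃v₁)` is a
quantum Drinfeld orbifold algebra, i.e. a PBW deformation of `S_q(V) ⋊ G`:
the monomials `v₁^{m₁} v₂^{m₂} v₃^{m₃} # g` form a `ℂ`-basis. -/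
theorem example_cyclic_group_is_quantum_drinfeld_orbifold_algebra
    (q : ℂ) (hq : IsPrimitiveRoot q 3) :
    LinearIndependent ℂ (monoH q) ∧
      Submodule.span ℂ (Set.range (monoH q)) = ⊤ := by
  have h3 : q ^ 3 = 1 := hq.pow_eq_one
  have h0 : q ≠ 0 := by
    intro h
    rw [h] at h3
    simp at h3
  exact ⟨linIndep q h3 h0, span_top q⟩

end QDOA2
end
end

section
/- Let U be a PBW deformation of S_q(V)⋊G in which the action of G on V is preserved; that is, U is a ℤ-filtered k-algebra generated by V ∪ G with V ⊆ F_1U and G ⊆ F_0U, whose associated graded algebra is isomorphic to S_q(V)⋊G (compatibly with these generators), and in which the relations g·v = (ᵍv)·g hold for all g ∈ G and v ∈ V. Then U ≅ H_{q,κ} for some bilinear κ: V×V → (k⊕V)⊗kG with κ(v_i,v_j) = −q_{ij}κ(v_j,v_i); in particular U is a quantum Drinfeld orbifold algebra. -/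
open scoped BigOperators

noncomputable section

namespace QDOA4

/-- The generator `vᵢ` of `T(V) ⋊ G`, realized inside the free algebra on `Fin n ⊕ G`. -/
def Xv (k : Type*) [Field k] (n : ℕ) (G : Type*) (i : Fin n) : FreeAlgebra k (Fin n ⊕ G) :=
  FreeAlgebra.ι k (Sum.inl i)

/-- The generator `g ∈ G` of `T(V) ⋊ G`. -/
def Xg (k : Type*) [Field k] (n : ℕ) (G : Type*) (g : G) : FreeAlgebra k (Fin n ⊕ G) :=
  FreeAlgebra.ι k (Sum.inr g)

/-- The element `κ(vᵢ,vⱼ) = ∑_{g} (κ_g^C(vᵢ,vⱼ) + κ_g^L(vᵢ,vⱼ)) # g` of `T(V) ⋊ G`. -/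
def kappaElt (k : Type*) [Field k] (n : ℕ) (G : Type*) [Fintype G]
    (kapC : Fin n → Fin n → G → k) (kapL : Fin n → Fin n → G → Fin n → k)
    (i j : Fin n) : FreeAlgebra k (Fin n ⊕ G) :=
  ∑ g : G, (algebraMap k _ (kapC i j g) + ∑ l, kapL i j g l • Xv k n G l) * Xg k n G g

/-- The relations defining `H_{q,κ}` as a quotient of `T(V) ⋊ G`. -/
def relH (k : Type*) [Field k] (n : ℕ) (G : Type*) [Group G] [Fintype G]
    (q : Fin n → Fin n → k) (rho : G → Fin n → Fin n → k)
    (kapC : Fin n → Fin n → G → k) (kapL : Fin n → Fin n → G → Fin n → k) :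
    FreeAlgebra k (Fin n ⊕ G) → FreeAlgebra k (Fin n ⊕ G) → Prop := fun a b =>
  (∃ i j : Fin n, a = Xv k n G i * Xv k n G j ∧
      b = q i j • (Xv k n G j * Xv k n G i) + kappaElt k n G kapC kapL i j) ∨
  (∃ g h : G, a = Xg k n G g * Xg k n G h ∧ b = Xg k n G (g * h)) ∨
  (a = Xg k n G (1 : G) ∧ b = 1) ∨
  (∃ (g : G) (i : Fin n), a = Xg k n G g * Xv k n G i ∧
      b = (∑ l, rho g l i • Xv k n G l) * Xg k n G g)

/-- The algebra `H_{q,κ} = (T(V) ⋊ G)/(vᵢvⱼ − q_{ij}vⱼvᵢ − κ(vᵢ,vⱼ))`. -/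
def Halg (k : Type*) [Field k] (n : ℕ) (G : Type*) [Group G] [Fintype G]
    (q : Fin n → Fin n → k) (rho : G → Fin n → Fin n → k)
    (kapC : Fin n → Fin n → G → k) (kapL : Fin n → Fin n → G → Fin n → k) :=
  RingQuot (relH k n G q rho kapC kapL)

instance (k : Type*) [Field k] (n : ℕ) (G : Type*) [Group G] [Fintype G]
    (q : Fin n → Fin n → k) (rho : G → Fin n → Fin n → k)
    (kapC : Fin n → Fin n → G → k) (kapL : Fin n → Fin n → G → Fin n → k) :
    Ring (Halg k n G q rho kapC kapL) := by unfold Halg; infer_instance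

instance (k : Type*) [Field k] (n : ℕ) (G : Type*) [Group G] [Fintype G]
    (q : Fin n → Fin n → k) (rho : G → Fin n → Fin n → k)
    (kapC : Fin n → Fin n → G → k) (kapL : Fin n → Fin n → G → Fin n → k) :
    Algebra k (Halg k n G q rho kapC kapL) := by unfold Halg; infer_instance

/-- The PBW monomial `v₁^{m₁} ⋯ v_n^{m_n} # g` in `H_{q,κ}`. -/
def monoH (k : Type*) [Field k] (n : ℕ) (G : Type*) [Group G] [Fintype G]
    (q : Fin n → Fin n → k) (rho : G → Fin n → Fin n → k)
    (kapC : Fin n → Fin n → G → k) (kapL : Fin n → Fin n → G → Fin n → k)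
    (p : (Fin n → ℕ) × G) : Halg k n G q rho kapC kapL :=
  ((List.finRange n).map
      (fun i => (RingQuot.mkAlgHom k (relH k n G q rho kapC kapL)
        (Xv k n G i)) ^ (p.1 i))).prod *
    RingQuot.mkAlgHom k (relH k n G q rho kapC kapL) (Xg k n G p.2)

/-- `H_{q,κ}` is a quantum Drinfeld orbifold algebra: the monomials
`v₁^{m₁} ⋯ v_n^{m_n} # g` form a `k`-basis. -/
def IsQDOA (k : Type*) [Field k] (n : ℕ) (G : Type*) [Group G] [Fintype G]
    (q : Fin n → Fin n → k) (rho : G → Fin n → Fin n → k)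
    (kapC : Fin n → Fin n → G → k) (kapL : Fin n → Fin n → G → Fin n → k) : Prop :=
  LinearIndependent k (monoH k n G q rho kapC kapL) ∧
    Submodule.span k (Set.range (monoH k n G q rho kapC kapL)) = ⊤



/-- ordered product `X 0 ^ μ 0 * ⋯ * X (n-1) ^ μ (n-1)` -/
def fpow {n : ℕ} {A : Type*} [Monoid A] (X : Fin n → A) (μ : Fin n → ℕ) : A :=
  ((List.finRange n).map fun i => X i ^ μ i).prod

lemma fpow_zero {n : ℕ} {A : Type*} [Monoid A] (X : Fin n → A) :
    fpow X (fun _ => 0) = 1 := by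
  unfold fpow
  refine List.prod_eq_one ?_
  intro x hx
  simp only [List.mem_map] at hx
  obtain ⟨i, _, rfl⟩ := hx
  exact pow_zero _

/-- add one to the exponent at `j` -/
def addOne {n : ℕ} (μ : Fin n → ℕ) (j : Fin n) : Fin n → ℕ :=
  fun i => μ i + if i = j then 1 else 0

def subOne {n : ℕ} (μ : Fin n → ℕ) (j : Fin n) : Fin n → ℕ :=
  fun i => μ i - if i = j then 1 else 0

lemma addOne_subOne {n : ℕ} (μ : Fin n → ℕ) (j : Fin n) (h : μ j ≠ 0) :
    addOne (subOne μ j) j = μ := by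
  funext i
  by_cases hi : i = j <;> simp [addOne, subOne, hi]
  subst hi; omega

lemma addOne_comm {n : ℕ} (μ : Fin n → ℕ) (a b : Fin n) :
    addOne (addOne μ a) b = addOne (addOne μ b) a := by
  funext i; simp [addOne]; ring

lemma push {n : ℕ} {A : Type*} [Monoid A] (X : Fin n → A) (μ : Fin n → ℕ) (j : Fin n)
    (h : ∀ l, l < j → μ l = 0) :
    X j * fpow X μ = fpow X (addOne μ j) := by
  induction n with
  | zero => exact j.elim0
  | succ n ih =>
    rw [fpow, fpow, List.finRange_succ, List.map_cons, List.map_cons,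
      List.prod_cons, List.prod_cons, List.map_map, List.map_map]
    rcases Fin.eq_zero_or_eq_succ j with rfl | ⟨j', rfl⟩
    · have : (fun i : Fin n => X i.succ ^ addOne μ 0 i.succ) =
          (fun i : Fin n => X i.succ ^ μ i.succ) := by
        funext i; simp [addOne, Fin.succ_ne_zero]
      rw [show addOne μ 0 0 = μ 0 + 1 by simp [addOne]]
      rw [Function.comp_def, Function.comp_def, this, ← mul_assoc, ← pow_succ']
    · have h0 : μ 0 = 0 := h 0 (Fin.succ_pos j')
      have h0' : addOne μ j'.succ 0 = 0 := by
        simp [addOne, h0, (Fin.succ_ne_zero j').symm]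
      rw [Function.comp_def, Function.comp_def, h0, h0', pow_zero, one_mul, one_mul]
      have := ih (fun i => X i.succ) (fun i => μ i.succ) j'
        (fun l hl => h l.succ (by simpa using hl))
      rw [fpow, fpow] at this
      have heq : (fun i : Fin n => X i.succ ^ addOne μ j'.succ i.succ) =
          (fun i : Fin n => X i.succ ^ addOne (fun i => μ i.succ) j' i) := by
        funext i
        congr 1
        simp [addOne, Fin.succ_inj]
      rw [heq]
      exact this


lemma pop {n : ℕ} {A : Type*} [Monoid A] (X : Fin n → A) (μ : Fin n → ℕ) (j : Fin n)
    (h : ∀ l, l < j → μ l = 0) (hj : μ j ≠ 0) :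
    fpow X μ = X j * fpow X (subOne μ j) := by
  have := push X (subOne μ j) j (fun l hl => by
    simp only [subOne, h l hl]; omega)
  rw [this, addOne_subOne μ j hj]

def deg {n : ℕ} (μ : Fin n → ℕ) : ℕ := ∑ i, μ i

lemma deg_addOne {n : ℕ} (μ : Fin n → ℕ) (j : Fin n) :
    deg (addOne μ j) = deg μ + 1 := by
  unfold deg addOne
  rw [Finset.sum_add_distrib]
  congr 1
  simp

lemma deg_subOne {n : ℕ} (μ : Fin n → ℕ) (j : Fin n) (hj : μ j ≠ 0) :
    deg μ = deg (subOne μ j) + 1 := by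
  conv_lhs => rw [← addOne_subOne μ j hj]
  rw [deg_addOne]

lemma exists_min_supp {n : ℕ} (μ : Fin n → ℕ) (hμ : μ ≠ fun _ => 0) :
    ∃ j : Fin n, μ j ≠ 0 ∧ ∀ l, l < j → μ l = 0 := by
  have hne : (Finset.univ.filter fun i => μ i ≠ 0).Nonempty := by
    rw [Finset.filter_nonempty_iff]
    by_contra hc
    push_neg at hc
    exact hμ (funext fun i => hc i (Finset.mem_univ i))
  obtain ⟨j, hj⟩ := Finset.exists_min_image _ id hne
  simp only [Finset.mem_filter, Finset.mem_univ, true_and] at hj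
  refine ⟨j, hj.1, fun l hl => ?_⟩
  by_contra hlne
  have := hj.2 l (by simp [hlne])
  simp only [id] at this
  exact absurd (lt_of_lt_of_le hl this) (lt_irrefl _)

lemma map_fpow {n : ℕ} {A B : Type*} [Monoid A] [Monoid B] {F : Type*}
    [FunLike F A B] [MonoidHomClass F A B] (φ : F) (X : Fin n → A) (μ : Fin n → ℕ) :
    φ (fpow X μ) = fpow (fun i => φ (X i)) μ := by
  unfold fpow
  change (MonoidHomClass.toMonoidHom φ) _ = _
  rw [map_list_prod, List.map_map]
  simp [Function.comp_def]


/-- indicator exponent -/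
def sing {n : ℕ} (l : Fin n) : Fin n → ℕ := fun i => if i = l then 1 else 0

lemma fpow_sing {n : ℕ} {A : Type*} [Monoid A] (X : Fin n → A) (l : Fin n) :
    fpow X (sing l) = X l := by
  have h := push X (fun _ => 0) l (fun _ _ => rfl)
  have h2 : addOne (fun _ => 0 : Fin n → ℕ) l = sing l := by
    funext i; simp [addOne, sing]
  rw [h2] at h
  rw [← h, fpow_zero, mul_one]

lemma sing_injective {n : ℕ} : Function.Injective (sing (n := n)) := by
  intro a b hab
  have := congrFun hab a
  simp only [sing, if_pos rfl] at this
  by_contra hne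
  rw [if_neg hne] at this
  exact one_ne_zero this

section HalgLemmas

variable (k : Type*) [Field k] (n : ℕ) (G : Type*) [Group G] [Fintype G]
  (q : Fin n → Fin n → k) (rho : G → Fin n → Fin n → k)
  (kapC : Fin n → Fin n → G → k) (kapL : Fin n → Fin n → G → Fin n → k)

/-- image of `vᵢ` in `H` -/
def XH (i : Fin n) : Halg k n G q rho kapC kapL :=
  RingQuot.mkAlgHom k (relH k n G q rho kapC kapL) (Xv k n G i)

/-- image of `g` in `H` -/
def YH (g : G) : Halg k n G q rho kapC kapL :=
  RingQuot.mkAlgHom k (relH k n G q rho kapC kapL) (Xg k n G g)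

lemma monoH_eq (p : (Fin n → ℕ) × G) :
    monoH k n G q rho kapC kapL p = fpow (XH k n G q rho kapC kapL) p.1 *
      YH k n G q rho kapC kapL p.2 := rfl

lemma rel_vv (i j : Fin n) :
    XH k n G q rho kapC kapL i * XH k n G q rho kapC kapL j =
      q i j • (XH k n G q rho kapC kapL j * XH k n G q rho kapC kapL i) +
      ∑ g : G, (algebraMap k _ (kapC i j g) +
        ∑ l, kapL i j g l • XH k n G q rho kapC kapL l) * YH k n G q rho kapC kapL g := by
  have h := RingQuot.mkAlgHom_rel k (s := relH k n G q rho kapC kapL)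
    (Or.inl ⟨i, j, rfl, rfl⟩)
  simp only [map_mul, map_add, map_sum, map_smul, kappaElt, AlgHom.commutes] at h
  exact h

lemma rel_gg (g h : G) :
    YH k n G q rho kapC kapL g * YH k n G q rho kapC kapL h =
      YH k n G q rho kapC kapL (g * h) := by
  have hh := RingQuot.mkAlgHom_rel k (s := relH k n G q rho kapC kapL)
    (Or.inr (Or.inl ⟨g, h, rfl, rfl⟩))
  rw [map_mul] at hh; exact hh

lemma rel_g1 : YH k n G q rho kapC kapL (1 : G) = 1 := by
  have hh := RingQuot.mkAlgHom_rel k (s := relH k n G q rho kapC kapL)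
    (Or.inr (Or.inr (Or.inl ⟨rfl, rfl⟩)))
  rw [map_one] at hh; exact hh

lemma rel_gv (g : G) (i : Fin n) :
    YH k n G q rho kapC kapL g * XH k n G q rho kapC kapL i =
      (∑ l, rho g l i • XH k n G q rho kapC kapL l) * YH k n G q rho kapC kapL g := by
  have hh := RingQuot.mkAlgHom_rel k (s := relH k n G q rho kapC kapL)
    (Or.inr (Or.inr (Or.inr ⟨g, i, rfl, rfl⟩)))
  simp only [map_mul, map_add, map_sum, map_smul] at hh
  exact hh

/-- the degree-filtration of the span of the PBW monomials -/
def NF (m : ℕ) : Submodule k (Halg k n G q rho kapC kapL) :=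
  Submodule.span k (monoH k n G q rho kapC kapL '' {p | deg p.1 ≤ m})

lemma NF_mono {m m' : ℕ} (h : m ≤ m') :
    NF k n G q rho kapC kapL m ≤ NF k n G q rho kapC kapL m' :=
  Submodule.span_mono (Set.image_mono fun p hp => le_trans hp h)

lemma monoH_mem_NF {p : (Fin n → ℕ) × G} {m : ℕ} (h : deg p.1 ≤ m) :
    monoH k n G q rho kapC kapL p ∈ NF k n G q rho kapC kapL m :=
  Submodule.subset_span ⟨p, h, rfl⟩

/-- the `q`-coefficient collected when commuting `vᵢ` past `v₁^{μ₁} ⋯ v_{i-1}^{μ_{i-1}}` -/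
def cq (i : Fin n) (μ : Fin n → ℕ) : k :=
  ∏ l ∈ Finset.univ.filter (fun l => l < i), q i l ^ μ l

lemma cq_low (i : Fin n) (μ : Fin n → ℕ) (h : ∀ l, l < i → μ l = 0) :
    cq k n q i μ = 1 := by
  refine Finset.prod_eq_one fun l hl => ?_
  rw [Finset.mem_filter] at hl
  rw [h l hl.2, pow_zero]

lemma cq_addOne (i j : Fin n) (μ : Fin n → ℕ) (hj : j < i) :
    cq k n q i (addOne μ j) = q i j * cq k n q i μ := by
  unfold cq addOne
  rw [mul_comm]
  have : ∀ l : Fin n, q i l ^ (μ l + if l = j then 1 else 0) =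
      q i l ^ μ l * (if l = j then q i l else 1) := by
    intro l
    by_cases hl : l = j <;> simp [hl, pow_succ]
  simp only [this]
  rw [Finset.prod_mul_distrib, Finset.prod_ite_eq']
  simp [hj]

end HalgLemmas

section Straighten

variable {k : Type*} [Field k] {n : ℕ} {G : Type*} [Group G] [Fintype G]
  {q : Fin n → Fin n → k} {rho : G → Fin n → Fin n → k}
  {kapC : Fin n → Fin n → G → k} {kapL : Fin n → Fin n → G → Fin n → k}

local notation "XX" => XH k n G q rho kapC kapL
local notation "YY" => YH k n G q rho kapC kapL
local notation "MH" => monoH k n G q rho kapC kapL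
local notation "NN" => NF k n G q rho kapC kapL

lemma X_mul_NF_aux (i : Fin n) (d : ℕ)
    (hP : ∀ (μ : Fin n → ℕ) (g : G), deg μ ≤ d →
      XX i * MH (μ, g) - cq k n q i μ • MH (addOne μ i, g) ∈ NN (deg μ)) :
    ∀ x ∈ NN d, XX i * x ∈ NN (d + 1) := by
  intro x hx
  refine Submodule.span_induction (p := fun x _ => XX i * x ∈ NN (d+1)) ?_ ?_ ?_ ?_ hx
  · rintro y ⟨⟨μ, g⟩, hμ, rfl⟩
    have hμ' : deg μ ≤ d := hμ
    have h1 := hP μ g hμ'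
    have h2 : MH (addOne μ i, g) ∈ NN (d+1) := by
      refine monoH_mem_NF k n G q rho kapC kapL ?_
      simp only [deg_addOne]
      omega
    have key : XX i * MH (μ, g) =
        (XX i * MH (μ, g) - cq k n q i μ • MH (addOne μ i, g)) +
          cq k n q i μ • MH (addOne μ i, g) := by abel
    rw [key]
    exact Submodule.add_mem _ (NF_mono k n G q rho kapC kapL (by omega) h1)
      (Submodule.smul_mem _ _ h2)
  · simp
  · intro a b _ _ ha hb; rw [mul_add]; exact Submodule.add_mem _ ha hb
  · intro c a _ ha; rw [mul_smul_comm]; exact Submodule.smul_mem _ _ ha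

lemma Y_mul_NF_aux (h : G) (d : ℕ)
    (hQ : ∀ (μ : Fin n → ℕ) (g : G), deg μ ≤ d → YY h * MH (μ, g) ∈ NN (deg μ)) :
    ∀ x ∈ NN d, YY h * x ∈ NN d := by
  intro x hx
  refine Submodule.span_induction (p := fun x _ => YY h * x ∈ NN d) ?_ ?_ ?_ ?_ hx
  · rintro y ⟨⟨μ, g⟩, hμ, rfl⟩
    have hμ' : deg μ ≤ d := hμ
    exact NF_mono k n G q rho kapC kapL hμ' (hQ μ g hμ')
  · simp
  · intro a b _ _ ha hb; rw [mul_add]; exact Submodule.add_mem _ ha hb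
  · intro c a _ ha; rw [mul_smul_comm]; exact Submodule.smul_mem _ _ ha

lemma straighten (m : ℕ) :
    (∀ (i : Fin n) (μ : Fin n → ℕ) (g : G), deg μ ≤ m →
      XX i * MH (μ, g) - cq k n q i μ • MH (addOne μ i, g) ∈ NN (deg μ)) ∧
    (∀ (h : G) (μ : Fin n → ℕ) (g : G), deg μ ≤ m → YY h * MH (μ, g) ∈ NN (deg μ)) := by
  induction m using Nat.strong_induction_on with
  | _ m IH =>
  constructor
  · -- the X-straightening statement
    intro i μ g hm
    rcases lt_or_eq_of_le hm with hlt | heq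
    · exact (IH (deg μ) hlt).1 i μ g le_rfl
    · by_cases hcase : ∀ l, l < i → μ l = 0
      · -- trivial case: `vᵢ` slides in front
        have hpush : XX i * fpow XX μ = fpow XX (addOne μ i) := push XX μ i hcase
        have hcq : cq k n q i μ = 1 := cq_low k n q i μ hcase
        rw [monoH_eq, monoH_eq, hcq, one_smul]
        simp only [← mul_assoc, hpush]
        simp
      · -- main case
        push_neg at hcase
        obtain ⟨l0, hl0i, hl0⟩ := hcase
        have hμ0 : μ ≠ fun _ => 0 := by
          intro hc; rw [hc] at hl0; exact hl0 rfl
        obtain ⟨j, hj0, hjmin⟩ := exists_min_supp μ hμ0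
        have hji : j < i := by
          by_contra hc
          push_neg at hc
          exact hl0 (hjmin l0 (lt_of_lt_of_le hl0i hc))
        set μ' := subOne μ j with hμ'def
        have haddμ : addOne μ' j = μ := addOne_subOne μ j hj0
        have hdeg' : deg μ = deg μ' + 1 := deg_subOne μ j hj0
        have hdeg'm : deg μ' < m := by omega
        -- pop the leading `v_j`
        have hpop : MH (μ, g) = XX j * MH (μ', g) := by
          rw [monoH_eq, monoH_eq, ← mul_assoc, ← pop XX μ j hjmin hj0]
        -- straighten `vᵢ` into the rest, by induction
        have hP' := (IH (deg μ') hdeg'm).1 i μ' g le_rfl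
        set r := XX i * MH (μ', g) - cq k n q i μ' • MH (addOne μ' i, g) with hrdef
        have hr : r ∈ NN (deg μ') := hP'
        have hXi : XX i * MH (μ', g) = cq k n q i μ' • MH (addOne μ' i, g) + r := by
          rw [hrdef]; abel
        -- commute v_i past v_j
        have hμ'low : ∀ l, l < j → addOne μ' i l = 0 := by
          intro l hl
          have h1 : μ' l = 0 := by
            simp only [hμ'def, subOne, hjmin l hl]
            omega
          simp only [addOne, h1]
          have : l ≠ i := ne_of_lt (lt_trans hl hji)
          simp [this]
        have hpush2 : XX j * MH (addOne μ' i, g) = MH (addOne μ i, g) := by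
          rw [monoH_eq, monoH_eq, ← mul_assoc, push XX (addOne μ' i) j hμ'low,
            addOne_comm, haddμ]
        have hcq2 : cq k n q i μ = q i j * cq k n q i μ' := by
          rw [← haddμ, cq_addOne k n q i j _ hji]
        -- the kappa correction terms
        set K := ∑ g' : G, ((algebraMap k (Halg k n G q rho kapC kapL)) (kapC i j g') +
          ∑ l, kapL i j g' l • XX l) * YY g' with hKdef
        have hvv : XX i * XX j = q i j • (XX j * XX i) + K :=
          rel_vv k n G q rho kapC kapL i j
        -- main computation
        have hmain : XX i * MH (μ, g) - cq k n q i μ • MH (addOne μ i, g) =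
            q i j • (XX j * r) + K * MH (μ', g) := by
          rw [hpop, ← mul_assoc, hvv, hcq2, add_mul, smul_mul_assoc, mul_assoc, hXi,
            mul_add, mul_smul_comm, hpush2, smul_add, smul_smul]
          abel
        rw [hmain]
        refine Submodule.add_mem _ ?_ ?_
        · -- q i j • (X j * r) ∈ NN (deg μ)
          refine Submodule.smul_mem _ _ ?_
          have := X_mul_NF_aux j (deg μ') (fun ν g hν => (IH (deg μ') hdeg'm).1 j ν g hν) r hr
          rwa [← hdeg'] at this
        · -- K * MH (μ', g) ∈ NN (deg μ)
          rw [hKdef]; erw [Finset.sum_mul]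
          refine Submodule.sum_mem _ fun g' _ => ?_
          have hY : YY g' * MH (μ', g) ∈ NN (deg μ') :=
            (IH (deg μ') hdeg'm).2 g' μ' g le_rfl
          rw [mul_assoc, add_mul]; erw [Finset.sum_mul]
          refine Submodule.add_mem _ ?_ (Submodule.sum_mem _ fun l _ => ?_)
          · rw [← Algebra.smul_def]
            exact Submodule.smul_mem _ _
              (NF_mono k n G q rho kapC kapL (by omega) hY)
          · rw [smul_mul_assoc]
            refine Submodule.smul_mem _ _ ?_
            have := X_mul_NF_aux l (deg μ') (fun ν g hν => (IH (deg μ') hdeg'm).1 l ν g hν)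
              _ hY
            rwa [← hdeg'] at this
  · -- the Y-statement
    intro h μ g hm
    rcases lt_or_eq_of_le hm with hlt | heq
    · exact (IH (deg μ) hlt).2 h μ g le_rfl
    · by_cases hμ0 : μ = fun _ => 0
      · subst hμ0
        have : MH ((fun _ => 0 : Fin n → ℕ), g) = YY g := by
          rw [monoH_eq, fpow_zero, one_mul]
        rw [this, rel_gg]
        have : YY (h * g) = MH ((fun _ => 0 : Fin n → ℕ), h * g) := by
          rw [monoH_eq, fpow_zero, one_mul]
        rw [this]
        exact monoH_mem_NF k n G q rho kapC kapL le_rfl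
      · obtain ⟨j, hj0, hjmin⟩ := exists_min_supp μ hμ0
        set μ' := subOne μ j with hμ'def
        have hdeg' : deg μ = deg μ' + 1 := deg_subOne μ j hj0
        have hdeg'm : deg μ' < m := by omega
        have hpop : MH (μ, g) = XX j * MH (μ', g) := by
          rw [monoH_eq, monoH_eq, ← mul_assoc, ← pop XX μ j hjmin hj0]
        rw [hpop, ← mul_assoc, rel_gv, mul_assoc]
        have hY : YY h * MH (μ', g) ∈ NN (deg μ') :=
          (IH (deg μ') hdeg'm).2 h μ' g le_rfl
        erw [Finset.sum_mul]
        refine Submodule.sum_mem _ fun l _ => ?_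
        rw [smul_mul_assoc]
        refine Submodule.smul_mem _ _ ?_
        have := X_mul_NF_aux l (deg μ') (fun ν g hν => (IH (deg μ') hdeg'm).1 l ν g hν)
          _ hY
        rwa [← hdeg'] at this

lemma one_eq_monoH :
    (1 : Halg k n G q rho kapC kapL) = MH ((fun _ => 0 : Fin n → ℕ), (1 : G)) := by
  rw [monoH_eq, fpow_zero, one_mul, rel_g1]

lemma X_mul_NF (i : Fin n) (d : ℕ) : ∀ x ∈ NN d, XX i * x ∈ NN (d + 1) :=
  X_mul_NF_aux i d (fun μ g hμ => (straighten d).1 i μ g hμ)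

lemma Y_mul_NF (h : G) (d : ℕ) : ∀ x ∈ NN d, YY h * x ∈ NN d :=
  Y_mul_NF_aux h d (fun μ g hμ => (straighten d).2 h μ g hμ)

lemma NF_le_span (m : ℕ) :
    NN m ≤ Submodule.span k (Set.range MH) :=
  Submodule.span_mono (by rintro x ⟨p, _, rfl⟩; exact ⟨p, rfl⟩)

lemma mul_NF (a : Halg k n G q rho kapC kapL) :
    ∀ d : ℕ, ∀ x ∈ NN d, ∃ d', a * x ∈ NN d' := by
  obtain ⟨y, rfl⟩ := RingQuot.mkAlgHom_surjective k (relH k n G q rho kapC kapL) a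
  induction y using FreeAlgebra.induction with
  | grade0 r =>
    intro d x hx
    refine ⟨d, ?_⟩
    have key : ∀ z : RingQuot (relH k n G q rho kapC kapL),
        algebraMap k _ r * z = r • z := fun z => (Algebra.smul_def r z).symm
    rw [AlgHom.commutes]; erw [key x]
    exact Submodule.smul_mem _ _ hx
  | grade1 z =>
    rcases z with i | g
    · intro d x hx
      exact ⟨d + 1, X_mul_NF i d x hx⟩
    · intro d x hx
      exact ⟨d, Y_mul_NF g d x hx⟩
  | mul a b iha ihb =>
    intro d x hx
    obtain ⟨d1, h1⟩ := ihb d x hx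
    obtain ⟨d2, h2⟩ := iha d1 _ h1
    refine ⟨d2, ?_⟩
    rw [map_mul]; erw [mul_assoc]
    exact h2
  | add a b iha ihb =>
    intro d x hx
    obtain ⟨d1, h1⟩ := iha d x hx
    obtain ⟨d2, h2⟩ := ihb d x hx
    refine ⟨max d1 d2, ?_⟩
    rw [map_add]; erw [add_mul]
    exact Submodule.add_mem _ (NF_mono k n G q rho kapC kapL (le_max_left _ _) h1)
      (NF_mono k n G q rho kapC kapL (le_max_right _ _) h2)

lemma span_monoH_top :
    Submodule.span k (Set.range (monoH k n G q rho kapC kapL)) = ⊤ := by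
  rw [eq_top_iff]
  rintro a -
  have h1 : (1 : Halg k n G q rho kapC kapL) ∈ NN 0 := by
    rw [one_eq_monoH]
    exact monoH_mem_NF k n G q rho kapC kapL (by simp [deg])
  obtain ⟨d', hd'⟩ := mul_NF a 0 1 h1
  have := NF_le_span d' hd'
  rwa [mul_one] at this

end Straighten

/-- The PBW monomial `v₁^{m₁} ⋯ v_n^{m_n} ⋅ g` of an abstract filtered algebra `U`
generated by elements `f i` (the images of the `vᵢ`) and `e g` (the images of `g ∈ G`). -/
def monoU {n : ℕ} {G : Type*} [Group G] {U : Type*} [Ring U]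
    (f : Fin n → U) (e : G →* U) (p : (Fin n → ℕ) × G) : U :=
  ((List.finRange n).map (fun i => (f i) ^ (p.1 i))).prod * e p.2

/-- Let `U` be a PBW deformation of `S_q(V) ⋊ G` in which the
action of `G` on `V` is preserved:  `U` is a filtered `k`-algebra generated by
`V ∪ G`, with `g vᵢ = (ᵍvᵢ) g` in `U`, whose associated graded algebra is
`S_q(V) ⋊ G` compatibly with the generators — equivalently, the monomials
`v₁^{m₁} ⋯ v_n^{m_n} g` form a `k`-basis of `U` and each
`vᵢvⱼ − q_{ij} vⱼvᵢ` lies in the degree-`≤ 1` filtration component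
`F₁U = span_k({vₗ g} ∪ {g})`.  Then `U ≅ H_{q,κ}` for some bilinear
`κ : V × V → (k ⊕ V) ⊗ kG` with `κ(vᵢ,vⱼ) = −q_{ij} κ(vⱼ,vᵢ)`; in particular
`U` is a quantum Drinfeld orbifold algebra. -/
theorem pbw_deformation_is_quantum_drinfeld_orbifold_algebra
    (k : Type*) [Field k] [CharZero k] (n : ℕ) (G : Type*) [Group G] [Fintype G]
    (q : Fin n → Fin n → k) (rho : G → Fin n → Fin n → k)
    (hq_diag : ∀ i, q i i = 1)
    (hq_inv : ∀ i j, q i j * q j i = 1)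
    (hrho_one : ∀ i j, rho 1 i j = if i = j then 1 else 0)
    (hrho_mul : ∀ g h i j, rho (g * h) i j = ∑ l, rho g i l * rho h l j)
    (U : Type*) [Ring U] [Algebra k U] (f : Fin n → U) (e : G →* U)
    (h_act : ∀ (g : G) (i : Fin n), e g * f i = (∑ l, rho g l i • f l) * e g)
    (h_basis : LinearIndependent k (monoU f e) ∧
      Submodule.span k (Set.range (monoU f e)) = ⊤)
    (h_filt : ∀ i j : Fin n, f i * f j - q i j • (f j * f i) ∈
      Submodule.span k {x : U | (∃ (l : Fin n) (g : G), x = f l * e g) ∨ (∃ g : G, x = e g)}) :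
    ∃ (kapC : Fin n → Fin n → G → k) (kapL : Fin n → Fin n → G → Fin n → k),
      (∀ i j g, kapC i j g = -(q i j) * kapC j i g) ∧
      (∀ i j g l, kapL i j g l = -(q i j) * kapL j i g l) ∧
      IsQDOA k n G q rho kapC kapL ∧
      ∃ iso : Halg k n G q rho kapC kapL ≃ₐ[k] U,
        (∀ i, iso (RingQuot.mkAlgHom k (relH k n G q rho kapC kapL) (Xv k n G i)) = f i) ∧
        (∀ g, iso (RingQuot.mkAlgHom k (relH k n G q rho kapC kapL) (Xg k n G g)) = e g) := by
  classical
  -- the basis of `U` given by the PBW monomials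
  set B : Module.Basis ((Fin n → ℕ) × G) k U := Module.Basis.mk h_basis.1 h_basis.2.ge with hB
  have hBapp : ∀ p, B p = monoU f e p := fun p => by rw [hB, Module.Basis.mk_apply]
  -- the commutators
  set D : Fin n → Fin n → U := fun i j => f i * f j - q i j • (f j * f i) with hD
  set kC : Fin n → Fin n → G → k := fun i j g => B.repr (D i j) ((fun _ => 0), g) with hkC
  set kL : Fin n → Fin n → G → Fin n → k :=
    fun i j g l => B.repr (D i j) (sing l, g) with hkL
  have monoU_zero : ∀ g : G, monoU f e ((fun _ => 0 : Fin n → ℕ), g) = e g := fun g => by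
    show fpow f (fun _ => 0) * e g = e g
    rw [fpow_zero, one_mul]
  have monoU_sing : ∀ (l : Fin n) (g : G), monoU f e (sing l, g) = f l * e g :=
    fun l g => by
      show fpow f (sing l) * e g = f l * e g
      rw [fpow_sing]
  -- the index set of low-degree PBW monomials
  set T : Set ((Fin n → ℕ) × G) :=
    {p | (∃ l g, p = (sing l, g)) ∨ (∃ g : G, p = ((fun _ => 0), g))} with hT
  have hset : monoU f e '' T =
      {x : U | (∃ (l : Fin n) (g : G), x = f l * e g) ∨ (∃ g : G, x = e g)} := by
    ext x
    constructor
    · rintro ⟨p, hp, rfl⟩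
      rcases hp with ⟨l, g, rfl⟩ | ⟨g, rfl⟩
      · exact Or.inl ⟨l, g, (monoU_sing l g)⟩
      · exact Or.inr ⟨g, (monoU_zero g)⟩
    · rintro (⟨l, g, rfl⟩ | ⟨g, rfl⟩)
      · exact ⟨(sing l, g), Or.inl ⟨l, g, rfl⟩, monoU_sing l g⟩
      · exact ⟨((fun _ => 0), g), Or.inr ⟨g, rfl⟩, monoU_zero g⟩
  have hsupp : ∀ i j, ↑((B.repr (D i j)).support) ⊆ T := by
    intro i j
    refine B.mem_span_image.mp ?_
    rw [hB, Module.Basis.coe_mk, hset]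
    exact h_filt i j
  -- the finite index set
  set s : Finset ((Fin n → ℕ) × G) :=
    (Finset.univ.image fun g : G => ((fun _ => 0 : Fin n → ℕ), g)) ∪
      (Finset.univ.image fun p : Fin n × G => ((sing p.1 : Fin n → ℕ), p.2)) with hs
  have hTs : T ⊆ ↑s := by
    rintro p (⟨l, g, rfl⟩ | ⟨g, rfl⟩)
    · exact Finset.mem_union_right _ (Finset.mem_image.mpr ⟨(l, g), Finset.mem_univ _, rfl⟩)
    · exact Finset.mem_union_left _ (Finset.mem_image.mpr ⟨g, Finset.mem_univ _, rfl⟩)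
  have hdisj : Disjoint (Finset.univ.image fun g : G => ((fun _ => 0 : Fin n → ℕ), g))
      (Finset.univ.image fun p : Fin n × G => ((sing p.1 : Fin n → ℕ), p.2)) := by
    rw [Finset.disjoint_left]
    rintro p hp1 hp2
    obtain ⟨g, -, rfl⟩ := Finset.mem_image.mp hp1
    obtain ⟨⟨l, g'⟩, -, hpeq⟩ := Finset.mem_image.mp hp2
    have := congrFun (congrArg Prod.fst hpeq) l
    simp [sing] at this
  -- the key identity : D i j = Σ κC • e g + Σ κL • (f l * e g)
  have key : ∀ i j, D i j = (∑ g : G, kC i j g • e g) +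
      ∑ g : G, ∑ l, kL i j g l • (f l * e g) := by
    intro i j
    conv_lhs => rw [← B.linearCombination_repr (D i j)]
    rw [Finsupp.linearCombination_apply,
      Finsupp.sum_of_support_subset _ (fun p hp => hTs (hsupp i j hp)) _
        (fun p _ => zero_smul k (B p)), hs, Finset.sum_union hdisj,
      Finset.sum_image (fun a _ b _ hab => (Prod.ext_iff.mp hab).2),
      Finset.sum_image (fun a _ b _ hab => ?_)]
    · congr 1
      · refine Finset.sum_congr rfl fun g _ => ?_
        rw [hBapp, monoU_zero, hkC]
      · rw [Fintype.sum_prod_type_right]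
        refine Finset.sum_congr rfl fun g _ => Finset.sum_congr rfl fun l _ => ?_
        rw [hBapp, monoU_sing, hkL]
    · have h1 : sing a.1 = sing b.1 := (Prod.ext_iff.mp hab).1
      have h2 := (Prod.ext_iff.mp hab).2
      exact Prod.ext (sing_injective h1) h2
  -- antisymmetry of D
  have hDanti : ∀ i j, D i j = (-q i j) • D j i := by
    intro i j
    rw [hD]
    simp only
    rw [smul_sub, smul_smul, neg_mul, hq_inv i j]
    simp only [neg_smul, one_smul, sub_neg_eq_add]
    abel
  have hkCanti : ∀ i j g, kC i j g = -q i j * kC j i g := by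
    intro i j g
    rw [hkC]
    simp only
    rw [show D i j = (-q i j) • D j i from hDanti i j, map_smul, Finsupp.smul_apply,
      smul_eq_mul]
  have hkLanti : ∀ i j g l, kL i j g l = -q i j * kL j i g l := by
    intro i j g l
    rw [hkL]
    simp only
    rw [show D i j = (-q i j) • D j i from hDanti i j, map_smul, Finsupp.smul_apply,
      smul_eq_mul]
  -- the algebra map from the free algebra
  set φ : FreeAlgebra k (Fin n ⊕ G) →ₐ[k] U := FreeAlgebra.lift k (Sum.elim f ⇑e) with hφ
  have hφv : ∀ i, φ (Xv k n G i) = f i := fun i => by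
    rw [hφ, Xv, FreeAlgebra.lift_ι_apply]; rfl
  have hφg : ∀ g, φ (Xg k n G g) = e g := fun g => by
    rw [hφ, Xg, FreeAlgebra.lift_ι_apply]; rfl
  have hφrel : ∀ ⦃x y⦄, relH k n G q rho kC kL x y → φ x = φ y := by
    rintro x y (⟨i, j, rfl, rfl⟩ | ⟨g, h, rfl, rfl⟩ | ⟨rfl, rfl⟩ | ⟨g, i, rfl, rfl⟩)
    · rw [map_mul, hφv, hφv, map_add, map_smul, map_mul, hφv, hφv]
      have hκ : φ (kappaElt k n G kC kL i j) = (∑ g : G, kC i j g • e g) +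
          ∑ g : G, ∑ l, kL i j g l • (f l * e g) := by
        rw [kappaElt, map_sum]
        rw [← Finset.sum_add_distrib]
        refine Finset.sum_congr rfl fun g _ => ?_
        rw [map_mul, map_add, AlgHom.commutes, hφg, map_sum, add_mul,
          ← Algebra.smul_def, Finset.sum_mul]
        congr 1
        refine Finset.sum_congr rfl fun l _ => ?_
        rw [map_smul, hφv, smul_mul_assoc]
      rw [hκ, ← key i j, hD]
      simp only
      abel
    · rw [map_mul, hφg, hφg, hφg, map_mul]
    · rw [hφg, map_one, map_one]
    · rw [map_mul, hφg, hφv, map_mul, map_sum, hφg, h_act g i]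
      congr 1
      refine Finset.sum_congr rfl fun l _ => ?_
      rw [map_smul, hφv]
  -- the induced map on H
  set Φ : Halg k n G q rho kC kL →ₐ[k] U :=
    RingQuot.liftAlgHom k (s := relH k n G q rho kC kL) ⟨φ, hφrel⟩ with hΦ
  have hΦmk : ∀ x, Φ (RingQuot.mkAlgHom k (relH k n G q rho kC kL) x) = φ x := fun x => by
    rw [hΦ]
    exact RingQuot.liftAlgHom_mkAlgHom_apply k φ hφrel x
  have hΦX : ∀ i, Φ (XH k n G q rho kC kL i) = f i := fun i => by
    rw [XH, hΦmk, hφv]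
  have hΦY : ∀ g, Φ (YH k n G q rho kC kL g) = e g := fun g => by
    rw [YH, hΦmk, hφg]
  have hΦmono : ∀ p, Φ (monoH k n G q rho kC kL p) = monoU f e p := by
    intro p
    rw [monoH_eq, map_mul, hΦY, map_fpow]
    show fpow (fun i => Φ (XH k n G q rho kC kL i)) p.1 * e p.2 = fpow f p.1 * e p.2
    congr 1
    congr 1
    funext i
    exact hΦX i
  have hcomp : ⇑Φ.toLinearMap ∘ monoH k n G q rho kC kL = monoU f e :=
    funext fun p => hΦmono p
  -- linear independence of the monomials of H
  have hindep : LinearIndependent k (monoH k n G q rho kC kL) :=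
    LinearIndependent.of_comp Φ.toLinearMap (by rw [hcomp]; exact h_basis.1)
  have hspan := span_monoH_top (k := k) (n := n) (G := G) (q := q) (rho := rho)
    (kapC := kC) (kapL := kL)
  -- bijectivity
  have hsurj : Function.Surjective ⇑Φ := by
    have hrange : LinearMap.range Φ.toLinearMap = ⊤ := by
      rw [LinearMap.range_eq_map, ← hspan, Submodule.map_span, ← Set.range_comp,
        hcomp, h_basis.2]
    exact LinearMap.range_eq_top.mp hrange
  have hinj : Function.Injective ⇑Φ := by
    intro x y hxy
    have hsub : Φ (x - y) = 0 := by rw [map_sub, hxy, sub_self]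
    have hx : x - y ∈ Submodule.span k (Set.range (monoH k n G q rho kC kL)) := by
      rw [hspan]; exact Submodule.mem_top
    obtain ⟨c, hc⟩ := Finsupp.mem_span_range_iff_exists_finsupp.mp hx
    have hc' : Finsupp.linearCombination k (monoH k n G q rho kC kL) c = x - y := by
      rw [Finsupp.linearCombination_apply]; exact hc
    have h0 : Finsupp.linearCombination k (monoU f e) c = 0 := by
      rw [← hcomp, ← Finsupp.apply_linearCombination, hc']
      exact hsub
    have hc0 : c = 0 := linearIndependent_iff.mp h_basis.1 c h0
    have : x - y = 0 := by rw [← hc', hc0, map_zero]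
    exact sub_eq_zero.mp this
  refine ⟨kC, kL, hkCanti, hkLanti, ⟨hindep, hspan⟩,
    AlgEquiv.ofBijective Φ ⟨hinj, hsurj⟩, fun i => ?_, fun g => ?_⟩
  · exact hΦX i
  · exact hΦY g

end QDOA4
end
end

section
/- Let U = H_{q,κ} be a quantum Drinfeld orbifold algebra with G = 1 (trivial group). Assume that for each triple of indices i,j,l with i ≠ j, if C_l^{i,j} ≠ 0 then q_{im}q_{jm} = q_{lm} for all m, and assume that the left-hand side and the right-hand side of PBW condition (3) are each equal to 0 for all triples of basis vectors; explicitly, for all distinct i,j,k: q_{ij}q_{ik}κ^L(κ^L(v_j,v_k),v_i) − κ^L(v_i,κ^L(v_j,v_k)) + q_{ik}q_{jk}κ^L(κ^L(v_k,v_i),v_j) − q_{ij}q_{ik}κ^L(v_j,κ^L(v_k,v_i)) + κ^L(κ^L(v_i,v_j),v_k) − q_{ik}q_{jk}κ^L(v_k,κ^L(v_i,v_j)) = 0, and κ^C(v_j,v_k)(1 − q_{ij}q_{ik})v_i + κ^C(v_k,v_i)(q_{ij}q_{ik} − q_{ik}q_{jk})v_j + κ^C(v_i,v_j)(q_{ik}q_{jk}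 − 1)v_k = 0. Then U is isomorphic to a generalized enveloping algebra U_ω(L) for some color Lie algebra L and some ω satisfying the compatibility condition ε(|z|,|x|)ω(x,[y,z]) + ε(|x|,|y|)ω(y,[z,x]) + ε(|y|,|z|)ω(z,[x,y]) = 0 on homogeneous elements. -/
open scoped BigOperators

noncomputable section

namespace QDOA5

universe u

/-- A color Lie algebra structure (over an abelian group `A` with antisymmetric
bicharacter `ε`) on the vector space `V = kⁿ`, presented in terms of a homogeneous
basis `v₁, …, v_n` with degrees `deg i ∈ A`, structure constants
`Br i j : Fin n → k` for the bracket (`[vᵢ,vⱼ] = ∑ l, Br i j l • vₗ`) and a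
parameter `ω` (given on the basis by `om i j ∈ k`) satisfying the compatibility
condition (2.8) of the paper.  Bilinear extensions appear explicitly in the
Jacobi and compatibility axioms. -/
structure ColorLieOnBasis (k : Type u) [Field k] (n : ℕ) : Type (u + 1) where
  /-- The grading group. -/
  A : Type u
  /-- The group structure of the grading group. -/
  [grp : CommGroup A]
  /-- The antisymmetric bicharacter `ε : A × A → k^×` (valued in `k`). -/
  eps : A → A → k
  /-- The degrees of the homogeneous basis vectors. -/
  deg : Fin n → A
  /-- The structure constants of the bracket: `[vᵢ,vⱼ] = ∑ l, Br i j l • vₗ`. -/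
  Br : Fin n → Fin n → Fin n → k
  /-- The parameter `ω` on pairs of basis vectors. -/
  om : Fin n → Fin n → k
  eps_antisym : ∀ a b, eps a b * eps b a = 1
  eps_mul_left : ∀ a b c, eps (a * b) c = eps a c * eps b c
  eps_mul_right : ∀ a b c, eps a (b * c) = eps a b * eps a c
  /-- `[L_a, L_b] ⊆ L_{ab}` for the grading by spans of basis vectors. -/
  grade : ∀ i j l, Br i j l ≠ 0 → deg i * deg j = deg l
  /-- `[x,y] = −ε(|x|,|y|)[y,x]`. -/
  antisym : ∀ i j, Br i j = -(eps (deg i) (deg j)) • Br j i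
  /-- `ω(vᵢ,vⱼ) = −ε(|vᵢ|,|vⱼ|) ω(vⱼ,vᵢ)`. -/
  om_antisym : ∀ i j, om i j = -(eps (deg i) (deg j)) * om j i
  /-- The ε-Jacobi identity
  `ε(|z|,|x|)[x,[y,z]] + ε(|x|,|y|)[y,[z,x]] + ε(|y|,|z|)[z,[x,y]] = 0`. -/
  jacobi : ∀ i j m, (fun t =>
      eps (deg m) (deg i) * (∑ b, Br j m b * Br i b t)
      + eps (deg i) (deg j) * (∑ b, Br m i b * Br j b t)
      + eps (deg j) (deg m) * (∑ b, Br i j b * Br m b t)) = (0 : Fin n → k)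
  /-- The compatibility condition
  `ε(|z|,|x|)ω(x,[y,z]) + ε(|x|,|y|)ω(y,[z,x]) + ε(|y|,|z|)ω(z,[x,y]) = 0`. -/
  om_compat : ∀ i j m,
      eps (deg m) (deg i) * (∑ b, Br j m b * om i b)
      + eps (deg i) (deg j) * (∑ b, Br m i b * om j b)
      + eps (deg j) (deg m) * (∑ b, Br i j b * om m b) = 0

attribute [instance] ColorLieOnBasis.grp

/-- The defining relations of the generalized enveloping algebra `U_ω(L)`:
`vᵢvⱼ − ε(|vᵢ|,|vⱼ|) vⱼvᵢ − [vᵢ,vⱼ] − ω(vᵢ,vⱼ)` for basis vectors `vᵢ, vⱼ`. -/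
def relU (k : Type*) [Field k] (n : ℕ) (D : ColorLieOnBasis k n) :
    FreeAlgebra k (Fin n) → FreeAlgebra k (Fin n) → Prop := fun a b =>
  ∃ i j : Fin n, a = FreeAlgebra.ι k i * FreeAlgebra.ι k j ∧
    b = D.eps (D.deg i) (D.deg j) • (FreeAlgebra.ι k j * FreeAlgebra.ι k i)
      + (∑ l, D.Br i j l • FreeAlgebra.ι k l) + algebraMap k _ (D.om i j)

/-- The generalized enveloping algebra
`U_ω(L) = T(L)/(vᵢvⱼ − ε(|vᵢ|,|vⱼ|)vⱼvᵢ − [vᵢ,vⱼ] − ω(vᵢ,vⱼ))`. -/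
def Uom (k : Type*) [Field k] (n : ℕ) (D : ColorLieOnBasis k n) := RingQuot (relU k n D)

instance (k : Type*) [Field k] (n : ℕ) (D : ColorLieOnBasis k n) : Ring (Uom k n D) := by
  unfold Uom; infer_instance

instance (k : Type*) [Field k] (n : ℕ) (D : ColorLieOnBasis k n) : Algebra k (Uom k n D) := by
  unfold Uom; infer_instance

/-- The defining relations of `H_{q,κ}` with trivial group `G = 1`:
`vᵢvⱼ − q_{ij} vⱼvᵢ − κ(vᵢ,vⱼ)` where `κ = κ^C + κ^L`. -/
def relH (k : Type*) [Field k] (n : ℕ) (q : Fin n → Fin n → k)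
    (kapC : Fin n → Fin n → k) (kapL : Fin n → Fin n → Fin n → k) :
    FreeAlgebra k (Fin n) → FreeAlgebra k (Fin n) → Prop := fun a b =>
  ∃ i j : Fin n, a = FreeAlgebra.ι k i * FreeAlgebra.ι k j ∧
    b = q i j • (FreeAlgebra.ι k j * FreeAlgebra.ι k i)
      + (∑ l, kapL i j l • FreeAlgebra.ι k l) + algebraMap k _ (kapC i j)

/-- The algebra `H_{q,κ} = T(V)/(vᵢvⱼ − q_{ij}vⱼvᵢ − κ(vᵢ,vⱼ))` (trivial group). -/
def Halg (k : Type*) [Field k] (n : ℕ) (q : Fin n → Fin n → k)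
    (kapC : Fin n → Fin n → k) (kapL : Fin n → Fin n → Fin n → k) :=
  RingQuot (relH k n q kapC kapL)

instance (k : Type*) [Field k] (n : ℕ) (q : Fin n → Fin n → k)
    (kapC : Fin n → Fin n → k) (kapL : Fin n → Fin n → Fin n → k) :
    Ring (Halg k n q kapC kapL) := by unfold Halg; infer_instance

instance (k : Type*) [Field k] (n : ℕ) (q : Fin n → Fin n → k)
    (kapC : Fin n → Fin n → k) (kapL : Fin n → Fin n → Fin n → k) :
    Algebra k (Halg k n q kapC kapL) := by unfold Halg; infer_instance

/-- The PBW monomial `v₁^{m₁} ⋯ v_n^{m_n}` in `H_{q,κ}`. -/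
def monoH (k : Type*) [Field k] (n : ℕ) (q : Fin n → Fin n → k)
    (kapC : Fin n → Fin n → k) (kapL : Fin n → Fin n → Fin n → k)
    (m : Fin n → ℕ) : Halg k n q kapC kapL :=
  ((List.finRange n).map
    (fun i => (RingQuot.mkAlgHom k (relH k n q kapC kapL) (FreeAlgebra.ι k i)) ^ (m i))).prod

/-- The standard basis vector of `V = Fin n → k`. -/
def ev (k : Type*) [Field k] (n : ℕ) (i : Fin n) : Fin n → k := Pi.single i 1

/-- Bilinear extension of structure constants to `V × V`. -/
def bil (k : Type*) [Field k] (n : ℕ) (c : Fin n → Fin n → Fin n → k)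
    (x y : Fin n → k) : Fin n → k := fun t => ∑ a, ∑ b, x a * y b * c a b t

section GrpPart
variable {k : Type u} [Field k] {n : ℕ}

variable {k : Type u} [Field k] {n : ℕ}

def Qu (q : Fin n → Fin n → k) (hq : ∀ i j, q i j ≠ 0) : Fin n → Fin n → kˣ :=
  fun i j => Units.mk0 (q i j) (hq i j)

def Nsub (q : Fin n → Fin n → k) (hq : ∀ i j, q i j ≠ 0) : AddSubgroup (Fin n → ℤ) where
  carrier := {a | ∀ m, ∏ i, (Qu q hq) i m ^ (a i) = 1}
  zero_mem' := by intro m; simp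
  add_mem' := by
    intro a b ha hb m
    simp only [Pi.add_apply, zpow_add, Finset.prod_mul_distrib, ha m, hb m, one_mul]
  neg_mem' := by
    intro a ha m
    simp only [Pi.neg_apply, zpow_neg, Finset.prod_inv_distrib, ha m, inv_one]

def e0 (q : Fin n → Fin n → k) (hq : ∀ i j, q i j ≠ 0) (a b : Fin n → ℤ) : kˣ :=
  ∏ i, ∏ j, (Qu q hq) i j ^ (a i * b j)

variable (q : Fin n → Fin n → k) (hq : ∀ i j, q i j ≠ 0)

lemma e0_add_left (a a' b : Fin n → ℤ) :
    e0 q hq (a + a') b = e0 q hq a b * e0 q hq a' b := by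
  simp only [e0, Pi.add_apply, add_mul, zpow_add, Finset.prod_mul_distrib]

lemma e0_add_right (a b b' : Fin n → ℤ) :
    e0 q hq a (b + b') = e0 q hq a b * e0 q hq a b' := by
  simp only [e0, Pi.add_apply, mul_add, zpow_add, Finset.prod_mul_distrib]

lemma e0_eq_left (a b : Fin n → ℤ) :
    e0 q hq a b = ∏ j, (∏ i, (Qu q hq) i j ^ (a i)) ^ (b j) := by
  rw [e0, Finset.prod_comm]
  refine Finset.prod_congr rfl fun j _ => ?_
  rw [← Finset.prod_zpow]
  refine Finset.prod_congr rfl fun i _ => ?_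
  rw [← zpow_mul]

lemma e0_left_N (a b : Fin n → ℤ) (ha : a ∈ Nsub q hq) : e0 q hq a b = 1 := by
  rw [e0_eq_left]
  refine Finset.prod_eq_one fun j _ => ?_
  rw [ha j, one_zpow]

lemma Qu_inv (hq_inv : ∀ i j, q i j * q j i = 1) (i j : Fin n) :
    (Qu q hq) i j * (Qu q hq) j i = 1 := by
  ext; exact hq_inv i j

lemma e0_eq_right (a b : Fin n → ℤ) (hq_inv : ∀ i j, q i j * q j i = 1) :
    e0 q hq a b = ∏ i, ((∏ j, (Qu q hq) j i ^ (b j)) ^ (a i))⁻¹ := by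
  rw [e0]
  refine Finset.prod_congr rfl fun i _ => ?_
  rw [← Finset.prod_zpow, ← Finset.prod_inv_distrib]
  refine Finset.prod_congr rfl fun j _ => ?_
  have h : (Qu q hq) i j = ((Qu q hq) j i)⁻¹ := by
    rw [eq_inv_iff_mul_eq_one]; exact Qu_inv q hq hq_inv i j
  rw [h, inv_zpow, ← zpow_mul, mul_comm (b j) (a i)]

lemma e0_right_N (a b : Fin n → ℤ) (hq_inv : ∀ i j, q i j * q j i = 1)
    (hb : b ∈ Nsub q hq) : e0 q hq a b = 1 := by
  rw [e0_eq_right q hq a b hq_inv]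
  refine Finset.prod_eq_one fun i _ => ?_
  rw [hb i, one_zpow, inv_one]

lemma e0_antisym (a b : Fin n → ℤ) (hq_inv : ∀ i j, q i j * q j i = 1) :
    e0 q hq a b * e0 q hq b a = 1 := by
  have h2 : e0 q hq b a = ∏ i, ∏ j, (Qu q hq) j i ^ (a i * b j) := by
    rw [e0, Finset.prod_comm]
    exact Finset.prod_congr rfl fun i _ => Finset.prod_congr rfl fun j _ => by rw [mul_comm (b j)]
  rw [e0, h2, ← Finset.prod_mul_distrib]
  refine Finset.prod_eq_one fun i _ => ?_
  rw [← Finset.prod_mul_distrib]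
  refine Finset.prod_eq_one fun j _ => ?_
  rw [← mul_zpow, Qu_inv q hq hq_inv, one_zpow]

def zsingle (i : Fin n) : Fin n → ℤ := Pi.single i 1

lemma prod_zpow_single (c : Fin n → kˣ) (i : Fin n) (f : ℤ) :
    ∏ t, c t ^ (zsingle i t * f) = c i ^ f := by
  rw [Finset.prod_eq_single i (fun t _ ht => by
    simp [zsingle, Pi.single_apply, if_neg ht]) (by simp)]
  simp [zsingle]

lemma e0_single (i j : Fin n) :
    e0 q hq (zsingle i) (zsingle j) = (Qu q hq) i j := by
  rw [e0]
  have h1 : ∀ a : Fin n, ∏ b, (Qu q hq) a b ^ (zsingle i a * zsingle j b)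
      = ((Qu q hq) a j) ^ (zsingle i a) := by
    intro a
    have h2 : ∀ b : Fin n, zsingle i a * zsingle j b
        = zsingle j b * zsingle i a := fun b => mul_comm _ _
    simp_rw [h2]
    exact prod_zpow_single (fun b => (Qu q hq) a b) j _
  simp_rw [h1]
  simpa using prod_zpow_single (fun a => (Qu q hq) a j) i 1


lemma prod_zpow_single' (c : Fin n → kˣ) (i : Fin n) :
    ∏ t, c t ^ (zsingle i t) = c i := by
  have := prod_zpow_single c i 1
  simpa using this

def Agrp (q : Fin n → Fin n → k) (hq : ∀ i j, q i j ≠ 0) : Type u :=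
  ULift (Multiplicative ((Fin n → ℤ) ⧸ Nsub q hq))

instance : CommGroup (Agrp q hq) := by unfold Agrp; infer_instance

def degA (i : Fin n) : Agrp q hq :=
  ⟨Multiplicative.ofAdd (QuotientAddGroup.mk (zsingle i))⟩

lemma e0_congr (hq_inv : ∀ i j, q i j * q j i = 1) (a₁ a₂ b₁ b₂ : Fin n → ℤ)
    (h1 : -a₁ + b₁ ∈ Nsub q hq) (h2 : -a₂ + b₂ ∈ Nsub q hq) :
    e0 q hq a₁ a₂ = e0 q hq b₁ b₂ := by
  obtain ⟨d₁, hd₁, rfl⟩ : ∃ d, d ∈ Nsub q hq ∧ b₁ = a₁ + d := ⟨_, h1, by abel⟩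
  obtain ⟨d₂, hd₂, rfl⟩ : ∃ d, d ∈ Nsub q hq ∧ b₂ = a₂ + d := ⟨_, h2, by abel⟩
  rw [e0_add_left, e0_add_right, e0_add_right, e0_left_N q hq _ _ hd₁,
    e0_right_N q hq _ _ hq_inv hd₂, e0_left_N q hq _ _ hd₁, mul_one, mul_one, mul_one]

def epsA (hq_inv : ∀ i j, q i j * q j i = 1) : Agrp q hq → Agrp q hq → k := fun x y =>
  Quotient.liftOn₂' (Multiplicative.toAdd x.down) (Multiplicative.toAdd y.down)
    (fun a b => ((e0 q hq a b : kˣ) : k))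
    (fun a₁ a₂ b₁ b₂ h1 h2 =>
      congrArg Units.val (e0_congr q hq hq_inv a₁ a₂ b₁ b₂
        (QuotientAddGroup.leftRel_apply.mp h1) (QuotientAddGroup.leftRel_apply.mp h2)))

variable (hq_inv : ∀ i j, q i j * q j i = 1)

lemma epsA_mk (a b : Fin n → ℤ) :
    epsA q hq hq_inv ⟨Multiplicative.ofAdd (QuotientAddGroup.mk a)⟩
      ⟨Multiplicative.ofAdd (QuotientAddGroup.mk b)⟩ = ((e0 q hq a b : kˣ) : k) := rfl

lemma epsA_deg (i j : Fin n) :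
    epsA q hq hq_inv (degA q hq i) (degA q hq j) = q i j := by
  rw [degA, degA, epsA_mk, e0_single]
  rfl

lemma Agrp_ind (P : Agrp q hq → Prop)
    (h : ∀ a : Fin n → ℤ, P ⟨Multiplicative.ofAdd (QuotientAddGroup.mk a)⟩) : ∀ x, P x := by
  rintro ⟨x⟩
  induction x using QuotientAddGroup.induction_on
  exact h _

lemma epsA_antisym (x y : Agrp q hq) :
    epsA q hq hq_inv x y * epsA q hq hq_inv y x = 1 := by
  induction x using Agrp_ind with | h a =>
  induction y using Agrp_ind with | h b =>
  rw [epsA_mk, epsA_mk, ← Units.val_mul, e0_antisym q hq a b hq_inv, Units.val_one]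

lemma Agrp_mk_mul (a b : Fin n → ℤ) :
    (⟨Multiplicative.ofAdd (QuotientAddGroup.mk a)⟩ : Agrp q hq)
      * ⟨Multiplicative.ofAdd (QuotientAddGroup.mk b)⟩
      = ⟨Multiplicative.ofAdd (QuotientAddGroup.mk (a + b))⟩ := rfl

lemma epsA_mul_left (x y z : Agrp q hq) :
    epsA q hq hq_inv (x * y) z = epsA q hq hq_inv x z * epsA q hq hq_inv y z := by
  induction x using Agrp_ind with | h a =>
  induction y using Agrp_ind with | h b =>
  induction z using Agrp_ind with | h c =>
  exact congrArg Units.val (e0_add_left q hq a b c)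

lemma epsA_mul_right (x y z : Agrp q hq) :
    epsA q hq hq_inv x (y * z) = epsA q hq hq_inv x y * epsA q hq hq_inv x z := by
  induction x using Agrp_ind with | h a =>
  induction y using Agrp_ind with | h b =>
  induction z using Agrp_ind with | h c =>
  exact congrArg Units.val (e0_add_right q hq a b c)

lemma degA_grade (i j l : Fin n) (h : ∀ m, q i m * q j m = q l m) :
    degA q hq i * degA q hq j = degA q hq l := by
  have hmem : -(zsingle i + zsingle j) + zsingle l ∈ Nsub q hq := by
    intro m
    have expand : ∀ t, (-(zsingle i + zsingle j) + zsingle l) t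
        = -(zsingle i t) + -(zsingle j t) + zsingle l t := by intro t; simp; ring
    simp only [expand, zpow_add, zpow_neg, Finset.prod_mul_distrib,
      Finset.prod_inv_distrib, prod_zpow_single']
    have hQ : Qu q hq i m * Qu q hq j m = Qu q hq l m :=
      Units.ext (by simpa [Qu] using h m)
    rw [← hQ, mul_comm (Qu q hq i m)⁻¹ (Qu q hq j m)⁻¹, mul_assoc,
      ← mul_assoc (Qu q hq i m)⁻¹, inv_mul_cancel, one_mul, inv_mul_cancel]
  have hq2 : (QuotientAddGroup.mk (zsingle i + zsingle j) : (Fin n → ℤ) ⧸ Nsub q hq)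
      = QuotientAddGroup.mk (zsingle l) := (QuotientAddGroup.eq).mpr hmem
  rw [degA, degA, degA]
  exact (Agrp_mk_mul q hq _ _).trans <| congrArg (fun x => (⟨Multiplicative.ofAdd x⟩ : Agrp q hq)) hq2

end GrpPart

section Hside
variable {k : Type u} [Field k] [CharZero k] {n : ℕ}
variable (q : Fin n → Fin n → k) (kapC : Fin n → Fin n → k) (kapL : Fin n → Fin n → Fin n → k)

/-- image of basis vector in H -/
def wv (i : Fin n) : Halg k n q kapC kapL :=
  RingQuot.mkAlgHom k (relH k n q kapC kapL) (FreeAlgebra.ι k i)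

/-- the kappa element -/
def Bv (i j : Fin n) : Halg k n q kapC kapL :=
  (∑ l, kapL i j l • wv q kapC kapL l) + algebraMap k _ (kapC i j)

lemma rel_w (i j : Fin n) :
    wv q kapC kapL i * wv q kapC kapL j
      = q i j • (wv q kapC kapL j * wv q kapC kapL i) + Bv q kapC kapL i j := by
  have h := RingQuot.mkAlgHom_rel k (s := relH k n q kapC kapL)
    (x := FreeAlgebra.ι k i * FreeAlgebra.ι k j) ⟨i, j, rfl, rfl⟩
  simp only [map_mul, map_add, map_smul, map_sum, AlgHom.commutes] at h
  simp only [wv, Bv, add_assoc]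
  exact h.trans (add_assoc _ _ _)


set_option linter.unusedSectionVars false

abbrev halgModule : @Module k (Halg k n q kapC kapL) _
    (AddCommGroup.toAddCommMonoid) := Algebra.toModule

attribute [local instance] halgModule

lemma mul_algMap (x : Halg k n q kapC kapL) (c : k) :
    x * algebraMap k _ c = c • x := by
  rw [← Algebra.commutes, ← Algebra.smul_def]

lemma algMap_mul (x : Halg k n q kapC kapL) (c : k) :
    algebraMap k (Halg k n q kapC kapL) c * x = c • x := (Algebra.smul_def c x).symm

variable (hq_diag : ∀ i, q i i = 1) (hq_inv : ∀ i j, q i j * q j i = 1)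
  (hq_ne : ∀ i j, q i j ≠ 0)
  (hkapL_antisym : ∀ i j, kapL i j = -(q i j) • kapL j i)
  (hC : ∀ i j l, i ≠ j → kapL i j l ≠ 0 → ∀ m, q i m * q j m = q l m)

include hq_diag hq_inv hq_ne hkapL_antisym hC in
lemma hC' (i j m l : Fin n) :
    kapL j m l * q i l = kapL j m l * (q i j * q i m) := by
  by_cases h0 : kapL j m l = 0
  · rw [h0, zero_mul, zero_mul]
  by_cases hjm : j = m
  · subst hjm
    exfalso
    apply h0
    have h1 := congrFun (hkapL_antisym j j) l
    simp only [Pi.smul_apply, smul_eq_mul, hq_diag j, neg_mul, one_mul] at h1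
    have h2 : (2 : k) * kapL j j l = 0 := by linear_combination h1
    exact (mul_eq_zero.mp h2).resolve_left two_ne_zero
  have hq := hC j m l hjm h0 i
  have key : q i l * q l i = (q i j * q i m) * q l i := by
    rw [hq_inv i l, ← hq]
    linear_combination (-(q i m * q m i)) * hq_inv i j - hq_inv i m
  exact congrArg (kapL j m l * ·) (mul_right_cancel₀ (hq_ne l i) key)

/-- the lower-order terms in the key swap identity -/
def Yv (i j m : Fin n) : Halg k n q kapC kapL :=
  (∑ t, (∑ l, kapL j m l * kapL i l t) • wv q kapC kapL t)
    + algebraMap k _ (∑ l, kapL j m l * kapC i l)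
    + (kapC j m * (1 - q i j * q i m)) • wv q kapC kapL i

lemma smul_algMap (c d : k) :
    c • (algebraMap k (Halg k n q kapC kapL) d) = algebraMap k _ (c * d) := by
  rw [Algebra.smul_def, ← map_mul]

include hq_diag hq_inv hq_ne hkapL_antisym hC in
lemma keyA (i j m : Fin n) :
    wv q kapC kapL i * Bv q kapC kapL j m
      = (q i j * q i m) • (Bv q kapC kapL j m * wv q kapC kapL i)
        + Yv q kapC kapL i j m := by
  set w := wv q kapC kapL with hw
  have step1 : w i * Bv q kapC kapL j m
      = ∑ l, kapL j m l • (w i * w l) + kapC j m • w i := by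
    erw [Bv, mul_add, Finset.mul_sum, mul_algMap]
    simp_rw [mul_smul_comm]
    rfl
  have step1b : ∑ l, kapL j m l • (w i * w l)
      = ∑ l, (kapL j m l * q i l) • (w l * w i)
        + ∑ l, kapL j m l • Bv q kapC kapL i l := by
    rw [← Finset.sum_add_distrib]
    refine Finset.sum_congr rfl fun l _ => ?_
    rw [rel_w, smul_add, smul_smul]
  have step2 : (q i j * q i m) • (Bv q kapC kapL j m * w i)
      = ∑ l, ((q i j * q i m) * kapL j m l) • (w l * w i)
        + ((q i j * q i m) * kapC j m) • w i := by
    erw [Bv, add_mul, Finset.sum_mul, algMap_mul, smul_add, Finset.smul_sum, smul_smul]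
    simp_rw [smul_mul_assoc, smul_smul]
    rfl
  have step3 : ∑ l, kapL j m l • Bv q kapC kapL i l
      = (∑ t, (∑ l, kapL j m l * kapL i l t) • w t)
        + algebraMap k (Halg k n q kapC kapL) (∑ l, kapL j m l * kapC i l) := by
    calc ∑ l, kapL j m l • Bv q kapC kapL i l
        = ∑ l, ((∑ t, (kapL j m l * kapL i l t) • w t)
            + algebraMap k _ (kapL j m l * kapC i l)) := by
          refine Finset.sum_congr rfl fun l _ => ?_
          rw [Bv, smul_add, Finset.smul_sum, smul_algMap]
          simp_rw [smul_smul]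
          rfl
      _ = (∑ l, ∑ t, (kapL j m l * kapL i l t) • w t)
            + ∑ l, algebraMap k (Halg k n q kapC kapL) (kapL j m l * kapC i l) :=
          Finset.sum_add_distrib
      _ = _ := by
          rw [Finset.sum_comm, ← map_sum]
          congr 1
          refine Finset.sum_congr rfl fun t _ => ?_
          rw [Finset.sum_smul]
  have hco : ∀ l ∈ Finset.univ, (kapL j m l * q i l) • (w l * w i)
      = ((q i j * q i m) * kapL j m l) • (w l * w i) := by
    intro l _
    rw [hC' q kapL hq_diag hq_inv hq_ne hkapL_antisym hC i j m l, mul_comm (kapL j m l)]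
  rw [step1, step1b, Finset.sum_congr rfl hco, step3, step2, Yv]
  module


include hq_diag hq_inv hq_ne hkapL_antisym hC in
lemma starstar (i j m : Fin n) :
    Yv q kapC kapL i j m + (q j m * q i m) • Yv q kapC kapL m i j
      = q i j • Yv q kapC kapL j i m := by
  set w := wv q kapC kapL with hw
  set B := Bv q kapC kapL with hB
  have kA := keyA q kapC kapL hq_diag hq_inv hq_ne hkapL_antisym hC
  have e1 : w i * (w j * w m)
      = (q j m * q i m * q i j) • (w m * (w j * w i))
        + (q j m * q i m) • (w m * B i j) + q j m • (B i m * w j) + w i * B j m := by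
    calc w i * (w j * w m) = w i * (q j m • (w m * w j) + B j m) := by rw [← rel_w]
      _ = q j m • ((w i * w m) * w j) + w i * B j m := by
          rw [mul_add, mul_smul_comm, mul_assoc]
      _ = q j m • ((q i m • (w m * w i) + B i m) * w j) + w i * B j m := by
          rw [← rel_w]
      _ = (q j m * q i m) • (w m * (w i * w j)) + q j m • (B i m * w j) + w i * B j m := by
          rw [add_mul, smul_mul_assoc, smul_add, smul_smul, mul_assoc]
      _ = (q j m * q i m) • (w m * (q i j • (w j * w i) + B i j)) + q j m • (B i m * w j)
            + w i * B j m := by rw [← rel_w]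
      _ = _ := by rw [mul_add, mul_smul_comm, smul_add, smul_smul]
  have e2 : (w i * w j) * w m
      = (q i j * q i m * q j m) • (w m * (w j * w i))
        + (q i j * q i m) • (B j m * w i) + q i j • (w j * B i m) + B i j * w m := by
    calc (w i * w j) * w m = (q i j • (w j * w i) + B i j) * w m := by rw [← rel_w]
      _ = q i j • (w j * (w i * w m)) + B i j * w m := by
          rw [add_mul, smul_mul_assoc, mul_assoc]
      _ = q i j • (w j * (q i m • (w m * w i) + B i m)) + B i j * w m := by rw [← rel_w]
      _ = (q i j * q i m) • ((w j * w m) * w i) + q i j • (w j * B i m) + B i j * w m := by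
          rw [mul_add, mul_smul_comm, smul_add, smul_smul, ← mul_assoc]
      _ = (q i j * q i m) • ((q j m • (w m * w j) + B j m) * w i) + q i j • (w j * B i m)
            + B i j * w m := by rw [← rel_w]
      _ = _ := by
          rw [add_mul, smul_mul_assoc, smul_add, smul_smul,
            mul_assoc (w m) (w j) (w i)]
  have easc : (q j m * q i m * q i j) • (w m * (w j * w i))
        + (q j m * q i m) • (w m * B i j) + q j m • (B i m * w j) + w i * B j m
      = (q i j * q i m * q j m) • (w m * (w j * w i))
        + (q i j * q i m) • (B j m * w i) + q i j • (w j * B i m) + B i j * w m := by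
    rw [← e1, ← e2, mul_assoc]
  rw [kA i j m, kA j i m, kA m i j] at easc
  have hsc1 : q j m * q i m * (q m i * q m j) = 1 := by
    linear_combination (q i m * q m i) * hq_inv j m + hq_inv i m
  have hsc2 : q i j * (q j i * q j m) = q j m := by
    linear_combination (q j m) * hq_inv i j
  rw [smul_add, smul_add, smul_smul, smul_smul, hsc1, hsc2, one_smul] at easc
  linear_combination (norm := module) easc

/-- scalar part of the ★★ identity -/
def Sv (i j m : Fin n) : k :=
  (∑ l, kapL j m l * kapC i l) - q i j * (∑ l, kapL i m l * kapC j l)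
    + (q i m * q j m) * (∑ l, kapL i j l * kapC m l)

/-- linear part of the ★★ identity -/
def gv (i j m t : Fin n) : k :=
  (∑ l, kapL j m l * kapL i l t) - q i j * (∑ l, kapL i m l * kapL j l t)
    + (q i m * q j m) * (∑ l, kapL i j l * kapL m l t)
    + kapC j m * (1 - q i j * q i m) * ev k n i t
    - q i j * (kapC i m * (1 - q j i * q j m)) * ev k n j t
    + (q i m * q j m) * (kapC i j * (1 - q m i * q m j)) * ev k n m t

lemma sum_single_smul (c : k) (i : Fin n) :
    ∑ t, (c * ev k n i t) • wv q kapC kapL t = c • wv q kapC kapL i := by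
  rw [Finset.sum_eq_single i (fun t _ ht => by simp [ev, Pi.single_apply, ht]) (by simp)]
  simp [ev]

include hq_diag hq_inv hq_ne hkapL_antisym hC in
lemma expandSS (i j m : Fin n) :
    ∑ t, gv q kapC kapL i j m t • wv q kapC kapL t
      + algebraMap k (Halg k n q kapC kapL) (Sv q kapC kapL i j m) = 0 := by
  have hss := starstar q kapC kapL hq_diag hq_inv hq_ne hkapL_antisym hC i j m
  rw [Yv, Yv, Yv] at hss
  have h2 : ∑ t, (q i j * (∑ l, kapL i m l * kapL j l t)) • wv q kapC kapL t
      = q i j • ∑ t, (∑ l, kapL i m l * kapL j l t) • wv q kapC kapL t := by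
    rw [Finset.smul_sum]
    exact Finset.sum_congr rfl fun t _ => (smul_smul _ _ _).symm
  have h3 : ∑ t, ((q i m * q j m) * (∑ l, kapL i j l * kapL m l t)) • wv q kapC kapL t
      = (q i m * q j m) • ∑ t, (∑ l, kapL i j l * kapL m l t) • wv q kapC kapL t := by
    rw [Finset.smul_sum]
    exact Finset.sum_congr rfl fun t _ => (smul_smul _ _ _).symm
  have hSsplit : algebraMap k (Halg k n q kapC kapL) (Sv q kapC kapL i j m)
      = algebraMap k (Halg k n q kapC kapL) (∑ l, kapL j m l * kapC i l)
        - q i j • algebraMap k (Halg k n q kapC kapL) (∑ l, kapL i m l * kapC j l)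
        + (q i m * q j m) • algebraMap k (Halg k n q kapC kapL)
            (∑ l, kapL i j l * kapC m l) := by
    rw [Sv, map_add, map_sub, map_mul, map_mul, ← Algebra.smul_def, ← Algebra.smul_def]
  simp only [gv, add_smul, sub_smul, Finset.sum_add_distrib,
    Finset.sum_sub_distrib (G := Halg k n q kapC kapL)]
  erw [Finset.sum_sub_distrib (G := Halg k n q kapC kapL)]
  simp only [Finset.sum_add_distrib, Finset.sum_sub_distrib (G := Halg k n q kapC kapL)]
  erw [h2, h3]
  rw [sum_single_smul q kapC kapL]
  erw [sum_single_smul q kapC kapL (kapC j m * (1 - q i j * q i m)) i,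
    sum_single_smul q kapC kapL (q i j * (kapC i m * (1 - q j i * q j m))) j]
  rw [hSsplit]
  change ∑ t, (∑ l, kapL j m l * kapL i l t) • wv q kapC kapL t -
                q i j • ∑ t, (∑ l, kapL i m l * kapL j l t) • wv q kapC kapL t +
              (q i m * q j m) • ∑ t, (∑ l, kapL i j l * kapL m l t) • wv q kapC kapL t +
            (kapC j m * (1 - q i j * q i m)) • wv q kapC kapL i -
          (q i j * (kapC i m * (1 - q j i * q j m))) • wv q kapC kapL j +
        (q i m * q j m * (kapC i j * (1 - q m i * q m j))) • wv q kapC kapL m +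
      ((algebraMap k (Halg k n q kapC kapL)) (∑ l, kapL j m l * kapC i l) -
          q i j • (algebraMap k (Halg k n q kapC kapL)) (∑ l, kapL i m l * kapC j l) +
        (q i m * q j m) • (algebraMap k (Halg k n q kapC kapL)) (∑ l, kapL i j l * kapC m l)) =
    0
  linear_combination (norm := module) hss

lemma list_prod_one_except {M : Type*} [Monoid M] (f : Fin n → M) (t : Fin n) :
    ∀ (l : List (Fin n)), l.Nodup → t ∈ l → (∀ i, i ≠ t → f i = 1) →
      (l.map f).prod = f t := by
  intro l
  induction l with
  | nil => intro _ ht; simp at ht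
  | cons a l' ih =>
    intro hnd ht hf
    rcases List.nodup_cons.mp hnd with ⟨ha, hnd'⟩
    by_cases hat : a = t
    · subst hat
      have : ∀ x ∈ l'.map f, x = 1 := by
        rintro x hx
        rcases List.mem_map.mp hx with ⟨i, hi, rfl⟩
        exact hf i (fun he => ha (he ▸ hi))
      rw [List.map_cons, List.prod_cons, List.prod_eq_one this, mul_one]
    · have ht' : t ∈ l' := by
        rcases List.mem_cons.mp ht with h | h
        · exact absurd h.symm hat
        · exact h
      rw [List.map_cons, List.prod_cons, hf a hat, one_mul]
      exact ih hnd' ht' hf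

lemma monoH_zero : monoH k n q kapC kapL 0 = 1 := by
  simp [monoH]
  rfl

lemma monoH_single (t : Fin n) :
    monoH k n q kapC kapL (Pi.single t 1) = wv q kapC kapL t := by
  rw [monoH]
  have := list_prod_one_except
    (fun i => (RingQuot.mkAlgHom k (relH k n q kapC kapL) (FreeAlgebra.ι k i))
      ^ (Pi.single t 1 i))
    t (List.finRange n) (List.nodup_finRange n) (List.mem_finRange t)
    (fun i hi => by simp [Pi.single_eq_of_ne hi])
  refine this.trans ?_
  simp [wv]

lemma coeffs_vanish (hli : LinearIndependent k (monoH k n q kapC kapL))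
    (g : Fin n → k) (s : k)
    (h : ∑ t, g t • wv q kapC kapL t + algebraMap k (Halg k n q kapC kapL) s = 0) :
    (∀ t, g t = 0) ∧ s = 0 := by
  classical
  set ι : Option (Fin n) → (Fin n → ℕ) := fun o => o.elim 0 (fun t => Pi.single t 1) with hι
  have hinj : Function.Injective ι := by
    rintro (_ | a) (_ | b) hab <;> simp only [hι, Option.elim] at hab
    · rfl
    · exact absurd (congrFun hab b).symm (by simp)
    · exact absurd (congrFun hab a) (by simp)
    · by_contra hne
      have hne' : a ≠ b := fun he => hne (by rw [he])
      have hev := congrFun hab a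
      rw [Pi.single_eq_same, Pi.single_eq_of_ne hne'] at hev
      exact one_ne_zero hev
  have hli2 := hli.comp ι hinj
  erw [Fintype.linearIndependent_iff] at hli2
  have hsum : ∑ o : Option (Fin n), (fun o => o.elim s g) o • (monoH k n q kapC kapL ∘ ι) o = 0 := by
    rw [Fintype.sum_option]
    simp only [Function.comp, hι, Option.elim]
    rw [monoH_zero]
    simp_rw [monoH_single]
    rw [← Algebra.algebraMap_eq_smul_one, add_comm]
    exact h
  have hz := hli2 _ hsum
  exact ⟨fun t => hz (some t), hz none⟩

variable (hkapC_antisym : ∀ i j, kapC i j = -(q i j) * kapC j i)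

include hq_diag hkapC_antisym in
lemma kapC_diag (i : Fin n) : kapC i i = 0 := by
  have h1 := hkapC_antisym i i
  rw [hq_diag i] at h1
  have h2 : (2 : k) * kapC i i = 0 := by linear_combination h1
  exact (mul_eq_zero.mp h2).resolve_left two_ne_zero

variable (h_rhs3 : ∀ i j m : Fin n, i ≠ j → i ≠ m → j ≠ m →
      (kapC j m * (1 - q i j * q i m)) • ev k n i
        + (kapC m i * (q i j * q i m - q i m * q j m)) • ev k n j
        + (kapC i j * (q i m * q j m - 1)) • ev k n m = (0 : Fin n → k))

include hq_diag hq_inv hkapC_antisym h_rhs3 in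
lemma cpart_zero (i j m t : Fin n) :
    kapC j m * (1 - q i j * q i m) * ev k n i t
      - q i j * (kapC i m * (1 - q j i * q j m)) * ev k n j t
      + (q i m * q j m) * (kapC i j * (1 - q m i * q m j)) * ev k n m t = 0 := by
  by_cases hij : i = j
  · subst hij
    linear_combination (-(kapC i m * (1 - q i i * q i m) * ev k n i t)) * hq_diag i
      + ((q i m * q i m) * (1 - q m i * q m i) * ev k n m t)
        * kapC_diag q kapC hq_diag hkapC_antisym i
  by_cases him : i = m
  · subst him
    rw [hq_diag i, kapC_diag q kapC hq_diag hkapC_antisym i, hkapC_antisym i j]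
    linear_combination (-(kapC j i * (1 - q i j) * ev k n i t)) * hq_inv i j
  by_cases hjm : j = m
  · subst hjm
    rw [hq_diag j, kapC_diag q kapC hq_diag hkapC_antisym j]
    ring
  have hr := congrFun (h_rhs3 i j m hij him hjm) t
  simp only [Pi.add_apply, Pi.smul_apply, smul_eq_mul, Pi.zero_apply] at hr
  rw [hkapC_antisym i m]
  linear_combination hr + (-(kapC m i * ev k n j t * (q i m * q j m))) * hq_inv i j
    + (-(kapC i j * ev k n m t)) * hq_inv i m
    + (-(kapC i j * ev k n m t * (q i m * q m i))) * hq_inv j m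

include hq_diag hq_inv hq_ne hkapL_antisym hkapC_antisym hC h_rhs3 in
lemma jacobi_k (hli : LinearIndependent k (monoH k n q kapC kapL)) (i j m t : Fin n) :
    q m i * (∑ b, kapL j m b * kapL i b t) + q i j * (∑ b, kapL m i b * kapL j b t)
      + q j m * (∑ b, kapL i j b * kapL m b t) = 0 := by
  obtain ⟨hg0, -⟩ := coeffs_vanish q kapC kapL hli (gv q kapC kapL i j m)
    (Sv q kapC kapL i j m) (expandSS q kapC kapL hq_diag hq_inv hq_ne hkapL_antisym hC i j m)
  have hg := hg0 t
  rw [gv] at hg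
  have hcp := cpart_zero q kapC hq_diag hq_inv hkapC_antisym h_rhs3 i j m t
  have hmid : ∑ b, kapL m i b * kapL j b t
      = -(q m i) * ∑ b, kapL i m b * kapL j b t := by
    rw [Finset.mul_sum]
    refine Finset.sum_congr rfl fun b _ => ?_
    have h := congrFun (hkapL_antisym m i) b
    simp only [Pi.smul_apply, smul_eq_mul] at h
    rw [h]; ring
  rw [hmid]
  linear_combination (q m i) * hg + (-(q m i)) * hcp
    + (-(q j m * (∑ b, kapL i j b * kapL m b t))) * hq_inv m i

include hq_diag hq_inv hq_ne hkapL_antisym hC in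
lemma om_compat_k (hli : LinearIndependent k (monoH k n q kapC kapL)) (i j m : Fin n) :
    q m i * (∑ b, kapL j m b * kapC i b) + q i j * (∑ b, kapL m i b * kapC j b)
      + q j m * (∑ b, kapL i j b * kapC m b) = 0 := by
  obtain ⟨-, hS⟩ := coeffs_vanish q kapC kapL hli (gv q kapC kapL i j m)
    (Sv q kapC kapL i j m) (expandSS q kapC kapL hq_diag hq_inv hq_ne hkapL_antisym hC i j m)
  rw [Sv] at hS
  have hmid : ∑ b, kapL m i b * kapC j b
      = -(q m i) * ∑ b, kapL i m b * kapC j b := by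
    rw [Finset.mul_sum]
    refine Finset.sum_congr rfl fun b _ => ?_
    have h := congrFun (hkapL_antisym m i) b
    simp only [Pi.smul_apply, smul_eq_mul] at h
    rw [h]; ring
  rw [hmid]
  linear_combination (q m i) * hS
    + (-(q j m * (∑ b, kapL i j b * kapC m b))) * hq_inv m i

end Hside


section BuildD
variable {k : Type u} [Field k] [CharZero k] {n : ℕ}

/-- The color Lie algebra data built from `q`, `κ^C`, `κ^L`. -/
def Dlit (q : Fin n → Fin n → k) (kapC : Fin n → Fin n → k)
    (kapL : Fin n → Fin n → Fin n → k)
    (hq_diag : ∀ i, q i i = 1) (hq_inv : ∀ i j, q i j * q j i = 1)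
    (hq_ne : ∀ i j, q i j ≠ 0)
    (hkapC_antisym : ∀ i j, kapC i j = -(q i j) * kapC j i)
    (hkapL_antisym : ∀ i j, kapL i j = -(q i j) • kapL j i)
    (hli : LinearIndependent k (monoH k n q kapC kapL))
    (hC : ∀ i j l, i ≠ j → kapL i j l ≠ 0 → ∀ m, q i m * q j m = q l m)
    (h_rhs3 : ∀ i j m : Fin n, i ≠ j → i ≠ m → j ≠ m →
      (kapC j m * (1 - q i j * q i m)) • ev k n i
        + (kapC m i * (q i j * q i m - q i m * q j m)) • ev k n j
        + (kapC i j * (q i m * q j m - 1)) • ev k n m = (0 : Fin n → k)) :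
    ColorLieOnBasis k n where
  A := Agrp q hq_ne
  grp := inferInstance
  eps := epsA q hq_ne hq_inv
  deg := degA q hq_ne
  Br := kapL
  om := kapC
  eps_antisym := epsA_antisym q hq_ne hq_inv
  eps_mul_left := epsA_mul_left q hq_ne hq_inv
  eps_mul_right := epsA_mul_right q hq_ne hq_inv
  grade := by
    intro i j l h
    have kapL_diag : kapL i i l = 0 := by
      have h1 := congrFun (hkapL_antisym i i) l
      simp only [Pi.smul_apply, smul_eq_mul, hq_diag i, neg_mul, one_mul] at h1
      have h2 : (2 : k) * kapL i i l = 0 := by linear_combination h1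
      exact (mul_eq_zero.mp h2).resolve_left two_ne_zero
    have hij : i ≠ j := fun he => h (he ▸ kapL_diag)
    exact degA_grade q hq_ne i j l (hC i j l hij h)
  antisym := by
    intro i j
    rw [epsA_deg q hq_ne hq_inv i j]
    exact hkapL_antisym i j
  om_antisym := by
    intro i j
    rw [epsA_deg q hq_ne hq_inv i j]
    exact hkapC_antisym i j
  jacobi := by
    intro i j m
    funext t
    simp only [Pi.zero_apply]
    rw [epsA_deg q hq_ne hq_inv, epsA_deg q hq_ne hq_inv, epsA_deg q hq_ne hq_inv]
    exact jacobi_k q kapC kapL hq_diag hq_inv hq_ne hkapL_antisym hC hkapC_antisym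
      h_rhs3 hli i j m t
  om_compat := by
    intro i j m
    rw [epsA_deg q hq_ne hq_inv, epsA_deg q hq_ne hq_inv, epsA_deg q hq_ne hq_inv]
    exact om_compat_k q kapC kapL hq_diag hq_inv hq_ne hkapL_antisym hC hli i j m

end BuildD

/-- Let `U = H_{q,κ}` be a quantum Drinfeld orbifold algebra with
trivial group `G = 1`.  Assume that whenever the structure constant
`C_l^{i,j} = κ^L(vᵢ,vⱼ)_l` is nonzero (`i ≠ j`) one has `q_{im}q_{jm} = q_{lm}` for
all `m`, and that both sides of PBW condition (3) vanish for all triples of basis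
vectors.  Then `U` is isomorphic to a generalized enveloping algebra `U_ω(L)` of a
color Lie algebra `L` with `ω` satisfying the compatibility condition. -/
theorem qdoa_is_generalized_enveloping_algebra_of_color_lie_algebra
    (k : Type*) [Field k] [CharZero k] (n : ℕ)
    (q : Fin n → Fin n → k)
    (kapC : Fin n → Fin n → k) (kapL : Fin n → Fin n → Fin n → k)
    (hq_diag : ∀ i, q i i = 1)
    (hq_inv : ∀ i j, q i j * q j i = 1)
    (hq_ne : ∀ i j, q i j ≠ 0)
    (hkapC_antisym : ∀ i j, kapC i j = -(q i j) * kapC j i)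
    (hkapL_antisym : ∀ i j, kapL i j = -(q i j) • kapL j i)
    (h_pbw : LinearIndependent k (monoH k n q kapC kapL) ∧
      Submodule.span k (Set.range (monoH k n q kapC kapL)) = ⊤)
    (hC : ∀ i j l, i ≠ j → kapL i j l ≠ 0 → ∀ m, q i m * q j m = q l m)
    (h_lhs3 : ∀ i j m : Fin n, i ≠ j → i ≠ m → j ≠ m →
      (q i j * q i m) • bil k n kapL (kapL j m) (ev k n i)
        - bil k n kapL (ev k n i) (kapL j m)
        + (q i m * q j m) • bil k n kapL (kapL m i) (ev k n j)
        - (q i j * q i m) • bil k n kapL (ev k n j) (kapL m i)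
        + bil k n kapL (kapL i j) (ev k n m)
        - (q i m * q j m) • bil k n kapL (ev k n m) (kapL i j) = 0)
    (h_rhs3 : ∀ i j m : Fin n, i ≠ j → i ≠ m → j ≠ m →
      (kapC j m * (1 - q i j * q i m)) • ev k n i
        + (kapC m i * (q i j * q i m - q i m * q j m)) • ev k n j
        + (kapC i j * (q i m * q j m - 1)) • ev k n m = (0 : Fin n → k)) :
    ∃ D : ColorLieOnBasis k n,
      Nonempty (Halg k n q kapC kapL ≃ₐ[k] Uom k n D) := by
  refine ⟨Dlit q kapC kapL hq_diag hq_inv hq_ne hkapC_antisym hkapL_antisym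
    h_pbw.1 hC h_rhs3, ?_⟩
  set D := Dlit q kapC kapL hq_diag hq_inv hq_ne hkapC_antisym hkapL_antisym
    h_pbw.1 hC h_rhs3 with hD
  have hepsq : ∀ i j, D.eps (D.deg i) (D.deg j) = q i j := fun i j =>
    epsA_deg q hq_ne hq_inv i j
  have hrel : relU k n D = relH k n q kapC kapL := by
    funext a b
    apply propext
    constructor
    · rintro ⟨i, j, ha, hb⟩
      exact ⟨i, j, ha, by rw [hb, hepsq i j]; rfl⟩
    · rintro ⟨i, j, ha, hb⟩
      exact ⟨i, j, ha, by rw [hb, hepsq i j]; rfl⟩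
  refine ⟨?_⟩
  show Halg k n q kapC kapL ≃ₐ[k] RingQuot (relU k n D)
  rw [hrel]
  exact AlgEquiv.refl

end QDOA5
end
end

section
/- Let [−,−]: V×V → V be bilinear with [v_i,v_j] = −q_{ij}[v_j,v_i], and define C_l^{i,j} ∈ k by [v_i,v_j] = Σ_l C_l^{i,j} v_l. Assume that for each triple i,j,l with i ≠ j, if C_l^{i,j} ≠ 0 then q_{im}q_{jm} = q_{lm} for all m, and assume that for all distinct i,j,k: q_{ij}q_{ik}[[v_j,v_k],v_i] − [v_i,[v_j,v_k]] + q_{ik}q_{jk}[[v_k,v_i],v_j] − q_{ij}q_{ik}[v_j,[v_k,v_i]] + [[v_i,v_j],v_k] − q_{ik}q_{jk}[v_k,[v_i,v_j]] = 0. Then the ε-Jacobi identity holds: for all i,j,k, q_{ki}[v_i,[v_j,v_k]] + q_{ij}[v_j,[v_k,v_i]] + q_{jk}[v_k,[v_i,v_j]] = 0. -/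
open scoped BigOperators

/-- The bilinear extension of a bracket given by structure constants
`Br i j : Fin n → k` (so that `[vᵢ,vⱼ] = ∑ l, Br i j l • vₗ`) to arbitrary
vectors of `V = Fin n → k`. -/
def brbil {k : Type*} [Field k] {n : ℕ} (Br : Fin n → Fin n → Fin n → k)
    (x y : Fin n → k) : Fin n → k :=
  fun t => ∑ a, ∑ b, x a * y b * Br a b t

/-- The `i`-th standard basis vector of `V = Fin n → k`. -/
def stdVec {k : Type*} [Field k] {n : ℕ} (i : Fin n) : Fin n → k := Pi.single i 1

lemma brbil_smul_right {k : Type*} [Field k] {n : ℕ} (Br : Fin n → Fin n → Fin n → k)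
    (x y : Fin n → k) (c : k) : brbil Br x (c • y) = c • brbil Br x y := by
  funext t
  simp only [brbil, Pi.smul_apply, smul_eq_mul, Finset.mul_sum]
  exact Finset.sum_congr rfl fun a _ => Finset.sum_congr rfl fun b _ => by ring

lemma brbil_zero_right {k : Type*} [Field k] {n : ℕ} (Br : Fin n → Fin n → Fin n → k)
    (x : Fin n → k) : brbil Br x 0 = 0 := by
  funext t; simp [brbil]

lemma brbil_single_left {k : Type*} [Field k] {n : ℕ} (Br : Fin n → Fin n → Fin n → k)
    (i : Fin n) (y : Fin n → k) (t : Fin n) :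
    brbil Br (stdVec i) y t = ∑ b, y b * Br i b t := by
  simp [brbil, stdVec, Pi.single_apply, ite_mul, Finset.sum_ite_eq']

lemma brbil_single_right {k : Type*} [Field k] {n : ℕ} (Br : Fin n → Fin n → Fin n → k)
    (i : Fin n) (x : Fin n → k) (t : Fin n) :
    brbil Br x (stdVec i) t = ∑ a, x a * Br a i t := by
  simp [brbil, stdVec, Pi.single_apply, mul_ite, ite_mul, Finset.sum_ite_eq']

lemma Br_diag {k : Type*} [Field k] [CharZero k] {n : ℕ}
    (q : Fin n → Fin n → k) (hq_diag : ∀ i, q i i = 1)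
    (Br : Fin n → Fin n → Fin n → k)
    (h_antisym : ∀ i j, Br i j = -(q i j) • Br j i) (i : Fin n) :
    Br i i = 0 := by
  funext t
  have h := congrFun (h_antisym i i) t
  simp only [hq_diag, Pi.smul_apply, smul_eq_mul, neg_mul, one_mul] at h
  have h2 : (2 : k) * Br i i t = 0 := by linear_combination h
  simpa using (mul_eq_zero.mp h2).resolve_left two_ne_zero

lemma flip_lemma {k : Type*} [Field k] {n : ℕ}
    (q : Fin n → Fin n → k)
    (Br : Fin n → Fin n → Fin n → k)
    (h_antisym : ∀ i j, Br i j = -(q i j) • Br j i)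
    (hC : ∀ i j l, i ≠ j → Br i j l ≠ 0 → ∀ m, q i m * q j m = q l m)
    {j m : Fin n} (hjm : j ≠ m) (i : Fin n) :
    brbil Br (Br j m) (stdVec i) = (-(q j i * q m i)) • brbil Br (stdVec i) (Br j m) := by
  funext t
  rw [brbil_single_right, Pi.smul_apply, brbil_single_left, smul_eq_mul, Finset.mul_sum]
  refine Finset.sum_congr rfl fun a _ => ?_
  by_cases h : Br j m a = 0
  · simp [h]
  · have hq := hC j m a hjm h i
    have ha := congrFun (h_antisym a i) t
    simp only [Pi.smul_apply, smul_eq_mul, neg_mul] at ha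
    linear_combination Br j m a * ha + Br j m a * Br i a t * hq

/-- Let `[-,-]` be a bilinear bracket on `V` with
`[vᵢ,vⱼ] = -q_{ij}[vⱼ,vᵢ]`, satisfying the structure-constant condition, and
suppose that for all distinct `i, j, k`
`q_{ij}q_{ik}[[vⱼ,vₖ],vᵢ] − [vᵢ,[vⱼ,vₖ]] + q_{ik}q_{jk}[[vₖ,vᵢ],vⱼ]
 − q_{ij}q_{ik}[vⱼ,[vₖ,vᵢ]] + [[vᵢ,vⱼ],vₖ] − q_{ik}q_{jk}[vₖ,[vᵢ,vⱼ]] = 0`.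
Then the ε-Jacobi identity
`q_{ki}[vᵢ,[vⱼ,vₖ]] + q_{ij}[vⱼ,[vₖ,vᵢ]] + q_{jk}[vₖ,[vᵢ,vⱼ]] = 0` holds for all `i,j,k`. -/
theorem eps_jacobi_of_pbw_condition_three
    (k : Type*) [Field k] [CharZero k] (n : ℕ)
    (q : Fin n → Fin n → k)
    (hq_diag : ∀ i, q i i = 1)
    (hq_inv : ∀ i j, q i j * q j i = 1)
    (Br : Fin n → Fin n → Fin n → k)
    (h_antisym : ∀ i j, Br i j = -(q i j) • Br j i)
    (hC : ∀ i j l, i ≠ j → Br i j l ≠ 0 → ∀ m, q i m * q j m = q l m)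
    (h_cond3 : ∀ i j m : Fin n, i ≠ j → i ≠ m → j ≠ m →
      (q i j * q i m) • brbil Br (Br j m) (stdVec i)
        - brbil Br (stdVec i) (Br j m)
        + (q i m * q j m) • brbil Br (Br m i) (stdVec j)
        - (q i j * q i m) • brbil Br (stdVec j) (Br m i)
        + brbil Br (Br i j) (stdVec m)
        - (q i m * q j m) • brbil Br (stdVec m) (Br i j) = 0) :
    ∀ i j m : Fin n,
      q m i • brbil Br (stdVec i) (Br j m)
        + q i j • brbil Br (stdVec j) (Br m i)
        + q j m • brbil Br (stdVec m) (Br i j) = 0 := by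
  intro i j m
  by_cases hij : i = j
  · subst hij
    rw [Br_diag q hq_diag Br h_antisym i, brbil_zero_right,
      h_antisym m i, brbil_smul_right, hq_diag]
    module
  · by_cases hjm : j = m
    · subst hjm
      rw [Br_diag q hq_diag Br h_antisym j, brbil_zero_right,
        h_antisym i j, brbil_smul_right, hq_diag]
      module
    · by_cases him : i = m
      · subst him
        rw [Br_diag q hq_diag Br h_antisym i, brbil_zero_right,
          h_antisym i j, brbil_smul_right, hq_diag, smul_smul]
        have h1 : q j i * -(q i j) = -1 := by linear_combination -(hq_inv j i)
        rw [h1]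
        module
      · have H := h_cond3 i j m hij him hjm
        rw [flip_lemma q Br h_antisym hC hjm i,
          flip_lemma q Br h_antisym hC (Ne.symm him) j,
          flip_lemma q Br h_antisym hC hij m] at H
        funext t
        have h3 := congrFun H t
        simp only [Pi.add_apply, Pi.sub_apply, Pi.smul_apply, Pi.zero_apply,
          smul_eq_mul, neg_mul] at h3 ⊢
        set S1 := brbil Br (stdVec i) (Br j m) t with hS1
        set S2 := brbil Br (stdVec j) (Br m i) t with hS2
        set S3 := brbil Br (stdVec m) (Br i j) t with hS3
        linear_combination (-(q m i)/2) * h3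
          + (-(q m i)/2 * (q i m * q m i) * S1) * hq_inv i j
          + ((-(q m i)/2) * S1 - q i j * S2 - q j m * S3) * hq_inv i m
          + (-(q m i * q i j * q i m)/2 * S2) * hq_inv j m
end

section
/- Let [−,−]: V×V → V be bilinear with [v_i,v_j] = −q_{ij}[v_j,v_i], with structure constants C_l^{i,j} defined by [v_i,v_j] = Σ_l C_l^{i,j} v_l, satisfying: (i) for each triple i,j,l with i ≠ j, if C_l^{i,j} ≠ 0 then q_{im}q_{jm} = q_{lm} for all m, and (ii) for all distinct i,j,k, q_{ij}q_{ik}[[v_j,v_k],v_i] − [v_i,[v_j,v_k]] + q_{ik}q_{jk}[[v_k,v_i],v_j] − q_{ij}q_{ik}[v_j,[v_k,v_i]] + [[v_i,v_j],v_k] − q_{ik}q_{jk}[v_k,[v_i,v_j]] = 0. Let ε be the unique antisymmetric bicharacter on A = ℤⁿ (free on a_1,…,a_n) with ε(a_i,a_j) = q_{ij}, let N = rad(ε) = {a ∈ A : ε(a,b) = 1 for all b ∈ A}, and let Ā = A/N with induced bicharacter ε̄. Grade L = V over Ā by L_ā = span_k{v_i : a_i + N = ā}. Then (L, [−,−]) is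 an (Ā,ε̄)-color Lie algebra: ε̄ is a well-defined antisymmetric bicharacter on Ā, [L_ā,L_b̄] ⊆ L_{ā+b̄}, [x,y] = −ε̄(|x|,|y|)[y,x], and ε̄(|z|,|x|)[x,[y,z]] + ε̄(|x|,|y|)[y,[z,x]] + ε̄(|y|,|z|)[z,[x,y]] = 0 for homogeneous x,y,z. -/
open scoped BigOperators

noncomputable section

namespace QDOA10

/-- Bilinear extension of bracket structure constants to `V × V`. -/
def bil (k : Type*) [Field k] (n : ℕ) (Br : Fin n → Fin n → Fin n → k)
    (x y : Fin n → k) : Fin n → k := fun t => ∑ a, ∑ b, x a * y b * Br a b t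

/-- The standard basis vector of `V = Fin n → k`. -/
def ev (k : Type*) [Field k] (n : ℕ) (i : Fin n) : Fin n → k := Pi.single i 1

/-- The grading of `L = V` over `Ā = A/N`:  `L_ā` is the span of the basis
vectors `vᵢ` whose generator `aᵢ = Pi.single i 1 ∈ ℤⁿ` maps to `ā`. -/
def grading (k : Type*) [Field k] (n : ℕ) (N : AddSubgroup (Fin n → ℤ))
    (c : (Fin n → ℤ) ⧸ N) : Submodule k (Fin n → k) :=
  Submodule.span k
    {w | ∃ i : Fin n, (QuotientAddGroup.mk (Pi.single i 1 : Fin n → ℤ) : (Fin n → ℤ) ⧸ N) = c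
      ∧ w = Pi.single i (1 : k)}

section Aux

variable {k : Type*} [Field k] {n : ℕ} {Br : Fin n → Fin n → Fin n → k}

lemma bil_add_left (x x' y : Fin n → k) :
    bil k n Br (x + x') y = bil k n Br x y + bil k n Br x' y := by
  funext t; simp [bil, add_mul, Finset.sum_add_distrib]

lemma bil_add_right (x y y' : Fin n → k) :
    bil k n Br x (y + y') = bil k n Br x y + bil k n Br x y' := by
  funext t; simp [bil, mul_add, add_mul, Finset.sum_add_distrib]

lemma bil_smul_left (r : k) (x y : Fin n → k) :
    bil k n Br (r • x) y = r • bil k n Br x y := by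
  funext t; simp [bil, Finset.mul_sum, mul_assoc]

lemma bil_smul_right (r : k) (x y : Fin n → k) :
    bil k n Br x (r • y) = r • bil k n Br x y := by
  funext t; simp [bil, Finset.mul_sum]; congr 1; funext a; congr 1; funext b; ring

lemma bil_zero_left (y : Fin n → k) : bil k n Br 0 y = 0 := by
  funext t; simp [bil]

lemma bil_zero_right (x : Fin n → k) : bil k n Br x 0 = 0 := by
  funext t; simp [bil]

lemma bil_single_single (i j : Fin n) :
    bil k n Br (Pi.single i 1) (Pi.single j 1) = Br i j := by
  funext t
  simp [bil, Pi.single_apply, ite_mul, zero_mul, one_mul, Finset.sum_ite_eq]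

section Eps
variable {eps : (Fin n → ℤ) → (Fin n → ℤ) → kˣ}
variable (h_eps_antisym : ∀ a b, eps a b * eps b a = 1)
variable (h_eps_add_right : ∀ a b c, eps a (b + c) = eps a b * eps a c)
variable (h_eps_add_left : ∀ a b c, eps (a + b) c = eps a c * eps b c)

include h_eps_add_right in
lemma eps_zero_right (a : Fin n → ℤ) : eps a 0 = 1 := by
  have := h_eps_add_right a 0 0
  simp only [add_zero] at this
  exact (mul_eq_left.mp this.symm)

include h_eps_add_left in
lemma eps_zero_left (b : Fin n → ℤ) : eps 0 b = 1 := by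
  have := h_eps_add_left 0 0 b
  simp only [add_zero] at this
  exact (mul_eq_left.mp this.symm)

include h_eps_add_left in
lemma eps_neg_left (a b : Fin n → ℤ) : eps (-a) b = (eps a b)⁻¹ := by
  have h := h_eps_add_left a (-a) b
  rw [add_neg_cancel, eps_zero_left h_eps_add_left b] at h
  exact (inv_eq_of_mul_eq_one_right h.symm).symm

include h_eps_add_right in
/-- `eps a` as an additive monoid hom into `Additive kˣ`. -/
def epsRightHom (a : Fin n → ℤ) : (Fin n → ℤ) →+ Additive kˣ where
  toFun b := Additive.ofMul (eps a b)
  map_zero' := by simp [eps_zero_right h_eps_add_right a]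
  map_add' b c := by simp [h_eps_add_right a b c]

lemma sum_single_int (a : Fin n → ℤ) : ∑ m, (a m) • (Pi.single m 1 : Fin n → ℤ) = a := by
  conv_rhs => rw [← Finset.univ_sum_single a]
  congr 1; funext m
  rw [← Pi.single_smul]; norm_num

include h_eps_add_right in
lemma eps_eq_prod_right (a b : Fin n → ℤ) :
    eps a b = ∏ m, (eps a (Pi.single m 1)) ^ (b m) := by
  have h := congrArg (epsRightHom h_eps_add_right a) (sum_single_int b)
  rw [map_sum] at h
  have : ∀ m, (epsRightHom h_eps_add_right a) ((b m) • (Pi.single m 1 : Fin n → ℤ))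
      = (b m) • Additive.ofMul (eps a (Pi.single m 1)) := fun m => by
    rw [map_zsmul]; rfl
  simp only [this] at h
  have := congrArg Additive.toMul h
  simpa [toMul_sum, epsRightHom] using this.symm

section Rad
variable (N : AddSubgroup (Fin n → ℤ)) (hN : ∀ a, a ∈ N ↔ ∀ b, eps a b = 1)

include h_eps_add_right hN in
lemma mem_N_of_gen (a : Fin n → ℤ) (h : ∀ m, eps a (Pi.single m 1) = 1) : a ∈ N := by
  rw [hN]
  intro b
  rw [eps_eq_prod_right h_eps_add_right a b]
  simp [h]

include h_eps_antisym hN in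
lemma eps_one_of_right_N (a c : Fin n → ℤ) (hc : c ∈ N) : eps a c = 1 := by
  have h1 := (hN c).mp hc a
  have := h_eps_antisym c a
  rw [h1, one_mul] at this
  exact this

include h_eps_antisym h_eps_add_right h_eps_add_left hN in
lemma eps_well_defined (a₁ b₁ a₂ b₂ : Fin n → ℤ) (ha : -a₁ + a₂ ∈ N) (hb : -b₁ + b₂ ∈ N) :
    eps a₁ b₁ = eps a₂ b₂ := by
  have h2 : eps a₂ b₂ = eps a₁ b₂ * eps (-a₁ + a₂) b₂ := by
    conv_lhs => rw [← add_neg_cancel_left a₁ a₂]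
    exact h_eps_add_left _ _ _
  have h3 : eps a₁ b₂ = eps a₁ b₁ * eps a₁ (-b₁ + b₂) := by
    conv_lhs => rw [← add_neg_cancel_left b₁ b₂]
    exact h_eps_add_right _ _ _
  rw [h2, h3, (hN _).mp ha b₂, eps_one_of_right_N h_eps_antisym N hN a₁ _ hb, mul_one, mul_one]

end Rad
end Eps

section Grading

variable (k) (n)
variable (N : AddSubgroup (Fin n → ℤ))

lemma mem_grading_single (i : Fin n) (c : (Fin n → ℤ) ⧸ N)
    (h : (QuotientAddGroup.mk (Pi.single i 1 : Fin n → ℤ) : (Fin n → ℤ) ⧸ N) = c) :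
    (Pi.single i (1 : k) : Fin n → k) ∈ grading k n N c :=
  Submodule.subset_span ⟨i, h, rfl⟩

lemma grading_eq_span_image (c : (Fin n → ℤ) ⧸ N) :
    grading k n N c = Submodule.span k
      ((fun i : Fin n => Pi.single i (1:k)) ''
        {i | (QuotientAddGroup.mk (Pi.single i 1 : Fin n → ℤ) : (Fin n → ℤ) ⧸ N) = c}) := by
  unfold grading
  congr 1
  ext w
  constructor
  · rintro ⟨i, h1, h2⟩; exact ⟨i, h1, h2.symm⟩
  · rintro ⟨i, h1, h2⟩; exact ⟨i, h1, h2.symm⟩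

lemma single_linearIndependent :
    LinearIndependent k (fun i : Fin n => Pi.single i (1:k)) := by
  have := (Pi.basisFun k (Fin n)).linearIndependent
  have h : ⇑(Pi.basisFun k (Fin n)) = fun i : Fin n => Pi.single i (1:k) := by
    funext i; exact Pi.basisFun_apply k (Fin n) i
  rwa [h] at this

lemma single_span_top :
    Submodule.span k (Set.range (fun i : Fin n => Pi.single i (1:k))) = ⊤ := by
  have h : ⇑(Pi.basisFun k (Fin n)) = fun i : Fin n => Pi.single i (1:k) := by
    funext i; exact Pi.basisFun_apply k (Fin n) i
  rw [← h]
  exact (Pi.basisFun k (Fin n)).span_eq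

lemma grading_isInternal [DecidableEq ((Fin n → ℤ) ⧸ N)] :
    DirectSum.IsInternal (grading k n N) := by
  apply DirectSum.isInternal_submodule_of_iSupIndep_of_iSup_eq_top
  · rw [iSupIndep_def]
    intro c
    set v : Fin n → (Fin n → k) := fun i => Pi.single i (1:k) with hv
    set S : ((Fin n → ℤ) ⧸ N) → Set (Fin n) := fun c =>
      {i | (QuotientAddGroup.mk (Pi.single i 1 : Fin n → ℤ) : (Fin n → ℤ) ⧸ N) = c} with hS
    have h2 : (⨆ (c') (_ : c' ≠ c), grading k n N c') ≤ Submodule.span k (v '' (S c)ᶜ) := by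
      refine iSup_le fun c' => iSup_le fun hc' => ?_
      rw [grading_eq_span_image]
      refine Submodule.span_mono (Set.image_mono ?_)
      intro i hi
      simp only [Set.mem_compl_iff, Set.mem_setOf_eq, hS] at hi ⊢
      rw [hi]; exact hc'
    rw [grading_eq_span_image]
    exact Disjoint.mono_right h2
      ((single_linearIndependent k n).disjoint_span_image disjoint_compl_right)
  · refine le_antisymm le_top ?_
    rw [← single_span_top k n]
    refine Submodule.span_le.mpr ?_
    rintro w ⟨i, rfl⟩
    exact Submodule.mem_iSup_of_mem (QuotientAddGroup.mk (Pi.single i 1 : Fin n → ℤ))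
      (mem_grading_single k n N i _ rfl)

end Grading
section Brk

variable {k : Type*} [Field k] [CharZero k] {n : ℕ}
variable {q : Fin n → Fin n → kˣ} {Br : Fin n → Fin n → Fin n → k}
variable (hq_diag : ∀ i, q i i = 1)
variable (h_antisym : ∀ i j, Br i j = -((q i j : k)) • Br j i)

include hq_diag h_antisym in
lemma Br_diag_zero (i : Fin n) : Br i i = 0 := by
  have h := h_antisym i i
  rw [hq_diag i] at h
  simp only [Units.val_one, neg_smul, one_smul] at h
  have h2 : Br i i + Br i i = 0 := by nth_rewrite 1 [h]; exact neg_add_cancel _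
  have h3 : (2 : k) • Br i i = 0 := by rw [two_smul]; exact h2
  exact (smul_eq_zero.mp h3).resolve_left two_ne_zero

section withEps
variable {eps : (Fin n → ℤ) → (Fin n → ℤ) → kˣ}
variable (hC : ∀ i j l, i ≠ j → Br i j l ≠ 0 → ∀ m, q i m * q j m = q l m)
variable (h_eps_add_right : ∀ a b c, eps a (b + c) = eps a b * eps a c)
variable (h_eps_add_left : ∀ a b c, eps (a + b) c = eps a c * eps b c)
variable (h_eps_gen : ∀ i j, eps (Pi.single i 1) (Pi.single j 1) = q i j)
variable (N : AddSubgroup (Fin n → ℤ)) (hN : ∀ a, a ∈ N ↔ ∀ b, eps a b = 1)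

include hq_diag h_antisym hC h_eps_add_right h_eps_add_left h_eps_gen hN in
lemma Br_mem_grading (i j : Fin n) :
    Br i j ∈ grading k n N
      (QuotientAddGroup.mk (Pi.single i 1 + Pi.single j 1 : Fin n → ℤ)) := by
  by_cases hij : i = j
  · subst hij
    rw [Br_diag_zero hq_diag h_antisym i]
    exact Submodule.zero_mem _
  · have hsum : Br i j = ∑ l, (Br i j l) • (Pi.single l (1:k) : Fin n → k) := by
      conv_lhs => rw [← Finset.univ_sum_single (Br i j)]
      congr 1; funext l; rw [← Pi.single_smul, smul_eq_mul, mul_one]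
    rw [hsum]
    refine Submodule.sum_mem _ fun l _ => ?_
    by_cases h0 : Br i j l = 0
    · rw [h0, zero_smul]; exact Submodule.zero_mem _
    · refine Submodule.smul_mem _ _ (mem_grading_single k n N l _ ?_)
      rw [QuotientAddGroup.eq]
      refine mem_N_of_gen h_eps_add_right N hN _ fun m => ?_
      have hq := hC i j l hij h0 m
      rw [h_eps_add_left, eps_neg_left h_eps_add_left, h_eps_gen,
        h_eps_add_left, h_eps_gen, h_eps_gen, ← hq]
      exact inv_mul_cancel _

end withEps
end Brk

end Aux

/-- Let `[-,-]` be a bilinear bracket on `V` with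
`[vᵢ,vⱼ] = -q_{ij}[vⱼ,vᵢ]` satisfying the structure-constant condition (i) and
the vanishing condition (ii) (the left side of PBW condition (3)).  Let `ε` be the
unique antisymmetric bicharacter on `A = ℤⁿ` with `ε(aᵢ,aⱼ) = q_{ij}`, let
`N = rad(ε)` and `Ā = A/N`.  Then `ε` descends to a well-defined antisymmetric
bicharacter `ε̄` on `Ā`, and `L = V`, graded over `Ā` by spans of basis vectors,
is an `(Ā,ε̄)`-color Lie algebra. -/
theorem color_lie_algebra_from_bracket
    (k : Type*) [Field k] [CharZero k] (n : ℕ)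
    (q : Fin n → Fin n → kˣ)
    (hq_diag : ∀ i, q i i = 1)
    (hq_inv : ∀ i j, q i j * q j i = 1)
    (Br : Fin n → Fin n → Fin n → k)
    (h_antisym : ∀ i j, Br i j = -((q i j : k)) • Br j i)
    (hC : ∀ i j l, i ≠ j → Br i j l ≠ 0 → ∀ m, q i m * q j m = q l m)
    (h_lhs3 : ∀ i j m : Fin n, i ≠ j → i ≠ m → j ≠ m →
      ((q i j : k) * (q i m : k)) • bil k n Br (Br j m) (ev k n i)
        - bil k n Br (ev k n i) (Br j m)
        + ((q i m : k) * (q j m : k)) • bil k n Br (Br m i) (ev k n j)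
        - ((q i j : k) * (q i m : k)) • bil k n Br (ev k n j) (Br m i)
        + bil k n Br (Br i j) (ev k n m)
        - ((q i m : k) * (q j m : k)) • bil k n Br (ev k n m) (Br i j) = 0)
    (eps : (Fin n → ℤ) → (Fin n → ℤ) → kˣ)
    (h_eps_antisym : ∀ a b, eps a b * eps b a = 1)
    (h_eps_add_right : ∀ a b c, eps a (b + c) = eps a b * eps a c)
    (h_eps_add_left : ∀ a b c, eps (a + b) c = eps a c * eps b c)
    (h_eps_gen : ∀ i j, eps (Pi.single i 1) (Pi.single j 1) = q i j)
    (N : AddSubgroup (Fin n → ℤ))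
    (hN : ∀ a, a ∈ N ↔ ∀ b, eps a b = 1) :
    ∃ epsBar : (Fin n → ℤ) ⧸ N → (Fin n → ℤ) ⧸ N → kˣ,
      -- ε̄ is well defined, induced by ε
      (∀ a b : Fin n → ℤ,
        epsBar (QuotientAddGroup.mk a) (QuotientAddGroup.mk b) = eps a b) ∧
      -- ε̄ is an antisymmetric bicharacter on Ā
      (∀ a b, epsBar a b * epsBar b a = 1) ∧
      (∀ a b c, epsBar a (b + c) = epsBar a b * epsBar a c) ∧
      (∀ a b c, epsBar (a + b) c = epsBar a c * epsBar b c) ∧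
      -- the grading is an internal direct sum
      (letI := Classical.decEq ((Fin n → ℤ) ⧸ N);
        DirectSum.IsInternal (grading k n N)) ∧
      -- [L_ā, L_b̄] ⊆ L_{ā + b̄}
      (∀ (a b : (Fin n → ℤ) ⧸ N) (x y : Fin n → k),
        x ∈ grading k n N a → y ∈ grading k n N b →
          bil k n Br x y ∈ grading k n N (a + b)) ∧
      -- [x,y] = −ε̄(|x|,|y|)[y,x] on homogeneous elements
      (∀ (a b : (Fin n → ℤ) ⧸ N) (x y : Fin n → k),
        x ∈ grading k n N a → y ∈ grading k n N b →
          bil k n Br x y = -((epsBar a b : k)) • bil k n Br y x) ∧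
      -- the ε̄-Jacobi identity on homogeneous elements
      (∀ (a b c : (Fin n → ℤ) ⧸ N) (x y z : Fin n → k),
        x ∈ grading k n N a → y ∈ grading k n N b → z ∈ grading k n N c →
          (epsBar c a : k) • bil k n Br x (bil k n Br y z)
            + (epsBar a b : k) • bil k n Br y (bil k n Br z x)
            + (epsBar b c : k) • bil k n Br z (bil k n Br x y) = 0) := by
  classical
  set Q := (Fin n → ℤ) ⧸ N with hQ
  have wd : ∀ (a₁ a₂ b₁ b₂ : Fin n → ℤ),
      Setoid.r (self := QuotientAddGroup.leftRel N) a₁ b₁ →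
      Setoid.r (self := QuotientAddGroup.leftRel N) a₂ b₂ →
      eps a₁ a₂ = eps b₁ b₂ := by
    intro a₁ a₂ b₁ b₂ h1 h2
    rw [QuotientAddGroup.leftRel_apply] at h1 h2
    exact eps_well_defined h_eps_antisym h_eps_add_right h_eps_add_left N hN _ _ _ _ h1 h2
  set ebar : Q → Q → kˣ := fun x y => Quotient.liftOn₂' x y eps wd with hebar
  have hbar : ∀ a b : Fin n → ℤ,
      ebar (QuotientAddGroup.mk a) (QuotientAddGroup.mk b) = eps a b := fun a b => rfl
  have hval : ∀ p r : Fin n,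
      ebar (QuotientAddGroup.mk (Pi.single p 1)) (QuotientAddGroup.mk (Pi.single r 1)) = q p r :=
    fun p r => by rw [hbar]; exact h_eps_gen p r
  have ecast : ∀ p r : Fin n, (q p r : k) * (q r p : k) = 1 := fun p r => by
    have h := congrArg Units.val (hq_inv p r); simpa using h
  -- bracket respects the grading
  have hgrade : ∀ (a b : Q) (x y : Fin n → k),
      x ∈ grading k n N a → y ∈ grading k n N b →
        bil k n Br x y ∈ grading k n N (a + b) := by
    intro a b x y hx hy
    unfold grading at hx hy
    induction hx using Submodule.span_induction with
    | mem x hxs =>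
      obtain ⟨i, hia, rfl⟩ := hxs
      induction hy using Submodule.span_induction with
      | mem y hys =>
        obtain ⟨j, hjb, rfl⟩ := hys
        rw [bil_single_single, ← hia, ← hjb]
        exact Br_mem_grading hq_diag h_antisym hC h_eps_add_right h_eps_add_left h_eps_gen N hN i j
      | zero => rw [bil_zero_right]; exact Submodule.zero_mem _
      | add y z hy hz ihy ihz => rw [bil_add_right]; exact Submodule.add_mem _ ihy ihz
      | smul r y hy ihy => rw [bil_smul_right]; exact Submodule.smul_mem _ _ ihy
    | zero => rw [bil_zero_left]; exact Submodule.zero_mem _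
    | add x x' hx hx' ih ih' => rw [bil_add_left]; exact Submodule.add_mem _ ih ih'
    | smul r x hx ih => rw [bil_smul_left]; exact Submodule.smul_mem _ _ ih
  -- graded antisymmetry
  have hanti : ∀ (a b : Q) (x y : Fin n → k),
      x ∈ grading k n N a → y ∈ grading k n N b →
        bil k n Br x y = -((ebar a b : k)) • bil k n Br y x := by
    intro a b x y hx hy
    unfold grading at hx hy
    induction hx using Submodule.span_induction with
    | mem x hxs =>
      obtain ⟨i, hia, rfl⟩ := hxs
      induction hy using Submodule.span_induction with
      | mem y hys =>
        obtain ⟨j, hjb, rfl⟩ := hys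
        rw [bil_single_single, bil_single_single, ← hia, ← hjb, hval i j]
        exact h_antisym i j
      | zero => simp [bil_zero_right, bil_zero_left]
      | add y z hy hz ihy ihz => rw [bil_add_right, ihy, ihz, bil_add_left, smul_add]
      | smul r y hy ihy => rw [bil_smul_right, ihy, bil_smul_left, smul_comm]
    | zero => simp [bil_zero_left, bil_zero_right]
    | add x x' hx hx' ih ih' => rw [bil_add_left, ih, ih', bil_add_right, smul_add]
    | smul r x hx ih => rw [bil_smul_left, ih, bil_smul_right, smul_comm]
  refine ⟨ebar, hbar, ?_, ?_, ?_, ?_, hgrade, hanti, ?_⟩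
  · intro x y
    refine QuotientAddGroup.induction_on x fun a => QuotientAddGroup.induction_on y fun b => ?_
    rw [hbar, hbar]; exact h_eps_antisym a b
  · intro x y z
    refine QuotientAddGroup.induction_on x fun a => QuotientAddGroup.induction_on y fun b =>
      QuotientAddGroup.induction_on z fun c => ?_
    show ebar (QuotientAddGroup.mk a) (QuotientAddGroup.mk (b + c)) = _
    rw [hbar, hbar, hbar]; exact h_eps_add_right a b c
  · intro x y z
    refine QuotientAddGroup.induction_on x fun a => QuotientAddGroup.induction_on y fun b =>
      QuotientAddGroup.induction_on z fun c => ?_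
    show ebar (QuotientAddGroup.mk (a + b)) (QuotientAddGroup.mk c) = _
    rw [hbar, hbar, hbar]; exact h_eps_add_left a b c
  · exact @grading_isInternal k _ n N (Classical.decEq _)
  · -- Jacobi
    intro a b c x y z hx hy hz
    unfold grading at hx hy hz
    induction hx using Submodule.span_induction with
    | mem x hxs =>
      obtain ⟨i, hia, rfl⟩ := hxs
      induction hy using Submodule.span_induction with
      | mem y hys =>
        obtain ⟨j, hjb, rfl⟩ := hys
        induction hz using Submodule.span_induction with
        | mem z hzs =>
          obtain ⟨m, hmc, rfl⟩ := hzs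
          rw [bil_single_single, bil_single_single, bil_single_single,
            ← hia, ← hjb, ← hmc, hval m i, hval i j, hval j m]
          by_cases hij : i = j
          · subst hij
            rw [Br_diag_zero hq_diag h_antisym i, bil_zero_right, smul_zero, add_zero,
              h_antisym m i, bil_smul_right, hq_diag i]
            module
          by_cases hjm : j = m
          · subst hjm
            rw [Br_diag_zero hq_diag h_antisym j, bil_zero_right, smul_zero,
              h_antisym j i, bil_smul_right, hq_diag j]
            match_scalars
            · linear_combination -(ecast i j)
          by_cases him : i = m
          · subst him
            rw [Br_diag_zero hq_diag h_antisym i, bil_zero_right, smul_zero,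
              h_antisym j i, bil_smul_right, hq_diag i]
            module
          · have h3 := h_lhs3 i j m hij him hjm
            simp only [ev] at h3
            have hyi : (Pi.single i (1:k) : Fin n → k) ∈ grading k n N
                (QuotientAddGroup.mk (Pi.single i 1 : Fin n → ℤ)) :=
              mem_grading_single k n N i _ rfl
            have hyj : (Pi.single j (1:k) : Fin n → k) ∈ grading k n N
                (QuotientAddGroup.mk (Pi.single j 1 : Fin n → ℤ)) :=
              mem_grading_single k n N j _ rfl
            have hym : (Pi.single m (1:k) : Fin n → k) ∈ grading k n N
                (QuotientAddGroup.mk (Pi.single m 1 : Fin n → ℤ)) :=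
              mem_grading_single k n N m _ rfl
            have hBmem : ∀ p r : Fin n, Br p r ∈ grading k n N
                (QuotientAddGroup.mk (Pi.single p 1 + Pi.single r 1 : Fin n → ℤ)) := fun p r =>
              Br_mem_grading hq_diag h_antisym hC h_eps_add_right h_eps_add_left h_eps_gen N hN p r
            have hflip : ∀ p r s : Fin n,
                bil k n Br (Br p r) (Pi.single s 1) =
                  -((q p s : k) * (q r s : k)) • bil k n Br (Pi.single s 1) (Br p r) := by
              intro p r s
              have h := hanti (QuotientAddGroup.mk (Pi.single p 1 + Pi.single r 1))
                (QuotientAddGroup.mk (Pi.single s 1)) (Br p r) (Pi.single s 1)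
                (hBmem p r) (mem_grading_single k n N s _ rfl)
              rw [h, hbar, h_eps_add_left, h_eps_gen, h_eps_gen, Units.val_mul]
            rw [hflip j m i, hflip m i j, hflip i j m] at h3
            have h4 : (-2 : k) • (bil k n Br (Pi.single i 1) (Br j m)
                + ((q i j : k) * (q i m : k)) • bil k n Br (Pi.single j 1) (Br m i)
                + ((q i m : k) * (q j m : k)) • bil k n Br (Pi.single m 1) (Br i j)) = 0 := by
              rw [← h3]
              match_scalars
              · linear_combination ((q i m : k) * (q m i : k)) * ecast i j + ecast i m
              · linear_combination ((q i j : k) * (q i m : k)) * ecast j m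
              · ring
            have H := (smul_eq_zero.mp h4).resolve_left (by norm_num)
            calc (q m i : k) • bil k n Br (Pi.single i 1) (Br j m)
                  + (q i j : k) • bil k n Br (Pi.single j 1) (Br m i)
                  + (q j m : k) • bil k n Br (Pi.single m 1) (Br i j)
                = (q m i : k) • (bil k n Br (Pi.single i 1) (Br j m)
                  + ((q i j : k) * (q i m : k)) • bil k n Br (Pi.single j 1) (Br m i)
                  + ((q i m : k) * (q j m : k)) • bil k n Br (Pi.single m 1) (Br i j)) := by
                  match_scalars
                  · ring
                  · linear_combination -((q i j : k)) * ecast m i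
                  · linear_combination -((q j m : k)) * ecast m i
              _ = 0 := by rw [H, smul_zero]
        | zero =>
          simp [bil_zero_left, bil_zero_right]
        | add z1 z2 hz1 hz2 ih1 ih2 =>
          simp only [bil_add_right, bil_add_left, smul_add]
          linear_combination (norm := module) ih1 + ih2
        | smul r z1 hz1 ih =>
          simp only [bil_smul_right, bil_smul_left, smul_add]
          linear_combination (norm := module) r • ih
      | zero =>
        simp [bil_zero_left, bil_zero_right]
      | add y1 y2 hy1 hy2 ih1 ih2 =>
        simp only [bil_add_right, bil_add_left, smul_add]
        linear_combination (norm := module) ih1 + ih2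
      | smul r y1 hy1 ih =>
        simp only [bil_smul_right, bil_smul_left, smul_add]
        linear_combination (norm := module) r • ih
    | zero =>
      simp [bil_zero_left, bil_zero_right]
    | add x1 x2 hx1 hx2 ih1 ih2 =>
      simp only [bil_add_right, bil_add_left, smul_add]
      linear_combination (norm := module) ih1 + ih2
    | smul r x1 hx1 ih =>
      simp only [bil_smul_right, bil_smul_left, smul_add]
      linear_combination (norm := module) r • ih

end QDOA10
end
end

section
/- The condition d*κ^L = 0 (where d* is the Koszul-complex differential), i.e., that for all i < j < k the identity v_i κ^L(v_j,v_k) − q_{ij}q_{ik} κ^L(v_j,v_k) v_i − q_{ij} v_j κ^L(v_i,v_k) + q_{jk} κ^L(v_i,v_k) v_j + q_{ik}q_{jk} v_k κ^L(v_i,v_j) − κ^L(v_i,v_j) v_k = 0 holds in S_q(V)⋊G, is equivalent to PBW condition (2): for all distinct i,j,k and all g ∈ G, q_{ji}q_{ki} v_i κ_g^L(v_k,v_j) − κ_g^L(v_k,v_j) ᵍv_i − q_{kj} v_j κ_g^L(v_k,v_i) + q_{ji} κ_g^L(v_k,v_i) ᵍv_j + v_k κ_g^L(v_j,v_i) − q_{ki}q_{kj}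 κ_g^L(v_j,v_i) ᵍv_k = 0 in S_q(V). -/
open scoped BigOperators

noncomputable section

set_option linter.unusedSectionVars false
set_option linter.unusedVariables false

namespace QDOA16

/-- The generator `vᵢ` of `T(V) ⋊ G`. -/
def Xv (k : Type*) [Field k] (n : ℕ) (G : Type*) (i : Fin n) : FreeAlgebra k (Fin n ⊕ G) :=
  FreeAlgebra.ι k (Sum.inl i)

/-- The generator `g ∈ G` of `T(V) ⋊ G`. -/
def Xg (k : Type*) [Field k] (n : ℕ) (G : Type*) (g : G) : FreeAlgebra k (Fin n ⊕ G) :=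
  FreeAlgebra.ι k (Sum.inr g)

/-- The defining relations of the skew group algebra `S_q(V) ⋊ G`. -/
def relSG (k : Type*) [Field k] (n : ℕ) (G : Type*) [Group G]
    (q : Fin n → Fin n → k) (rho : G → Fin n → Fin n → k) :
    FreeAlgebra k (Fin n ⊕ G) → FreeAlgebra k (Fin n ⊕ G) → Prop := fun a b =>
  (∃ i j : Fin n, a = Xv k n G i * Xv k n G j ∧
      b = q i j • (Xv k n G j * Xv k n G i)) ∨
  (∃ g h : G, a = Xg k n G g * Xg k n G h ∧ b = Xg k n G (g * h)) ∨
  (a = Xg k n G (1 : G) ∧ b = 1) ∨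
  (∃ (g : G) (i : Fin n), a = Xg k n G g * Xv k n G i ∧
      b = (∑ l, rho g l i • Xv k n G l) * Xg k n G g)

/-- The skew group algebra `S_q(V) ⋊ G`. -/
def SGalg (k : Type*) [Field k] (n : ℕ) (G : Type*) [Group G]
    (q : Fin n → Fin n → k) (rho : G → Fin n → Fin n → k) :=
  RingQuot (relSG k n G q rho)

instance (k : Type*) [Field k] (n : ℕ) (G : Type*) [Group G]
    (q : Fin n → Fin n → k) (rho : G → Fin n → Fin n → k) :
    Ring (SGalg k n G q rho) := by unfold SGalg; infer_instance

instance (k : Type*) [Field k] (n : ℕ) (G : Type*) [Group G]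
    (q : Fin n → Fin n → k) (rho : G → Fin n → Fin n → k) :
    Algebra k (SGalg k n G q rho) := by unfold SGalg; infer_instance

/-- The image of `vᵢ` in `S_q(V) ⋊ G`. -/
def vSG (k : Type*) [Field k] (n : ℕ) (G : Type*) [Group G]
    (q : Fin n → Fin n → k) (rho : G → Fin n → Fin n → k) (i : Fin n) :
    SGalg k n G q rho :=
  RingQuot.mkAlgHom k (relSG k n G q rho) (Xv k n G i)

/-- The image of `g ∈ G` in `S_q(V) ⋊ G`. -/
def gSG (k : Type*) [Field k] (n : ℕ) (G : Type*) [Group G]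
    (q : Fin n → Fin n → k) (rho : G → Fin n → Fin n → k) (g : G) :
    SGalg k n G q rho :=
  RingQuot.mkAlgHom k (relSG k n G q rho) (Xg k n G g)

/-- The value `κ^L(vᵢ,vⱼ) = ∑_g κ^L_g(vᵢ,vⱼ) # g ∈ V ⊗ kG ⊆ S_q(V) ⋊ G`. -/
def kapLSG (k : Type*) [Field k] (n : ℕ) (G : Type*) [Group G] [Fintype G]
    (q : Fin n → Fin n → k) (rho : G → Fin n → Fin n → k)
    (kapL : Fin n → Fin n → G → Fin n → k) (i j : Fin n) : SGalg k n G q rho :=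
  ∑ g : G, ∑ l, kapL i j g l • (vSG k n G q rho l * gSG k n G q rho g)

/-- The relations `vᵢvⱼ = q_{ij} vⱼvᵢ` of the quantum symmetric algebra `S_q(V)`. -/
def relS (k : Type*) [Field k] (n : ℕ) (q : Fin n → Fin n → k) :
    FreeAlgebra k (Fin n) → FreeAlgebra k (Fin n) → Prop := fun a b =>
  ∃ i j : Fin n, a = FreeAlgebra.ι k i * FreeAlgebra.ι k j ∧
    b = q i j • (FreeAlgebra.ι k j * FreeAlgebra.ι k i)

/-- The quantum symmetric algebra `S_q(V)`. -/
def Sq (k : Type*) [Field k] (n : ℕ) (q : Fin n → Fin n → k) := RingQuot (relS k n q)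

instance (k : Type*) [Field k] (n : ℕ) (q : Fin n → Fin n → k) : Ring (Sq k n q) := by
  unfold Sq; infer_instance

instance (k : Type*) [Field k] (n : ℕ) (q : Fin n → Fin n → k) : Algebra k (Sq k n q) := by
  unfold Sq; infer_instance

/-- The image of the basis vector `vᵢ` in `S_q(V)`. -/
def vS (k : Type*) [Field k] (n : ℕ) (q : Fin n → Fin n → k) (i : Fin n) : Sq k n q :=
  RingQuot.mkAlgHom k (relS k n q) (FreeAlgebra.ι k i)

/-- The element `ᵍvᵢ = ∑ l, (ρ g)ₗᵢ vₗ` of `S_q(V)`. -/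
def gvS (k : Type*) [Field k] (n : ℕ) (q : Fin n → Fin n → k) {G : Type*}
    (rho : G → Fin n → Fin n → k) (g : G) (i : Fin n) : Sq k n q :=
  ∑ l, rho g l i • vS k n q l

/-- The element `κ_g^L(vᵢ,vⱼ) = ∑ l, κL i j g l • vₗ` of `S_q(V)`. -/
def kapLvS (k : Type*) [Field k] (n : ℕ) (q : Fin n → Fin n → k) {G : Type*}
    (kapL : Fin n → Fin n → G → Fin n → k) (g : G) (i j : Fin n) : Sq k n q :=
  ∑ l, kapL i j g l • vS k n q l

/-! ### Auxiliary development -/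

section Aux

variable {k : Type*} [Field k] {n : ℕ} {G : Type*} [Group G] [Fintype G]
variable {q : Fin n → Fin n → k} {rho : G → Fin n → Fin n → k}

lemma vS_comm (q : Fin n → Fin n → k) (i j : Fin n) :
    vS k n q i * vS k n q j = q i j • (vS k n q j * vS k n q i) := by
  have h := RingQuot.mkAlgHom_rel k (s := relS k n q) (show relS k n q _ _ from ⟨i, j, rfl, rfl⟩)
  rw [map_mul, map_smul, map_mul] at h
  exact h

lemma vSG_comm (q : Fin n → Fin n → k) (rho : G → Fin n → Fin n → k) (i j : Fin n) :
    vSG k n G q rho i * vSG k n G q rho j = q i j • (vSG k n G q rho j * vSG k n G q rho i) := by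
  have h := RingQuot.mkAlgHom_rel k (s := relSG k n G q rho)
    (show relSG k n G q rho _ _ from Or.inl ⟨i, j, rfl, rfl⟩)
  rw [map_mul, map_smul, map_mul] at h
  exact h

lemma gSG_vSG (q : Fin n → Fin n → k) (rho : G → Fin n → Fin n → k) (g : G) (i : Fin n) :
    gSG k n G q rho g * vSG k n G q rho i
      = (∑ l, rho g l i • vSG k n G q rho l) * gSG k n G q rho g := by
  have h := RingQuot.mkAlgHom_rel k (s := relSG k n G q rho)
    (show relSG k n G q rho _ _ from Or.inr (Or.inr (Or.inr ⟨g, i, rfl, rfl⟩)))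
  rw [map_mul, map_mul, map_sum] at h
  simp only [map_smul] at h
  exact h

lemma Sq_algHom_ext {B : Type*} [Semiring B] [Algebra k B] {f g : Sq k n q →ₐ[k] B}
    (h : ∀ i, f (vS k n q i) = g (vS k n q i)) : f = g := by
  have key : f.comp (RingQuot.mkAlgHom k (relS k n q))
      = g.comp (RingQuot.mkAlgHom k (relS k n q)) := by
    apply FreeAlgebra.hom_ext
    funext i
    exact h i
  ext x
  obtain ⟨y, rfl⟩ := RingQuot.mkAlgHom_surjective k (relS k n q) x
  exact congrArg (fun F => F y) key  -- maybe AlgHom.congr_fun key y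

/-- Left multiplication by `vᵢ` on `G → Sq`. -/
def Lmul (q : Fin n → Fin n → k) (G : Type*) (i : Fin n) :
    Module.End k (G → Sq k n q) where
  toFun f := fun h => vS k n q i * f h
  map_add' f g := by funext h; simp [mul_add]
  map_smul' c f := by funext h; simp [mul_smul_comm]

/-- Twisted translation by `g` on `G → Sq`. -/
def Tact (q : Fin n → Fin n → k) (act : G → (Sq k n q →ₐ[k] Sq k n q)) (g : G) :
    Module.End k (G → Sq k n q) where
  toFun f := fun h => act g (f (g⁻¹ * h))
  map_add' f g := by funext h; simp
  map_smul' c f := by funext h; simp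

section Rep

variable (act : G → (Sq k n q →ₐ[k] Sq k n q))
variable (hact : ∀ g i, act g (vS k n q i) = ∑ l, rho g l i • vS k n q l)
variable (hrho_one : ∀ i j, rho 1 i j = if i = j then (1:k) else 0)
variable (hrho_mul : ∀ g h i j, rho (g * h) i j = ∑ l, rho g i l * rho h l j)

include hact hrho_mul in
lemma act_mul (g h : G) : act (g * h) = (act g).comp (act h) := by
  apply Sq_algHom_ext (q := q)
  intro i
  simp only [AlgHom.coe_comp, Function.comp_apply, hact, map_sum, map_smul, hrho_mul]
  simp only [Finset.sum_smul, Finset.smul_sum, smul_smul]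
  rw [Finset.sum_comm]
  exact Finset.sum_congr rfl fun a _ => Finset.sum_congr rfl fun b _ => by rw [mul_comm]

include hact hrho_one in
lemma act_one : act 1 = AlgHom.id k (Sq k n q) := by
  apply Sq_algHom_ext (q := q)
  intro i
  simp [hact, hrho_one, ite_smul, Finset.sum_ite_eq]

include hact hrho_one hrho_mul in
lemma Psi_rel : ∀ ⦃a b : FreeAlgebra k (Fin n ⊕ G)⦄, relSG k n G q rho a b →
    (FreeAlgebra.lift k (Sum.elim (fun i => Lmul q G i) (fun g => Tact q act g))) a
      = (FreeAlgebra.lift k (Sum.elim (fun i => Lmul q G i) (fun g => Tact q act g))) b := by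
  intro a b hab
  rcases hab with ⟨i, j, rfl, rfl⟩ | ⟨g, h, rfl, rfl⟩ | ⟨rfl, rfl⟩ | ⟨g, i, rfl, rfl⟩
  · simp only [Xv, map_mul, map_smul, FreeAlgebra.lift_ι_apply, Sum.elim_inl]
    ext f h
    simp only [Module.End.mul_apply, LinearMap.smul_apply, Pi.smul_apply, Lmul,
      LinearMap.coe_mk, AddHom.coe_mk]
    rw [← mul_assoc, ← mul_assoc, vS_comm q i j, smul_mul_assoc]
  · simp only [Xg, map_mul, FreeAlgebra.lift_ι_apply, Sum.elim_inr]
    ext f x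
    simp only [Module.End.mul_apply, Tact, LinearMap.coe_mk, AddHom.coe_mk]
    rw [act_mul act hact hrho_mul g h]
    simp [mul_assoc, mul_inv_rev]
  · simp only [Xg, map_one, FreeAlgebra.lift_ι_apply, Sum.elim_inr]
    ext f x
    simp [Tact, act_one act hact hrho_one]
  · simp only [Xg, Xv, map_mul, map_sum, map_smul, FreeAlgebra.lift_ι_apply,
      Sum.elim_inl, Sum.elim_inr]
    ext f x
    simp only [Module.End.mul_apply, Tact, Lmul, LinearMap.coe_mk, AddHom.coe_mk,
      LinearMap.sum_apply, LinearMap.smul_apply, Pi.smul_apply, Finset.sum_apply]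
    rw [map_mul, hact]
    erw [Finset.sum_mul]
    congr 1; funext l
    rw [smul_mul_assoc]

/-- The representation `S_q(V) ⋊ G → End(G → Sq)`. -/
def Phi : SGalg k n G q rho →ₐ[k] Module.End k (G → Sq k n q) :=
  RingQuot.liftAlgHom k ⟨FreeAlgebra.lift k (Sum.elim (fun i => Lmul q G i) (fun g => Tact q act g)),
    Psi_rel act hact hrho_one hrho_mul⟩

variable (hact' : ∀ g i, act g (vS k n q i) = ∑ l, rho g l i • vS k n q l)

lemma Phi_v (i : Fin n) : Phi act hact hrho_one hrho_mul (vSG k n G q rho i) = Lmul q G i := by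
  have h := RingQuot.liftAlgHom_mkAlgHom_apply (S := k)
    (FreeAlgebra.lift k (Sum.elim (fun i => Lmul (k := k) q G i) (fun g => Tact q act g)))
    (Psi_rel act hact hrho_one hrho_mul) (Xv k n G i)
  rw [vSG, Phi]
  exact h.trans (by simp [Xv])

lemma Phi_g (g : G) : Phi act hact hrho_one hrho_mul (gSG k n G q rho g) = Tact q act g := by
  have h := RingQuot.liftAlgHom_mkAlgHom_apply (S := k)
    (FreeAlgebra.lift k (Sum.elim (fun i => Lmul (k := k) q G i) (fun g => Tact q act g)))
    (Psi_rel act hact hrho_one hrho_mul) (Xg k n G g)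
  rw [gSG, Phi]
  exact h.trans (by simp [Xg])

open scoped Classical in
/-- Delta function at the identity. -/
def deltaOne (q : Fin n → Fin n → k) (G : Type*) [Group G] : G → Sq k n q :=
  fun h => if h = 1 then 1 else 0

/-- The `g`-component functional on `S_q(V) ⋊ G`. -/
def compG (act : G → (Sq k n q →ₐ[k] Sq k n q))
    (hact : ∀ g i, act g (vS k n q i) = ∑ l, rho g l i • vS k n q l)
    (hrho_one : ∀ i j, rho 1 i j = if i = j then (1:k) else 0)
    (hrho_mul : ∀ g h i j, rho (g * h) i j = ∑ l, rho g i l * rho h l j)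
    (g : G) : SGalg k n G q rho →ₗ[k] Sq k n q :=
  (LinearMap.proj g).comp ((LinearMap.applyₗ (deltaOne q G)).comp
    (Phi act hact hrho_one hrho_mul).toLinearMap)

lemma compG_apply (g : G) (x : SGalg k n G q rho) :
    compG act hact hrho_one hrho_mul g x = Phi act hact hrho_one hrho_mul x (deltaOne q G) g :=
  rfl

open scoped Classical in
lemma Tact_delta (g h : G) :
    (Tact q act h) (deltaOne q G) g = if g = h then 1 else 0 := by
  simp only [Tact, LinearMap.coe_mk, AddHom.coe_mk, deltaOne]
  by_cases hc : g = h
  · subst hc; simp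
  · rw [if_neg (by simpa [inv_mul_eq_one] using fun e => hc e.symm), if_neg hc, map_zero]

open scoped Classical in
lemma compG_vv (i l : Fin n) (h g : G) :
    compG act hact hrho_one hrho_mul g
      (vSG k n G q rho i * (vSG k n G q rho l * gSG k n G q rho h))
      = if g = h then vS k n q i * vS k n q l else 0 := by
  rw [compG_apply, map_mul, map_mul, Phi_v, Phi_v, Phi_g]
  simp only [Module.End.mul_apply, Lmul, LinearMap.coe_mk, AddHom.coe_mk]
  rw [Tact_delta]
  split <;> simp

open scoped Classical in
lemma compG_vgv (l m : Fin n) (h g : G) :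
    compG act hact hrho_one hrho_mul g
      (vSG k n G q rho l * gSG k n G q rho h * vSG k n G q rho m)
      = if g = h then vS k n q l * gvS k n q rho h m else 0 := by
  rw [compG_apply, map_mul, map_mul, Phi_v, Phi_v, Phi_g]
  simp only [Module.End.mul_apply, Lmul, Tact, LinearMap.coe_mk, AddHom.coe_mk, deltaOne]
  by_cases hc : g = h
  · subst hc
    rw [if_pos rfl, inv_mul_cancel, if_pos rfl, mul_one, hact]
    rfl
  · rw [if_neg hc, if_neg (by simpa [inv_mul_eq_one] using fun e => hc e.symm)]
    simp

variable (kapL : Fin n → Fin n → G → Fin n → k)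

lemma compG_v_kapLSG (i a b : Fin n) (g : G) :
    compG act hact hrho_one hrho_mul g (vSG k n G q rho i * kapLSG k n G q rho kapL a b)
      = vS k n q i * kapLvS k n q kapL g a b := by
  classical
  rw [kapLSG]
  erw [Finset.mul_sum]
  rw [map_sum]
  have : ∀ h : G,
      compG act hact hrho_one hrho_mul g
        (vSG k n G q rho i * ∑ l, kapL a b h l • (vSG k n G q rho l * gSG k n G q rho h))
      = if g = h then ∑ l, kapL a b h l • (vS k n q i * vS k n q l) else 0 := by
    intro h
    erw [Finset.mul_sum]
    rw [map_sum]
    have e : ∀ l, compG act hact hrho_one hrho_mul g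
        (vSG k n G q rho i * (kapL a b h l • (vSG k n G q rho l * gSG k n G q rho h)))
        = kapL a b h l • if g = h then vS k n q i * vS k n q l else 0 := by
      intro l
      rw [mul_smul_comm, map_smul, compG_vv act hact hrho_one hrho_mul]
    rw [Finset.sum_congr rfl fun l _ => e l]
    split <;> simp
  rw [Finset.sum_congr rfl fun h _ => this h, Finset.sum_ite_eq Finset.univ g _,
    if_pos (Finset.mem_univ g), kapLvS]
  erw [Finset.mul_sum]
  exact Finset.sum_congr rfl fun l _ => (mul_smul_comm _ _ _).symm

lemma compG_kapLSG_v (a b m : Fin n) (g : G) :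
    compG act hact hrho_one hrho_mul g (kapLSG k n G q rho kapL a b * vSG k n G q rho m)
      = kapLvS k n q kapL g a b * gvS k n q rho g m := by
  classical
  rw [kapLSG]
  erw [Finset.sum_mul]
  rw [map_sum]
  have : ∀ h : G,
      compG act hact hrho_one hrho_mul g
        ((∑ l, kapL a b h l • (vSG k n G q rho l * gSG k n G q rho h)) * vSG k n G q rho m)
      = if g = h then ∑ l, kapL a b h l • (vS k n q l * gvS k n q rho h m) else 0 := by
    intro h
    erw [Finset.sum_mul]
    rw [map_sum]
    have e : ∀ l, compG act hact hrho_one hrho_mul g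
        ((kapL a b h l • (vSG k n G q rho l * gSG k n G q rho h)) * vSG k n G q rho m)
        = kapL a b h l • if g = h then vS k n q l * gvS k n q rho h m else 0 := by
      intro l
      rw [smul_mul_assoc, map_smul, compG_vgv act hact hrho_one hrho_mul]
    rw [Finset.sum_congr rfl fun l _ => e l]
    split <;> simp
  rw [Finset.sum_congr rfl fun h _ => this h, Finset.sum_ite_eq Finset.univ g _,
    if_pos (Finset.mem_univ g), kapLvS]
  erw [Finset.sum_mul]
  exact Finset.sum_congr rfl fun l _ => (smul_mul_assoc _ _ _).symm

end Rep

/-! ### The two six-term expressions and their symmetries -/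

variable (q rho) in
/-- PBW condition (2) expression. -/
def Ee (kapL : Fin n → Fin n → G → Fin n → k) (g : G) (i j m : Fin n) : Sq k n q :=
  (q j i * q m i) • (vS k n q i * kapLvS k n q kapL g m j)
    - kapLvS k n q kapL g m j * gvS k n q rho g i
    - q m j • (vS k n q j * kapLvS k n q kapL g m i)
    + q j i • (kapLvS k n q kapL g m i * gvS k n q rho g j)
    + vS k n q m * kapLvS k n q kapL g j i
    - (q m i * q m j) • (kapLvS k n q kapL g j i * gvS k n q rho g m)

variable (q rho) in
/-- The `g`-component of the Koszul cocycle expression. -/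
def Ff (kapL : Fin n → Fin n → G → Fin n → k) (g : G) (i j m : Fin n) : Sq k n q :=
  vS k n q i * kapLvS k n q kapL g j m
    - (q i j * q i m) • (kapLvS k n q kapL g j m * gvS k n q rho g i)
    - q i j • (vS k n q j * kapLvS k n q kapL g i m)
    + q j m • (kapLvS k n q kapL g i m * gvS k n q rho g j)
    + (q i m * q j m) • (vS k n q m * kapLvS k n q kapL g i j)
    - kapLvS k n q kapL g i j * gvS k n q rho g m

lemma Ee_gen {A : Type*} [Ring A] [Algebra k A] (q : Fin n → Fin n → k)
    (hq_inv : ∀ i j, q i j * q j i = 1) (v gv : Fin n → A) (K : Fin n → Fin n → A)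
    (hK : ∀ a b, K a b = (-(q a b)) • K b a) (i j m : Fin n) :
    (q j i * q m i) • (v i * K m j) - K m j * gv i - q m j • (v j * K m i) + q j i • (K m i * gv j) + v m * K j i - (q m i * q m j) • (K j i * gv m)
      = (-(q j i * q m i * q m j)) • (v i * K j m - (q i j * q i m) • (K j m * gv i) - q i j • (v j * K i m) + q j m • (K i m * gv j) + (q i m * q j m) • (v m * K i j) - K i j * gv m) := by
  have hne : ∀ a b, q a b ≠ 0 := fun a b => left_ne_zero_of_mul_eq_one (hq_inv a b)
  have hinv : ∀ a b, q b a = (q a b)⁻¹ := fun a b => eq_inv_of_mul_eq_one_left (hq_inv b a)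
  rw [hK m j, hK m i, hK j i]
  simp only [mul_smul_comm, smul_mul_assoc, smul_smul, smul_sub, smul_add]
  match_scalars
  all_goals try simp only [hinv i j, hinv i m, hinv j m]
  all_goals try field_simp [hne i j, hne i m, hne j m]
  all_goals try ring

lemma Ee_gen12 {A : Type*} [Ring A] [Algebra k A] (q : Fin n → Fin n → k)
    (hq_inv : ∀ i j, q i j * q j i = 1) (v gv : Fin n → A) (K : Fin n → Fin n → A)
    (hK : ∀ a b, K a b = (-(q a b)) • K b a) (a b c : Fin n) :
    (q a b * q c b) • (v b * K c a) - K c a * gv b - q c a • (v a * K c b) + q a b • (K c b * gv a) + v c * K a b - (q c b * q c a) • (K a b * gv c)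
      = (-(q a b)) • ((q b a * q c a) • (v a * K c b) - K c b * gv a - q c b • (v b * K c a) + q b a • (K c a * gv b) + v c * K b a - (q c a * q c b) • (K b a * gv c)) := by
  have hne : ∀ x y, q x y ≠ 0 := fun x y => left_ne_zero_of_mul_eq_one (hq_inv x y)
  have hinv : ∀ x y, q y x = (q x y)⁻¹ := fun x y => eq_inv_of_mul_eq_one_left (hq_inv y x)
  rw [hK a b]
  simp only [mul_smul_comm, smul_mul_assoc, smul_smul, smul_sub, smul_add]
  match_scalars
  all_goals try simp only [hinv a b, hinv a c, hinv b c]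
  all_goals try field_simp [hne a b, hne a c, hne b c]
  all_goals try ring

lemma Ee_gen23 {A : Type*} [Ring A] [Algebra k A] (q : Fin n → Fin n → k)
    (hq_inv : ∀ i j, q i j * q j i = 1) (v gv : Fin n → A) (K : Fin n → Fin n → A)
    (hK : ∀ a b, K a b = (-(q a b)) • K b a) (a b c : Fin n) :
    (q c a * q b a) • (v a * K b c) - K b c * gv a - q b c • (v c * K b a) + q c a • (K b a * gv c) + v b * K c a - (q b a * q b c) • (K c a * gv b)
      = (-(q b c)) • ((q b a * q c a) • (v a * K c b) - K c b * gv a - q c b • (v b * K c a) + q b a • (K c a * gv b) + v c * K b a - (q c a * q c b) • (K b a * gv c)) := by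
  have hne : ∀ x y, q x y ≠ 0 := fun x y => left_ne_zero_of_mul_eq_one (hq_inv x y)
  have hinv : ∀ x y, q y x = (q x y)⁻¹ := fun x y => eq_inv_of_mul_eq_one_left (hq_inv y x)
  rw [hK b c]
  simp only [mul_smul_comm, smul_mul_assoc, smul_smul, smul_sub, smul_add]
  match_scalars
  all_goals try simp only [hinv a b, hinv a c, hinv b c]
  all_goals try field_simp [hne a b, hne a c, hne b c]
  all_goals try ring

section Scalars

variable {kapL : Fin n → Fin n → G → Fin n → k}
variable (hq_inv : ∀ i j, q i j * q j i = 1)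
variable (hkapL_antisym : ∀ i j g l, kapL i j g l = -(q i j) * kapL j i g l)

include hkapL_antisym in
lemma kapLvS_antisym (g : G) (i j : Fin n) :
    kapLvS k n q kapL g i j = (-(q i j)) • kapLvS k n q kapL g j i := by
  simp only [kapLvS, Finset.smul_sum, smul_smul]
  exact Finset.sum_congr rfl fun l _ => by rw [hkapL_antisym i j g l]

include hq_inv hkapL_antisym in
lemma Ee_eq_smul_Ff (g : G) (i j m : Fin n) :
    Ee q rho kapL g i j m = (-(q j i * q m i * q m j)) • Ff q rho kapL g i j m := by
  exact Ee_gen q hq_inv (vS k n q) (gvS k n q rho g) (kapLvS k n q kapL g)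
    (kapLvS_antisym hkapL_antisym g) i j m

include hq_inv hkapL_antisym in
lemma Ff_eq_smul_Ee (g : G) (i j m : Fin n) :
    Ff q rho kapL g i j m = (-(q i j * q i m * q j m)) • Ee q rho kapL g i j m := by
  rw [Ee_eq_smul_Ff hq_inv hkapL_antisym g i j m, smul_smul]
  have hne : ∀ a b, q a b ≠ 0 := fun a b => left_ne_zero_of_mul_eq_one (hq_inv a b)
  have hinv : ∀ a b, q b a = (q a b)⁻¹ := fun a b => eq_inv_of_mul_eq_one_left (hq_inv b a)
  rw [show -(q i j * q i m * q j m) * -(q j i * q m i * q m j) = 1 by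
    rw [hinv i j, hinv i m, hinv j m]; field_simp [hne i j, hne i m, hne j m]]
  rw [one_smul]

include hq_inv hkapL_antisym in
lemma Ee_swap12 (g : G) (a b c : Fin n) :
    Ee q rho kapL g b a c = (-(q a b)) • Ee q rho kapL g a b c := by
  exact Ee_gen12 q hq_inv (vS k n q) (gvS k n q rho g) (kapLvS k n q kapL g)
    (kapLvS_antisym hkapL_antisym g) a b c

include hq_inv hkapL_antisym in
lemma Ee_swap23 (g : G) (a b c : Fin n) :
    Ee q rho kapL g a c b = (-(q b c)) • Ee q rho kapL g a b c := by
  exact Ee_gen23 q hq_inv (vS k n q) (gvS k n q rho g) (kapLvS k n q kapL g)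
    (kapLvS_antisym hkapL_antisym g) a b c

include hq_inv hkapL_antisym in
lemma Ee_zero_of_sorted (g : G)
    (h0 : ∀ a b c, a < b → b < c → ∀ g' : G, Ee q rho kapL g' a b c = 0)
    (i j m : Fin n) (hij : i ≠ j) (him : i ≠ m) (hjm : j ≠ m) :
    Ee q rho kapL g i j m = 0 := by
  rcases lt_trichotomy i j with h1 | h1 | h1
  · rcases lt_trichotomy j m with h2 | h2 | h2
    · exact h0 i j m h1 h2 g
    · exact absurd h2 hjm
    · rcases lt_trichotomy i m with h3 | h3 | h3
      · rw [Ee_swap23 hq_inv hkapL_antisym g i m j, h0 i m j h3 h2 g, smul_zero]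
      · exact absurd h3 him
      · rw [Ee_swap23 hq_inv hkapL_antisym g i m j, Ee_swap12 hq_inv hkapL_antisym g m i j,
          h0 m i j h3 h1 g, smul_zero, smul_zero]
  · exact absurd h1 hij
  · rcases lt_trichotomy i m with h2 | h2 | h2
    · rw [Ee_swap12 hq_inv hkapL_antisym g j i m, h0 j i m h1 h2 g, smul_zero]
    · exact absurd h2 him
    · rcases lt_trichotomy j m with h3 | h3 | h3
      · rw [Ee_swap12 hq_inv hkapL_antisym g j i m, Ee_swap23 hq_inv hkapL_antisym g j m i,
          h0 j m i h3 h2 g, smul_zero, smul_zero]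
      · exact absurd h3 hjm
      · rw [Ee_swap12 hq_inv hkapL_antisym g j i m, Ee_swap23 hq_inv hkapL_antisym g j m i,
          Ee_swap12 hq_inv hkapL_antisym g m j i, h0 m j i h3 h1 g,
          smul_zero, smul_zero, smul_zero]

end Scalars

/-! ### The map `Sq → SGalg` and the decomposition of the cocycle expression -/

section Iota

variable (q rho) in
/-- The canonical algebra map `S_q(V) → S_q(V) ⋊ G`. -/
def iota : Sq k n q →ₐ[k] SGalg k n G q rho :=
  RingQuot.liftAlgHom k ⟨FreeAlgebra.lift k (fun i => vSG k n G q rho i), by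
    rintro a b ⟨i, j, rfl, rfl⟩
    simp only [map_mul, map_smul, FreeAlgebra.lift_ι_apply]
    exact vSG_comm q rho i j⟩

lemma iota_v (i : Fin n) : iota q rho (vS k n q i) = vSG k n G q rho i := by
  have h := RingQuot.liftAlgHom_mkAlgHom_apply (S := k)
    (FreeAlgebra.lift k (fun i => vSG k n G q rho i))
    (s := relS k n q) (by
      rintro a b ⟨i, j, rfl, rfl⟩
      simp only [map_mul, map_smul, FreeAlgebra.lift_ι_apply]
      exact vSG_comm q rho i j) (FreeAlgebra.ι k i)
  rw [vS, iota]
  exact h.trans (by simp)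

variable (kapL : Fin n → Fin n → G → Fin n → k)

lemma iota_kapLvS (g : G) (a b : Fin n) :
    iota q rho (kapLvS k n q kapL g a b) = ∑ l, kapL a b g l • vSG k n G q rho l := by
  simp [kapLvS, map_sum, map_smul, iota_v]

lemma iota_gvS (g : G) (i : Fin n) :
    iota q rho (gvS k n q rho g i) = ∑ l, rho g l i • vSG k n G q rho l := by
  simp [gvS, map_sum, map_smul, iota_v]

lemma v_mul_kapLSG (i a b : Fin n) :
    vSG k n G q rho i * kapLSG k n G q rho kapL a b
      = ∑ g : G, iota q rho (vS k n q i * kapLvS k n q kapL g a b) * gSG k n G q rho g := by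
  rw [kapLSG]
  erw [Finset.mul_sum]
  refine Finset.sum_congr rfl fun g _ => ?_
  rw [map_mul, iota_v, iota_kapLvS]
  conv_rhs => erw [Finset.mul_sum, Finset.sum_mul]
  erw [Finset.mul_sum]
  refine Finset.sum_congr rfl fun l _ => ?_
  simp only [mul_smul_comm, smul_mul_assoc, mul_assoc]

lemma kapLSG_mul_v (a b m : Fin n) :
    kapLSG k n G q rho kapL a b * vSG k n G q rho m
      = ∑ g : G, iota q rho (kapLvS k n q kapL g a b * gvS k n q rho g m) * gSG k n G q rho g := by
  rw [kapLSG]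
  erw [Finset.sum_mul]
  refine Finset.sum_congr rfl fun g _ => ?_
  rw [map_mul, iota_kapLvS, iota_gvS]
  conv_rhs => erw [Finset.sum_mul, Finset.sum_mul]
  erw [Finset.sum_mul]
  refine Finset.sum_congr rfl fun l _ => ?_
  simp only [smul_mul_assoc, mul_assoc]
  rw [gSG_vSG q rho g m]

lemma SG_LHS_eq_sum (i j m : Fin n) :
    vSG k n G q rho i * kapLSG k n G q rho kapL j m
        - (q i j * q i m) • (kapLSG k n G q rho kapL j m * vSG k n G q rho i)
        - q i j • (vSG k n G q rho j * kapLSG k n G q rho kapL i m)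
        + q j m • (kapLSG k n G q rho kapL i m * vSG k n G q rho j)
        + (q i m * q j m) • (vSG k n G q rho m * kapLSG k n G q rho kapL i j)
        - kapLSG k n G q rho kapL i j * vSG k n G q rho m
      = ∑ g : G, iota q rho (Ff q rho kapL g i j m) * gSG k n G q rho g := by
  rw [v_mul_kapLSG kapL i j m, v_mul_kapLSG kapL j i m, v_mul_kapLSG kapL m i j,
    kapLSG_mul_v kapL j m i, kapLSG_mul_v kapL i m j, kapLSG_mul_v kapL i j m,
    Finset.smul_sum, Finset.smul_sum, Finset.smul_sum, Finset.smul_sum]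
  erw [← Finset.sum_sub_distrib, ← Finset.sum_sub_distrib, ← Finset.sum_add_distrib,
    ← Finset.sum_add_distrib, ← Finset.sum_sub_distrib]
  refine Finset.sum_congr rfl fun g _ => ?_
  rw [Ff]
  simp only [map_sub, map_add, map_smul, smul_mul_assoc, sub_mul, add_mul]

end Iota

section Final

variable (act : G → (Sq k n q →ₐ[k] Sq k n q))
variable (hact : ∀ g i, act g (vS k n q i) = ∑ l, rho g l i • vS k n q l)
variable (hrho_one : ∀ i j, rho 1 i j = if i = j then (1:k) else 0)
variable (hrho_mul : ∀ g h i j, rho (g * h) i j = ∑ l, rho g i l * rho h l j)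
variable (kapL : Fin n → Fin n → G → Fin n → k)

lemma compG_LHS (i j m : Fin n) (g : G) :
    compG act hact hrho_one hrho_mul g
      (vSG k n G q rho i * kapLSG k n G q rho kapL j m
        - (q i j * q i m) • (kapLSG k n G q rho kapL j m * vSG k n G q rho i)
        - q i j • (vSG k n G q rho j * kapLSG k n G q rho kapL i m)
        + q j m • (kapLSG k n G q rho kapL i m * vSG k n G q rho j)
        + (q i m * q j m) • (vSG k n G q rho m * kapLSG k n G q rho kapL i j)
        - kapLSG k n G q rho kapL i j * vSG k n G q rho m)
      = Ff q rho kapL g i j m := by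
  rw [Ff]
  simp only [map_sub, map_add, map_smul,
    compG_v_kapLSG act hact hrho_one hrho_mul kapL,
    compG_kapLSG_v act hact hrho_one hrho_mul kapL]

end Final

end Aux

/-- The condition `d*κ^L = 0` on the Koszul complex — i.e. the
identity, in `S_q(V) ⋊ G`, for all `i < j < k`,
`vᵢ κ^L(vⱼ,vₖ) − q_{ij}q_{ik} κ^L(vⱼ,vₖ) vᵢ − q_{ij} vⱼ κ^L(vᵢ,vₖ)
 + q_{jk} κ^L(vᵢ,vₖ) vⱼ + q_{ik}q_{jk} vₖ κ^L(vᵢ,vⱼ) − κ^L(vᵢ,vⱼ) vₖ = 0` —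
is equivalent to PBW condition (2): for all distinct `i, j, k` and all `g ∈ G`,
in `S_q(V)`,
`q_{ji}q_{ki} vᵢ κ_g^L(vₖ,vⱼ) − κ_g^L(vₖ,vⱼ) ᵍvᵢ − q_{kj} vⱼ κ_g^L(vₖ,vᵢ)
 + q_{ji} κ_g^L(vₖ,vᵢ) ᵍvⱼ + vₖ κ_g^L(vⱼ,vᵢ) − q_{ki}q_{kj} κ_g^L(vⱼ,vᵢ) ᵍvₖ = 0`. -/
theorem koszul_cocycle_iff_pbw_condition_two
    (k : Type*) [Field k] [CharZero k] (n : ℕ) (G : Type*) [Group G] [Fintype G]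
    (q : Fin n → Fin n → k) (rho : G → Fin n → Fin n → k)
    (kapL : Fin n → Fin n → G → Fin n → k)
    (hq_diag : ∀ i, q i i = 1)
    (hq_inv : ∀ i j, q i j * q j i = 1)
    (hrho_one : ∀ i j, rho 1 i j = if i = j then 1 else 0)
    (hrho_mul : ∀ g h i j, rho (g * h) i j = ∑ l, rho g i l * rho h l j)
    (hrho_alg : ∀ g : G, ∃ f : Sq k n q →ₐ[k] Sq k n q,
      ∀ i, f (vS k n q i) = ∑ l, rho g l i • vS k n q l)
    (hkapL_antisym : ∀ i j g l, kapL i j g l = -(q i j) * kapL j i g l) :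
    (∀ i j m : Fin n, i < j → j < m →
      vSG k n G q rho i * kapLSG k n G q rho kapL j m
        - (q i j * q i m) • (kapLSG k n G q rho kapL j m * vSG k n G q rho i)
        - q i j • (vSG k n G q rho j * kapLSG k n G q rho kapL i m)
        + q j m • (kapLSG k n G q rho kapL i m * vSG k n G q rho j)
        + (q i m * q j m) • (vSG k n G q rho m * kapLSG k n G q rho kapL i j)
        - kapLSG k n G q rho kapL i j * vSG k n G q rho m = 0)
    ↔
    (∀ (i j m : Fin n) (g : G), i ≠ j → i ≠ m → j ≠ m →
      (q j i * q m i) • (vS k n q i * kapLvS k n q kapL g m j)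
        - kapLvS k n q kapL g m j * gvS k n q rho g i
        - q m j • (vS k n q j * kapLvS k n q kapL g m i)
        + q j i • (kapLvS k n q kapL g m i * gvS k n q rho g j)
        + vS k n q m * kapLvS k n q kapL g j i
        - (q m i * q m j) • (kapLvS k n q kapL g j i * gvS k n q rho g m) = 0) := by
  choose act hact using hrho_alg
  constructor
  · intro H i j m g hij him hjm
    have hF : ∀ a b c, a < b → b < c → ∀ g' : G, Ff q rho kapL g' a b c = 0 := by
      intro a b c hab hbc g'
      rw [← compG_LHS act hact hrho_one hrho_mul kapL a b c g', H a b c hab hbc, map_zero]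
    have hE : ∀ a b c, a < b → b < c → ∀ g' : G, Ee q rho kapL g' a b c = 0 := by
      intro a b c hab hbc g'
      rw [Ee_eq_smul_Ff hq_inv hkapL_antisym g' a b c, hF a b c hab hbc g', smul_zero]
    have := Ee_zero_of_sorted hq_inv hkapL_antisym g hE i j m hij him hjm
    rw [Ee] at this
    exact this
  · intro H i j m hij hjm
    have hE : ∀ g : G, Ee q rho kapL g i j m = 0 := by
      intro g
      have h := H i j m g (ne_of_lt hij) (ne_of_lt (hij.trans hjm)) (ne_of_lt hjm)
      rw [Ee]
      exact h
    rw [SG_LHS_eq_sum kapL i j m]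
    refine Finset.sum_eq_zero fun g _ => ?_
    rw [Ff_eq_smul_Ee hq_inv hkapL_antisym g i j m, hE g, smul_zero, map_zero, zero_mul]


end QDOA16
end
end

section
/- Let κ^L be a G-invariant 2-cochain representing a Hochschild cocycle, viewed as an element of Hom_k(Λ²V, S_q(V)⋊G). Then the Gerstenhaber square bracket [κ^L,κ^L], computed via the chain maps φ and ψ between the Koszul and bar resolutions, is given on basis elements by: for all distinct i,j,k, the coefficient of #g in [κ^L,κ^L](v_i∧v_j∧v_k) equals Σ_{h∈G} ( κ_{gh⁻¹}^L(κ_h^L(v_i,v_j), ʰv_k) − q_{ik}q_{jk} κ_{gh⁻¹}^L(v_k, κ_h^L(v_i,v_j)) + q_{ij}q_{ik} κ_{gh⁻¹}^L(κ_h^L(v_j,v_k), ʰv_i) − κ_{gh⁻¹}^L(v_i, κ_h^L(v_j,v_k)) + q_{ik}q_{jk} κ_{gh⁻¹}^L(κ_h^L(v_k,v_i), ʰv_j) − q_{ij}q_{ik} κ_{gh⁻¹}^L(v_j, κ_h^L(v_k,v_i)) ), where the maps κ_{gh⁻¹}^L are applied to pairs of vectors in V by bilinear extension. -/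
open scoped BigOperators

noncomputable section

namespace QDOA17

/-- The relations `vᵢvⱼ = q_{ij} vⱼvᵢ` of the quantum symmetric algebra `S_q(V)`. -/
def relS (k : Type*) [Field k] (n : ℕ) (q : Fin n → Fin n → k) :
    FreeAlgebra k (Fin n) → FreeAlgebra k (Fin n) → Prop := fun a b =>
  ∃ i j : Fin n, a = FreeAlgebra.ι k i * FreeAlgebra.ι k j ∧
    b = q i j • (FreeAlgebra.ι k j * FreeAlgebra.ι k i)

/-- The quantum symmetric algebra `S_q(V)`. -/
def Sq (k : Type*) [Field k] (n : ℕ) (q : Fin n → Fin n → k) := RingQuot (relS k n q)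

instance (k : Type*) [Field k] (n : ℕ) (q : Fin n → Fin n → k) : Ring (Sq k n q) := by
  unfold Sq; infer_instance

instance (k : Type*) [Field k] (n : ℕ) (q : Fin n → Fin n → k) : Algebra k (Sq k n q) := by
  unfold Sq; infer_instance

/-- The image of the basis vector `vᵢ` in `S_q(V)`. -/
def vS (k : Type*) [Field k] (n : ℕ) (q : Fin n → Fin n → k) (i : Fin n) : Sq k n q :=
  RingQuot.mkAlgHom k (relS k n q) (FreeAlgebra.ι k i)

/-- The element `ᵍvᵢ` of `S_q(V)`. -/
def gvS (k : Type*) [Field k] (n : ℕ) (q : Fin n → Fin n → k) {G : Type*}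
    (rho : G → Fin n → Fin n → k) (g : G) (i : Fin n) : Sq k n q :=
  ∑ l, rho g l i • vS k n q l

/-- The element `κ_g^L(vᵢ,vⱼ)` of `S_q(V)`. -/
def kapLvS (k : Type*) [Field k] (n : ℕ) (q : Fin n → Fin n → k) {G : Type*}
    (kapL : Fin n → Fin n → G → Fin n → k) (g : G) (i j : Fin n) : Sq k n q :=
  ∑ l, kapL i j g l • vS k n q l

/-- The linear action of `h ∈ G` on a vector `x ∈ V`. -/
def act (k : Type*) [Field k] (n : ℕ) {G : Type*} (rho : G → Fin n → Fin n → k)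
    (h : G) (x : Fin n → k) : Fin n → k := fun m => ∑ l, rho h m l * x l

/-- The vector `ᵍvᵢ ∈ V = Fin n → k`. -/
def gv (k : Type*) [Field k] (n : ℕ) {G : Type*} (rho : G → Fin n → Fin n → k)
    (g : G) (i : Fin n) : Fin n → k := fun m => rho g m i

/-- The standard basis vector `vᵢ` of `V = Fin n → k`. -/
def ev (k : Type*) [Field k] (n : ℕ) (i : Fin n) : Fin n → k := Pi.single i 1

/-- The vector `κ_g^L(vᵢ,vⱼ) ∈ V = Fin n → k`. -/
def kapLv (k : Type*) [Field k] (n : ℕ) {G : Type*}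
    (kapL : Fin n → Fin n → G → Fin n → k) (g : G) (i j : Fin n) : Fin n → k :=
  fun l => kapL i j g l

/-- The bilinear extension of `κ_g^L` to `V × V`. -/
def kapLbil (k : Type*) [Field k] (n : ℕ) {G : Type*}
    (kapL : Fin n → Fin n → G → Fin n → k) (g : G) (x y : Fin n → k) : Fin n → k :=
  fun t => ∑ a, ∑ b, x a * y b * kapL a b g t

/-- The pullback `ψ*(κ^L)` of a 2-cochain along the chain map `ψ`, evaluated on
a pair of basis vectors: `ψ*(κ^L)(vₐ ⊗ v_b) = κ^L(ψ₂(1⊗vₐ⊗v_b⊗1)) = ½ κ^L(vₐ∧v_b)`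
for `a ≠ b`, and `0` for `a = b`; the value is recorded componentwise, as a
function `G → V`. -/
def psiKapL (k : Type*) [Field k] (n : ℕ) {G : Type*}
    (kapL : Fin n → Fin n → G → Fin n → k) (a b : Fin n) : G → Fin n → k :=
  fun h => if a = b then 0 else (2⁻¹ : k) • (fun l => kapL a b h l)

/-- The evaluation `ψ*(κ^L)(x ⊗ v_c)` for `x = ∑_h x_h # h ∈ V ⊗ kG` and a basis
vector `v_c`, using the extension `μ(r#g, s#h) = μ(r, ᵍs)(gh)` of cochains to the
skew group algebra:  the `g`-component is `∑_h ½ κ^L_{gh⁻¹}(x_h, ʰv_c)`. -/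
def termA (k : Type*) [Field k] (n : ℕ) {G : Type*} [Group G] [Fintype G]
    (rho : G → Fin n → Fin n → k) (kapL : Fin n → Fin n → G → Fin n → k)
    (x : G → Fin n → k) (c : Fin n) : G → Fin n → k :=
  fun g => ∑ h : G, (2⁻¹ : k) • kapLbil k n kapL (g * h⁻¹) (x h) (gv k n rho h c)

/-- The evaluation `ψ*(κ^L)(v_c ⊗ x)` for a basis vector `v_c` and
`x = ∑_h x_h # h ∈ V ⊗ kG`:  the `g`-component is `∑_h ½ κ^L_{gh⁻¹}(v_c, x_h)`. -/
def termB (k : Type*) [Field k] (n : ℕ) {G : Type*} [Group G] [Fintype G]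
    (kapL : Fin n → Fin n → G → Fin n → k)
    (c : Fin n) (x : G → Fin n → k) : G → Fin n → k :=
  fun g => ∑ h : G, (2⁻¹ : k) • kapLbil k n kapL (g * h⁻¹) (ev k n c) (x h)

/-- The circle product `(κ^L ∘ κ^L)(vᵢ∧vⱼ∧vₖ) = (ψ*(κ^L) ∘ ψ*(κ^L))(φ₃(vᵢ∧vⱼ∧vₖ))`,
computed from the expansion
`φ₃(vᵢ∧vⱼ∧vₖ) = 1⊗(vᵢ⊗vⱼ⊗vₖ − q_{ij} vⱼ⊗vᵢ⊗vₖ − q_{jk} vᵢ⊗vₖ⊗vⱼ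
 − q_{ij}q_{ik}q_{jk} vₖ⊗vⱼ⊗vᵢ + q_{ij}q_{ik} vⱼ⊗vₖ⊗vᵢ + q_{ik}q_{jk} vₖ⊗vᵢ⊗vⱼ)⊗1`
and the definition `(α∘β)(r₁⊗r₂⊗r₃) = α(β(r₁⊗r₂)⊗r₃) − α(r₁⊗β(r₂⊗r₃))`. -/
def circLL (k : Type*) [Field k] (n : ℕ) {G : Type*} [Group G] [Fintype G]
    (q : Fin n → Fin n → k) (rho : G → Fin n → Fin n → k)
    (kapL : Fin n → Fin n → G → Fin n → k)
    (i j m : Fin n) : G → Fin n → k :=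
  (termA k n rho kapL (psiKapL k n kapL i j) m - termB k n kapL i (psiKapL k n kapL j m))
  - q i j • (termA k n rho kapL (psiKapL k n kapL j i) m
      - termB k n kapL j (psiKapL k n kapL i m))
  - q j m • (termA k n rho kapL (psiKapL k n kapL i m) j
      - termB k n kapL i (psiKapL k n kapL m j))
  - (q i j * q i m * q j m) • (termA k n rho kapL (psiKapL k n kapL m j) i
      - termB k n kapL m (psiKapL k n kapL j i))
  + (q i j * q i m) • (termA k n rho kapL (psiKapL k n kapL j m) i
      - termB k n kapL j (psiKapL k n kapL m i))
  + (q i m * q j m) • (termA k n rho kapL (psiKapL k n kapL m i) j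
      - termB k n kapL m (psiKapL k n kapL i j))


section Helpers

variable (k : Type*) [Field k] (n : ℕ) {G : Type*} [Group G] [Fintype G]

lemma A_eval (rho : G → Fin n → Fin n → k) (kapL : Fin n → Fin n → G → Fin n → k)
    (a b c : Fin n) (hab : a ≠ b) (g : G) (t : Fin n) :
    termA k n rho kapL (psiKapL k n kapL a b) c g t
      = (4⁻¹ : k) * ∑ h : G,
          kapLbil k n kapL (g * h⁻¹) (kapLv k n kapL h a b) (gv k n rho h c) t := by
  simp only [termA, psiKapL, kapLv, kapLbil, Finset.sum_apply, Pi.smul_apply, smul_eq_mul,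
    if_neg hab, Finset.mul_sum]
  refine Finset.sum_congr rfl fun h _ => ?_
  refine Finset.sum_congr rfl fun a' _ => ?_
  refine Finset.sum_congr rfl fun b' _ => ?_
  rw [show (4:k)⁻¹ = 2⁻¹ * 2⁻¹ by rw [show (4:k) = 2*2 by norm_num, mul_inv]]
  ring

lemma B_eval (kapL : Fin n → Fin n → G → Fin n → k)
    (c a b : Fin n) (hab : a ≠ b) (g : G) (t : Fin n) :
    termB k n kapL c (psiKapL k n kapL a b) g t
      = (4⁻¹ : k) * ∑ h : G,
          kapLbil k n kapL (g * h⁻¹) (ev k n c) (kapLv k n kapL h a b) t := by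
  simp only [termB, psiKapL, kapLv, kapLbil, Finset.sum_apply, Pi.smul_apply, smul_eq_mul,
    if_neg hab, Finset.mul_sum]
  refine Finset.sum_congr rfl fun h _ => ?_
  refine Finset.sum_congr rfl fun a' _ => ?_
  refine Finset.sum_congr rfl fun b' _ => ?_
  rw [show (4:k)⁻¹ = 2⁻¹ * 2⁻¹ by rw [show (4:k) = 2*2 by norm_num, mul_inv]]
  ring

lemma swapA (q : Fin n → Fin n → k) (kapL : Fin n → Fin n → G → Fin n → k)
    (hk : ∀ i j g l, kapL i j g l = -(q i j) * kapL j i g l)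
    (a b : Fin n) (y : G → Fin n → k) (g : G) (t : Fin n) :
    (∑ h : G, kapLbil k n kapL (g * h⁻¹) (kapLv k n kapL h b a) (y h) t)
      = -(q b a) * ∑ h : G, kapLbil k n kapL (g * h⁻¹) (kapLv k n kapL h a b) (y h) t := by
  rw [Finset.mul_sum]
  refine Finset.sum_congr rfl fun h _ => ?_
  simp only [kapLbil, kapLv, Finset.mul_sum]
  refine Finset.sum_congr rfl fun a' _ => ?_
  refine Finset.sum_congr rfl fun b' _ => ?_
  rw [hk b a h a']; ring

lemma swapB (q : Fin n → Fin n → k) (kapL : Fin n → Fin n → G → Fin n → k)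
    (hk : ∀ i j g l, kapL i j g l = -(q i j) * kapL j i g l)
    (a b c : Fin n) (g : G) (t : Fin n) :
    (∑ h : G, kapLbil k n kapL (g * h⁻¹) (ev k n c) (kapLv k n kapL h b a) t)
      = -(q b a) * ∑ h : G, kapLbil k n kapL (g * h⁻¹) (ev k n c) (kapLv k n kapL h a b) t := by
  rw [Finset.mul_sum]
  refine Finset.sum_congr rfl fun h _ => ?_
  simp only [kapLbil, kapLv, Finset.mul_sum]
  refine Finset.sum_congr rfl fun a' _ => ?_
  refine Finset.sum_congr rfl fun b' _ => ?_
  rw [hk b a h b']; ring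

end Helpers

/-- Let `κ^L` be a `G`-invariant 2-cochain representing a
Hochschild cocycle.  Then the Gerstenhaber square bracket
`[κ^L,κ^L] = κ^L∘κ^L + κ^L∘κ^L`, computed via the chain maps `φ` and `ψ`, has
`g`-component on `vᵢ∧vⱼ∧vₖ` equal to
`∑_h ( κ^L_{gh⁻¹}(κ^L_h(vᵢ,vⱼ), ʰvₖ) − q_{ik}q_{jk} κ^L_{gh⁻¹}(vₖ, κ^L_h(vᵢ,vⱼ))
 + q_{ij}q_{ik} κ^L_{gh⁻¹}(κ^L_h(vⱼ,vₖ), ʰvᵢ) − κ^L_{gh⁻¹}(vᵢ, κ^L_h(vⱼ,vₖ))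
 + q_{ik}q_{jk} κ^L_{gh⁻¹}(κ^L_h(vₖ,vᵢ), ʰvⱼ) − q_{ij}q_{ik} κ^L_{gh⁻¹}(vⱼ, κ^L_h(vₖ,vᵢ)))`. -/
theorem gerstenhaber_square_bracket_formula
    (k : Type*) [Field k] [CharZero k] (n : ℕ) (G : Type*) [Group G] [Fintype G]
    (q : Fin n → Fin n → k) (rho : G → Fin n → Fin n → k)
    (kapL : Fin n → Fin n → G → Fin n → k)
    (hq_diag : ∀ i, q i i = 1)
    (hq_inv : ∀ i j, q i j * q j i = 1)
    (hrho_one : ∀ i j, rho 1 i j = if i = j then 1 else 0)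
    (hrho_mul : ∀ g h i j, rho (g * h) i j = ∑ l, rho g i l * rho h l j)
    (hkapL_antisym : ∀ i j g l, kapL i j g l = -(q i j) * kapL j i g l)
    (h_G_inv : ∀ (h g : G) (x y : Fin n → k),
      act k n rho h (kapLbil k n kapL (h⁻¹ * g * h) x y) =
        kapLbil k n kapL g (act k n rho h x) (act k n rho h y))
    (h_cocycle : ∀ (i j m : Fin n) (g : G), i ≠ j → i ≠ m → j ≠ m →
      (q j i * q m i) • (vS k n q i * kapLvS k n q kapL g m j)
        - kapLvS k n q kapL g m j * gvS k n q rho g i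
        - q m j • (vS k n q j * kapLvS k n q kapL g m i)
        + q j i • (kapLvS k n q kapL g m i * gvS k n q rho g j)
        + vS k n q m * kapLvS k n q kapL g j i
        - (q m i * q m j) • (kapLvS k n q kapL g j i * gvS k n q rho g m) = 0) :
    ∀ (i j m : Fin n), i ≠ j → i ≠ m → j ≠ m → ∀ g : G,
      (circLL k n q rho kapL i j m g + circLL k n q rho kapL i j m g : Fin n → k)
        = ∑ h : G,
          (kapLbil k n kapL (g * h⁻¹) (kapLv k n kapL h i j) (gv k n rho h m)
            - (q i m * q j m) • kapLbil k n kapL (g * h⁻¹) (ev k n m) (kapLv k n kapL h i j)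
            + (q i j * q i m) • kapLbil k n kapL (g * h⁻¹) (kapLv k n kapL h j m) (gv k n rho h i)
            - kapLbil k n kapL (g * h⁻¹) (ev k n i) (kapLv k n kapL h j m)
            + (q i m * q j m) • kapLbil k n kapL (g * h⁻¹) (kapLv k n kapL h m i) (gv k n rho h j)
            - (q i j * q i m) • kapLbil k n kapL (g * h⁻¹) (ev k n j) (kapLv k n kapL h m i)) := by
  intro i j m hij him hjm g
  funext t
  simp only [circLL, Pi.add_apply, Pi.sub_apply, Pi.smul_apply, smul_eq_mul,
    Finset.sum_apply, Finset.sum_sub_distrib, Finset.sum_add_distrib, ← Finset.mul_sum]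
  rw [A_eval k n rho kapL i j m hij g t,
    A_eval k n rho kapL j i m (Ne.symm hij) g t,
    A_eval k n rho kapL i m j him g t,
    A_eval k n rho kapL m j i (Ne.symm hjm) g t,
    A_eval k n rho kapL j m i hjm g t,
    A_eval k n rho kapL m i j (Ne.symm him) g t,
    B_eval k n kapL i j m hjm g t,
    B_eval k n kapL j i m him g t,
    B_eval k n kapL i m j (Ne.symm hjm) g t,
    B_eval k n kapL m j i (Ne.symm hij) g t,
    B_eval k n kapL j m i (Ne.symm him) g t,
    B_eval k n kapL m i j hij g t]
  rw [swapA k n q kapL hkapL_antisym i j (fun h => gv k n rho h m) g t,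
    swapA k n q kapL hkapL_antisym m i (fun h => gv k n rho h j) g t,
    swapA k n q kapL hkapL_antisym j m (fun h => gv k n rho h i) g t,
    swapB k n q kapL hkapL_antisym j m i g t,
    swapB k n q kapL hkapL_antisym i j m g t,
    swapB k n q kapL hkapL_antisym m i j g t]
  set S1 := ∑ h : G, kapLbil k n kapL (g * h⁻¹) (kapLv k n kapL h i j) (gv k n rho h m) t with hS1
  set S2 := ∑ h : G, kapLbil k n kapL (g * h⁻¹) (ev k n m) (kapLv k n kapL h i j) t with hS2
  set S3 := ∑ h : G, kapLbil k n kapL (g * h⁻¹) (kapLv k n kapL h j m) (gv k n rho h i) t with hS3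
  set S4 := ∑ h : G, kapLbil k n kapL (g * h⁻¹) (ev k n i) (kapLv k n kapL h j m) t with hS4
  set S5 := ∑ h : G, kapLbil k n kapL (g * h⁻¹) (kapLv k n kapL h m i) (gv k n rho h j) t with hS5
  set S6 := ∑ h : G, kapLbil k n kapL (g * h⁻¹) (ev k n j) (kapLv k n kapL h m i) t with hS6
  linear_combination (2⁻¹ * S1 - 2⁻¹ * q i m * q j m * S2) * hq_inv i j
    + (2⁻¹ * q i j * q i m * S3 - 2⁻¹ * S4) * hq_inv j m


end QDOA17
end
end
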